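/- arXiv:1111.3252 — 7 statements merged into one kernel-verified Lean document; each statement's English description precedes it below -/
import Mathlib

section
/- Let S be a family of k-element subsets of [n] with n ≥ 2k+1 such that: (i) for all distinct a, b ∈ [n], the subfamily of sets in S containing a differs from the subfamily containing b, and (ii) at most one element of [n] lies in no member of S. Then S is a determining set of the Kneser graph K_{n:k}. -/
/-- A set `S` of vertices is a determining set of `G` if any two automorphisms
agreeing on `S` are equal. -/
def IsDeterminingSet {V : Type*} (G : SimpleGraph V) (S : Set V) : Prop :=
  ∀ g h : G ≃g G, (∀ v ∈ S, g v = h v) → g = h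

/-- The determining number of a graph: the minimum cardinality of a determining set. -/
noncomputable def detNumber {V : Type*} (G : SimpleGraph V) : ℕ :=
  sInf {m | ∃ S : Finset V, S.card = m ∧ IsDeterminingSet G (S : Set V)}

/-- The Kneser graph `K_{n:k}`: vertices are the `k`-subsets of `[n]`,
edges join disjoint sets. -/
def kneserGraph (n k : ℕ) : SimpleGraph {s : Finset (Fin n) // s.card = k} where
  Adj a b := Disjoint (a : Finset (Fin n)) (b : Finset (Fin n)) ∧ a ≠ b
  symm := ⟨fun a b h => ⟨h.1.symm, h.2.symm⟩⟩
  loopless := ⟨fun a h => h.2 rfl⟩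

section Aux


open Finset

variable {n : ℕ}

/-- Number of j-subsets of `Fin n` contained in `U`. -/
lemma count_subsets (j : ℕ) (U : Finset (Fin n)) :
    (univ.filter (fun A : {s : Finset (Fin n) // s.card = j} => A.1 ⊆ U)).card
      = (U.card).choose j := by
  rw [← Finset.card_powersetCard]
  apply Finset.card_bij (fun A _ => A.1)
  · intro A hA
    rw [Finset.mem_powersetCard]
    exact ⟨(Finset.mem_filter.mp hA).2, A.2⟩
  · intro A _ B _ h; exact Subtype.ext h
  · intro s hs
    rw [Finset.mem_powersetCard] at hs
    exact ⟨⟨s, hs.2⟩, Finset.mem_filter.mpr ⟨Finset.mem_univ _, hs.1⟩, rfl⟩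

/-- Number of j-subsets of `Fin n` containing a fixed (j-1)-set `T`. -/
lemma count_supsets (m : ℕ) (T : Finset (Fin n)) (hT : T.card = m) :
    (univ.filter (fun A : {s : Finset (Fin n) // s.card = m + 1} => T ⊆ A.1)).card
      = n - m := by
  have : (Tᶜ).card = n - m := by
    rw [Finset.card_compl, hT, Fintype.card_fin]
  rw [← this]
  symm
  apply Finset.card_bij (fun x hx => (⟨insert x T, by
    rw [Finset.card_insert_of_notMem (by simpa using (Finset.mem_compl.mp hx)), hT]⟩ :
    {s : Finset (Fin n) // s.card = m + 1}))
  · intro x hx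
    exact Finset.mem_filter.mpr ⟨Finset.mem_univ _, Finset.subset_insert _ _⟩
  · intro x hx y hy h
    have hx' : x ∉ T := by simpa using Finset.mem_compl.mp hx
    have hy' : y ∉ T := by simpa using Finset.mem_compl.mp hy
    have : insert x T = insert y T := congrArg Subtype.val h
    have : x ∈ insert y T := this ▸ Finset.mem_insert_self x T
    rcases Finset.mem_insert.mp this with h' | h'
    · exact h'
    · exact absurd h' hx'
  · intro A hA
    have hTA : T ⊆ A.1 := (Finset.mem_filter.mp hA).2
    have hcard : (A.1 \ T).card = 1 := by
      rw [Finset.card_sdiff_of_subset hTA, A.2, hT]; omega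
    obtain ⟨x, hx⟩ := Finset.card_eq_one.mp hcard
    have hxA : x ∈ A.1 \ T := hx ▸ Finset.mem_singleton_self x
    refine ⟨x, Finset.mem_compl.mpr (Finset.mem_sdiff.mp hxA).2, ?_⟩
    apply Subtype.ext
    apply Finset.eq_of_subset_of_card_le
    · intro y hy
      rcases Finset.mem_insert.mp hy with h' | h'
      · exact h' ▸ (Finset.mem_sdiff.mp hxA).1
      · exact hTA h'
    · rw [A.2, Finset.card_insert_of_notMem (Finset.mem_sdiff.mp hxA).2, hT]

lemma clique_lemma (m : ℕ) (F : Finset {s : Finset (Fin n) // s.card = m + 1})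
    (hF : ∀ X ∈ F, ∀ Y ∈ F, X ≠ Y → (X.1 ∩ Y.1).card = m)
    (hcard : m + 3 ≤ F.card)
    {A B : {s : Finset (Fin n) // s.card = m + 1}} (hA : A ∈ F) (hB : B ∈ F)
    (hAB : A ≠ B) : ∀ C ∈ F, A.1 ∩ B.1 ⊆ C.1 := by
  classical
  set T0 := A.1 ∩ B.1 with hT0def
  have hT0 : T0.card = m := hF A hA B hB hAB
  have hsdA : (A.1 \ B.1).card = 1 := by
    have := Finset.card_inter_add_card_sdiff A.1 B.1
    rw [A.2, ← hT0def, hT0] at this; omega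
  have hsdB : (B.1 \ A.1).card = 1 := by
    have := Finset.card_inter_add_card_sdiff B.1 A.1
    rw [B.2, Finset.inter_comm, ← hT0def, hT0] at this; omega
  obtain ⟨a, ha⟩ := Finset.card_eq_one.mp hsdA
  obtain ⟨b, hb⟩ := Finset.card_eq_one.mp hsdB
  have haA : a ∈ A.1 ∧ a ∉ B.1 := Finset.mem_sdiff.mp (ha ▸ Finset.mem_singleton_self a)
  have hbB : b ∈ B.1 ∧ b ∉ A.1 := Finset.mem_sdiff.mp (hb ▸ Finset.mem_singleton_self b)
  have hab : a ≠ b := fun h => hbB.2 (h ▸ haA.1)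
  have haT0 : a ∉ T0 := fun h => haA.2 (Finset.mem_inter.mp h).2
  have hbT0 : b ∉ T0 := fun h => hbB.2 (Finset.mem_inter.mp h).1
  have hT0A : T0 ⊆ A.1 := Finset.inter_subset_left
  have hT0B : T0 ⊆ B.1 := Finset.inter_subset_right
  have key : ∀ C, C ∈ F → ¬ T0 ⊆ C.1 → C.1 ⊆ A.1 ∪ B.1 := by
    intro C hC hTC
    have hCA : C ≠ A := fun h => hTC (h ▸ hT0A)
    have hCB : C ≠ B := fun h => hTC (h ▸ hT0B)
    have hACc : (A.1 \ C.1).card = 1 := by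
      have h1 := hF A hA C hC (Ne.symm hCA)
      have := Finset.card_inter_add_card_sdiff A.1 C.1
      rw [A.2, h1] at this; omega
    have hBCc : (B.1 \ C.1).card = 1 := by
      have h1 := hF B hB C hC (Ne.symm hCB)
      have := Finset.card_inter_add_card_sdiff B.1 C.1
      rw [B.2, h1] at this; omega
    obtain ⟨t, ht⟩ := Finset.card_eq_one.mp hACc
    obtain ⟨t', ht'⟩ := Finset.card_eq_one.mp hBCc
    have htA : t ∈ A.1 ∧ t ∉ C.1 := Finset.mem_sdiff.mp (ht ▸ Finset.mem_singleton_self t)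
    have ht'B : t' ∈ B.1 ∧ t' ∉ C.1 := Finset.mem_sdiff.mp (ht' ▸ Finset.mem_singleton_self t')
    have hsubA : ∀ x ∈ A.1, x ≠ t → x ∈ C.1 := by
      intro x hx hxt
      by_contra hxC
      have : x ∈ A.1 \ C.1 := Finset.mem_sdiff.mpr ⟨hx, hxC⟩
      rw [ht] at this; exact hxt (Finset.mem_singleton.mp this)
    have hsubB : ∀ x ∈ B.1, x ≠ t' → x ∈ C.1 := by
      intro x hx hxt
      by_contra hxC
      have : x ∈ B.1 \ C.1 := Finset.mem_sdiff.mpr ⟨hx, hxC⟩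
      rw [ht'] at this; exact hxt (Finset.mem_singleton.mp this)
    have htT0 : t ∈ T0 := by
      by_contra htT0
      exact hTC (fun x hx => hsubA x (hT0A hx) (fun h => htT0 (h ▸ hx)))
    have haC : a ∈ C.1 := hsubA a haA.1 (fun h => haT0 (h ▸ htT0))
    have ht'T0 : t' ∈ T0 := by
      by_contra ht'T0
      exact hTC (fun x hx => hsubB x (hT0B hx) (fun h => ht'T0 (h ▸ hx)))
    have hbC : b ∈ C.1 := hsubB b hbB.1 (fun h => hbT0 (h ▸ ht'T0))
    have hsub : (T0 \ {t}) ∪ {a, b} ⊆ C.1 := by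
      intro x hx
      rcases Finset.mem_union.mp hx with h | h
      · obtain ⟨hx1, hx2⟩ := Finset.mem_sdiff.mp h
        exact hsubA x (hT0A hx1) (by simpa using hx2)
      · rcases Finset.mem_insert.mp h with h | h
        · exact h ▸ haC
        · exact (Finset.mem_singleton.mp h) ▸ hbC
    have hm : 1 ≤ m := by
      rcases Nat.eq_zero_or_pos m with h | h
      · exfalso; rw [h, Finset.card_eq_zero] at hT0
        exact hTC (hT0 ▸ Finset.empty_subset _)
      · exact h
    have hcardsub : ((T0 \ {t}) ∪ {a, b}).card = m + 1 := by
      rw [Finset.card_union_of_disjoint, Finset.card_sdiff_of_subset (by simpa using htT0)]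
      · rw [hT0, Finset.card_singleton, Finset.card_pair hab]; omega
      · rw [Finset.disjoint_right]
        intro x hx
        rcases Finset.mem_insert.mp hx with h | h
        · subst h; simp [haT0]
        · rw [Finset.mem_singleton.mp h]; simp [hbT0]
    have hCeq : (T0 \ {t}) ∪ {a, b} = C.1 :=
      Finset.eq_of_subset_of_card_le hsub (by rw [C.2, hcardsub])
    rw [← hCeq]
    intro x hx
    rcases Finset.mem_union.mp hx with h | h
    · exact Finset.mem_union_left _ (hT0A (Finset.mem_sdiff.mp h).1)
    · rcases Finset.mem_insert.mp h with h | h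
      · exact h ▸ Finset.mem_union_left _ haA.1
      · exact (Finset.mem_singleton.mp h) ▸ Finset.mem_union_right _ hbB.1
  -- main argument
  intro C hC
  by_contra hTC
  have hC0sub := key C hC hTC
  -- every member of F is contained in A ∪ B
  have hall : ∀ D ∈ F, D.1 ⊆ A.1 ∪ B.1 := by
    intro D hD
    by_cases hTD : T0 ⊆ D.1
    · -- D = T0 ∪ {d}
      have hDc : (D.1 \ T0).card = 1 := by
        rw [Finset.card_sdiff_of_subset hTD, D.2, hT0]; omega
      obtain ⟨d, hd⟩ := Finset.card_eq_one.mp hDc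
      have hdD : d ∈ D.1 ∧ d ∉ T0 := Finset.mem_sdiff.mp (hd ▸ Finset.mem_singleton_self d)
      have hDeq : D.1 = T0 ∪ {d} := by
        have h1 : D.1 ⊆ T0 ∪ {d} := by
          intro x hx
          by_cases hxT : x ∈ T0
          · exact Finset.mem_union_left _ hxT
          · have : x ∈ D.1 \ T0 := Finset.mem_sdiff.mpr ⟨hx, hxT⟩
            rw [hd] at this
            exact Finset.mem_union_right _ this
        apply Finset.eq_of_subset_of_card_le h1
        rw [D.2, Finset.card_union_of_disjoint (by simp [hdD.2]), hT0]; simp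
      have hdAB : d ∈ A.1 ∪ B.1 := by
        by_contra hdAB
        have hdC : d ∉ C.1 := fun h => hdAB (hC0sub h)
        have hDC : D ≠ C := fun h => hTC (h ▸ hTD)
        have h1 := hF D hD C hC hDC
        have h2 : D.1 ∩ C.1 = T0 ∩ C.1 := by
          rw [hDeq, Finset.union_inter_distrib_right]
          simp [Finset.singleton_inter_of_notMem hdC]
        have h3 : T0 ∩ C.1 ⊂ T0 := by
          refine Finset.ssubset_iff_of_subset Finset.inter_subset_left |>.mpr ?_
          obtain ⟨y, hy1, hy2⟩ := Finset.not_subset.mp hTC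
          exact ⟨y, hy1, fun h => hy2 (Finset.mem_inter.mp h).2⟩
        have h4 : (T0 ∩ C.1).card < m := by
          have := Finset.card_lt_card h3; rw [hT0] at this; exact this
        rw [h2] at h1; omega
      rw [hDeq]
      intro x hx
      rcases Finset.mem_union.mp hx with h | h
      · exact Finset.mem_union_left _ (hT0A h)
      · exact (Finset.mem_singleton.mp h) ▸ hdAB
    · exact key D hD hTD
  -- so F injects into the (m+1)-subsets of A ∪ B, of which there are only m+2
  have hABcard : (A.1 ∪ B.1).card = m + 2 := by
    have := Finset.card_union_add_card_inter A.1 B.1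
    rw [A.2, B.2, ← hT0def, hT0] at this; omega
  have himg : F.image Subtype.val ⊆ (A.1 ∪ B.1).powersetCard (m + 1) := by
    intro s hs
    obtain ⟨D, hD, rfl⟩ := Finset.mem_image.mp hs
    exact Finset.mem_powersetCard.mpr ⟨hall D hD, D.2⟩
  have h5 : F.card ≤ m + 2 := by
    calc F.card = (F.image Subtype.val).card :=
          (Finset.card_image_of_injective _ Subtype.val_injective).symm
      _ ≤ ((A.1 ∪ B.1).powersetCard (m + 1)).card := Finset.card_le_card himg
      _ = (m + 2).choose (m + 1) := by rw [Finset.card_powersetCard, hABcard]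
      _ = m + 2 := by simp [Nat.choose_succ_self_right]
  omega

-- helper: a j-set is determined by its (j+1)-set supersets (if there's room)
lemma subset_of_supsets {j : ℕ} (hj : j + 2 ≤ n) (T1 T2 : Finset (Fin n))
    (h1 : T1.card = j) (h2 : T2.card = j)
    (h : ∀ A : {s : Finset (Fin n) // s.card = j + 1}, T1 ⊆ A.1 → T2 ⊆ A.1) :
    T2 ⊆ T1 := by
  intro x hx
  by_contra hxT1
  have hins : (insert x T1).card = j + 1 := by rw [Finset.card_insert_of_notMem hxT1, h1]
  have hlt : (insert x T1).card < n := by rw [hins]; omega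
  obtain ⟨y, hy⟩ : ∃ y, y ∉ insert x T1 := by
    by_contra hall
    push_neg at hall
    have : (univ : Finset (Fin n)) ⊆ insert x T1 := fun z _ => hall z
    have := Finset.card_le_card this
    rw [Finset.card_univ, Fintype.card_fin] at this
    omega
  have hyT1 : y ∉ T1 := fun h' => hy (Finset.mem_insert_of_mem h')
  have hyx : y ≠ x := fun h' => hy (h' ▸ Finset.mem_insert_self x T1)
  have hA : (insert y T1).card = j + 1 := by rw [Finset.card_insert_of_notMem hyT1, h1]
  have hT2 : T2 ⊆ insert y T1 := h ⟨insert y T1, hA⟩ (Finset.subset_insert _ _)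
  rcases Finset.mem_insert.mp (hT2 hx) with h' | h'
  · exact hyx h'.symm
  · exact hxT1 h'

-- helper: characterization of Johnson adjacency via common supersets
lemma inter_card_iff_supset {j : ℕ} (T1 T2 : {s : Finset (Fin n) // s.card = j + 1})
    (h12 : T1 ≠ T2) :
    (T1.1 ∩ T2.1).card = j ↔
      ∃ A : {s : Finset (Fin n) // s.card = j + 2}, T1.1 ⊆ A.1 ∧ T2.1 ⊆ A.1 := by
  have hlt : (T1.1 ∩ T2.1).card < j + 1 := by
    have hss : T1.1 ∩ T2.1 ⊂ T1.1 := by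
      refine Finset.ssubset_iff_of_subset Finset.inter_subset_left |>.mpr ?_
      by_contra hno
      push_neg at hno
      have hsub : T1.1 ⊆ T2.1 := fun z hz => (Finset.mem_inter.mp (hno z hz)).2
      exact h12 (Subtype.ext (Finset.eq_of_subset_of_card_le hsub (by rw [T1.2, T2.2])))
    have := Finset.card_lt_card hss
    rwa [T1.2] at this
  have huc := Finset.card_union_add_card_inter T1.1 T2.1
  rw [T1.2, T2.2] at huc
  constructor
  · intro h
    have hu : (T1.1 ∪ T2.1).card = j + 2 := by omega
    exact ⟨⟨T1.1 ∪ T2.1, hu⟩, Finset.subset_union_left, Finset.subset_union_right⟩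
  · rintro ⟨A, hA1, hA2⟩
    have : T1.1 ∪ T2.1 ⊆ A.1 := Finset.union_subset hA1 hA2
    have := Finset.card_le_card this
    rw [A.2] at this
    omega

lemma johnson_induced : ∀ (m : ℕ), 2 * m + 3 ≤ n →
    ∀ (φ : {s : Finset (Fin n) // s.card = m + 1} ≃ {s : Finset (Fin n) // s.card = m + 1}),
    (∀ A B : {s : Finset (Fin n) // s.card = m + 1}, A ≠ B →
      ((A.1 ∩ B.1).card = m ↔ ((φ A).1 ∩ (φ B).1).card = m)) →
    ∃ σ : Equiv.Perm (Fin n), ∀ A, (φ A).1 = A.1.image σ := by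
  intro m
  induction m with
  | zero =>
    intro hn φ _
    classical
    -- singletons
    have hcard : ∀ a : Fin n, ∃ x, (φ ⟨{a}, Finset.card_singleton a⟩).1 = {x} :=
      fun a => Finset.card_eq_one.mp (φ ⟨{a}, Finset.card_singleton a⟩).2
    set f : Fin n → Fin n := fun a => (hcard a).choose with hf
    have hfs : ∀ a, (φ ⟨{a}, Finset.card_singleton a⟩).1 = {f a} := fun a => (hcard a).choose_spec
    have hinj : Function.Injective f := by
      intro a b hab
      have : φ ⟨{a}, Finset.card_singleton a⟩ = φ ⟨{b}, Finset.card_singleton b⟩ :=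
        Subtype.ext (by rw [hfs a, hfs b, hab])
      have := φ.injective this
      have : ({a} : Finset (Fin n)) = {b} := congrArg Subtype.val this
      exact Finset.singleton_injective this
    refine ⟨Equiv.ofBijective f ((Finite.injective_iff_bijective).mp hinj), ?_⟩
    intro A
    obtain ⟨a, ha⟩ := Finset.card_eq_one.mp A.2
    have hAa : A = ⟨{a}, Finset.card_singleton a⟩ := Subtype.ext ha
    rw [hAa, hfs a]
    simp [Equiv.ofBijective]
  | succ m ih =>
    intro hn φ hφ
    classical
    -- level m+2; stars over (m+1)-sets
    set star : Finset (Fin n) → Finset {s : Finset (Fin n) // s.card = m + 2} :=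
      fun T => univ.filter (fun A => T ⊆ A.1) with hstar
    have hstarcard : ∀ T : {s : Finset (Fin n) // s.card = m + 1}, (star T.1).card = n - (m+1) :=
      fun T => count_supsets (m+1) T.1 T.2
    have hex : ∀ T : {s : Finset (Fin n) // s.card = m + 1},
        ∃ T' : {s : Finset (Fin n) // s.card = m + 1},
          ∀ A : {s : Finset (Fin n) // s.card = m + 2}, (T.1 ⊆ A.1 ↔ T'.1 ⊆ (φ A).1) := by
      intro T
      set F : Finset {s : Finset (Fin n) // s.card = m + 2} := (star T.1).image φ with hFdef
      have hFcard : F.card = n - (m+1) := by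
        rw [hFdef, Finset.card_image_of_injective _ φ.injective, hstarcard]
      have hFpair : ∀ X ∈ F, ∀ Y ∈ F, X ≠ Y → (X.1 ∩ Y.1).card = m + 1 := by
        intro X hX Y hY hXY
        obtain ⟨A', hA', rfl⟩ := Finset.mem_image.mp hX
        obtain ⟨B', hB', rfl⟩ := Finset.mem_image.mp hY
        have hAB' : A' ≠ B' := fun h => hXY (congrArg φ h)
        have hTA : T.1 ⊆ A'.1 := (Finset.mem_filter.mp hA').2
        have hTB : T.1 ⊆ B'.1 := (Finset.mem_filter.mp hB').2
        have hint : (A'.1 ∩ B'.1).card = m + 1 := by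
          have hsub : T.1 ⊆ A'.1 ∩ B'.1 := Finset.subset_inter hTA hTB
          have h1 : m + 1 ≤ (A'.1 ∩ B'.1).card := by
            have := Finset.card_le_card hsub; rwa [T.2] at this
          have hss : A'.1 ∩ B'.1 ⊂ A'.1 := by
            refine Finset.ssubset_iff_of_subset Finset.inter_subset_left |>.mpr ?_
            by_contra hno
            push_neg at hno
            have hsub2 : A'.1 ⊆ B'.1 := fun z hz => (Finset.mem_inter.mp (hno z hz)).2
            exact hAB' (Subtype.ext (Finset.eq_of_subset_of_card_le hsub2 (by rw [A'.2, B'.2])))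
          have h2 := Finset.card_lt_card hss
          rw [A'.2] at h2
          omega
        exact (hφ A' B' hAB').mp hint
      have hFbig : m + 1 + 3 ≤ F.card := by rw [hFcard]; omega
      obtain ⟨X, hX, Y, hY, hXY⟩ := Finset.one_lt_card.mp (by omega : 1 < F.card)
      have hclique := clique_lemma (m+1) F hFpair (by omega) hX hY hXY
      have hT'card : (X.1 ∩ Y.1).card = m + 1 := hFpair X hX Y hY hXY
      refine ⟨⟨X.1 ∩ Y.1, hT'card⟩, ?_⟩
      -- φ maps star T onto star T'
      have himg : F ⊆ star (X.1 ∩ Y.1) := by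
        intro C hC
        exact Finset.mem_filter.mpr ⟨Finset.mem_univ _, hclique C hC⟩
      have heq : F = star (X.1 ∩ Y.1) := by
        apply Finset.eq_of_subset_of_card_le himg
        rw [hFcard, hstarcard ⟨X.1 ∩ Y.1, hT'card⟩]
      intro A
      constructor
      · intro hTA
        have : φ A ∈ F := Finset.mem_image_of_mem φ
          (Finset.mem_filter.mpr ⟨Finset.mem_univ _, hTA⟩)
        rw [heq] at this
        exact (Finset.mem_filter.mp this).2
      · intro hT'A
        have : φ A ∈ F := by
          rw [heq]
          exact Finset.mem_filter.mpr ⟨Finset.mem_univ _, hT'A⟩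
        obtain ⟨A'', hA'', hAA⟩ := Finset.mem_image.mp this
        have : A'' = A := φ.injective hAA
        rw [← this]
        exact (Finset.mem_filter.mp hA'').2
    set ψ : {s : Finset (Fin n) // s.card = m + 1} → {s : Finset (Fin n) // s.card = m + 1} :=
      fun T => (hex T).choose with hψdef
    have hψ : ∀ T A, (T.1 ⊆ A.1 ↔ (ψ T).1 ⊆ (φ A).1) := fun T => (hex T).choose_spec
    have hψinj : Function.Injective ψ := by
      intro T1 T2 h12
      have hiff : ∀ A : {s : Finset (Fin n) // s.card = m + 2}, T1.1 ⊆ A.1 ↔ T2.1 ⊆ A.1 := by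
        intro A
        rw [hψ T1 A, hψ T2 A, h12]
      apply Subtype.ext
      apply Finset.Subset.antisymm
      · exact subset_of_supsets (by omega) T2.1 T1.1 T2.2 T1.2
          (fun A hA => (hiff A).mpr hA)
      · exact subset_of_supsets (by omega) T1.1 T2.1 T1.2 T2.2
          (fun A hA => (hiff A).mp hA)
    have hψbij : Function.Bijective ψ := (Finite.injective_iff_bijective).mp hψinj
    set ψe : {s : Finset (Fin n) // s.card = m + 1} ≃ {s : Finset (Fin n) // s.card = m + 1} :=
      Equiv.ofBijective ψ hψbij with hψe
    have hψrel : ∀ T1 T2 : {s : Finset (Fin n) // s.card = m + 1}, T1 ≠ T2 →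
        ((T1.1 ∩ T2.1).card = m ↔ ((ψe T1).1 ∩ (ψe T2).1).card = m) := by
      intro T1 T2 h12
      have hψ12 : ψ T1 ≠ ψ T2 := fun h => h12 (hψinj h)
      have e1 : ψe T1 = ψ T1 := rfl
      have e2 : ψe T2 = ψ T2 := rfl
      rw [e1, e2, inter_card_iff_supset T1 T2 h12, inter_card_iff_supset (ψ T1) (ψ T2) hψ12]
      constructor
      · rintro ⟨A, hA1, hA2⟩
        exact ⟨φ A, (hψ T1 A).mp hA1, (hψ T2 A).mp hA2⟩
      · rintro ⟨A', hA1, hA2⟩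
        refine ⟨φ.symm A', ?_, ?_⟩
        · rw [hψ T1 (φ.symm A')]
          rwa [Equiv.apply_symm_apply]
        · rw [hψ T2 (φ.symm A')]
          rwa [Equiv.apply_symm_apply]
    obtain ⟨σ, hσ⟩ := ih (by omega) ψe hψrel
    refine ⟨σ, ?_⟩
    intro A
    have himg : A.1.image σ ⊆ (φ A).1 := by
      intro y hy
      obtain ⟨x, hx, rfl⟩ := Finset.mem_image.mp hy
      -- find z ∈ A, z ≠ x
      obtain ⟨z, hz, w, hw, hzw⟩ := Finset.one_lt_card.mp (by rw [A.2]; omega : 1 < A.1.card)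
      have hex2 : ∃ z ∈ A.1, z ≠ x := by
        by_cases hzx : z = x
        · exact ⟨w, hw, fun h => hzw (hzx.trans h.symm)⟩
        · exact ⟨z, hz, hzx⟩
      obtain ⟨z, hz, hzx⟩ := hex2
      have hTcard : (A.1.erase z).card = m + 1 := by rw [Finset.card_erase_of_mem hz, A.2]; omega
      set T : {s : Finset (Fin n) // s.card = m + 1} := ⟨A.1.erase z, hTcard⟩ with hT
      have hTA : T.1 ⊆ A.1 := Finset.erase_subset _ _
      have h1 : (ψ T).1 ⊆ (φ A).1 := (hψ T A).mp hTA
      have h2 : (ψ T).1 = T.1.image σ := hσ T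
      have hxT : x ∈ T.1 := Finset.mem_erase.mpr ⟨Ne.symm hzx, hx⟩
      exact h1 (h2 ▸ Finset.mem_image_of_mem σ hxT)
    apply (Finset.eq_of_subset_of_card_le himg ?_).symm
    rw [(φ A).2, Finset.card_image_of_injective _ σ.injective, A.2]

open scoped Classical in
/-- The common-neighbor count in the Kneser graph. -/
lemma common_count {m : ℕ} (A B : {s : Finset (Fin n) // s.card = m + 1}) :
    (univ.filter (fun C => (kneserGraph n (m+1)).Adj A C ∧ (kneserGraph n (m+1)).Adj B C)).card
      = (n - (A.1 ∪ B.1).card).choose (m + 1) := by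
  have hfe : (univ.filter
      (fun C => (kneserGraph n (m+1)).Adj A C ∧ (kneserGraph n (m+1)).Adj B C)) =
      (univ.filter (fun C : {s : Finset (Fin n) // s.card = m + 1} => C.1 ⊆ (A.1 ∪ B.1)ᶜ)) := by
    ext C
    simp only [Finset.mem_filter, Finset.mem_univ, true_and]
    constructor
    · intro hC
      obtain ⟨⟨hdA, _⟩, ⟨hdB, _⟩⟩ := (hC : (Disjoint A.1 C.1 ∧ A ≠ C) ∧ (Disjoint B.1 C.1 ∧ B ≠ C))
      intro x hxC
      rw [Finset.mem_compl, Finset.mem_union]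
      push_neg
      exact ⟨fun h => (Finset.disjoint_left.mp hdA) h hxC,
             fun h => (Finset.disjoint_left.mp hdB) h hxC⟩
    · intro hsub
      have hdA : Disjoint A.1 C.1 := Finset.disjoint_left.mpr
        (fun x hxA hxC => (Finset.mem_compl.mp (hsub hxC)) (Finset.mem_union_left _ hxA))
      have hdB : Disjoint B.1 C.1 := Finset.disjoint_left.mpr
        (fun x hxB hxC => (Finset.mem_compl.mp (hsub hxC)) (Finset.mem_union_right _ hxB))
      have hne : ∀ D : {s : Finset (Fin n) // s.card = m + 1}, Disjoint D.1 C.1 → D ≠ C := by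
        intro D hd he
        rw [he] at hd
        have hCe : C.1 = ∅ := by simpa using disjoint_self.mp hd
        have h2 := C.2
        rw [hCe] at h2
        simp at h2
      exact (⟨⟨hdA, hne A hdA⟩, ⟨hdB, hne B hdB⟩⟩ : (Disjoint A.1 C.1 ∧ A ≠ C) ∧ (Disjoint B.1 C.1 ∧ B ≠ C))
  rw [hfe]
  have := count_subsets (n := n) (m+1) ((A.1 ∪ B.1)ᶜ)
  rw [Finset.card_compl, Fintype.card_fin] at this
  rw [← this]


lemma inter_card_le {j : ℕ} (X Y : {s : Finset (Fin n) // s.card = j}) (h : X ≠ Y) :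
    (X.1 ∩ Y.1).card < j := by
  have hss : X.1 ∩ Y.1 ⊂ X.1 := by
    refine Finset.ssubset_iff_of_subset Finset.inter_subset_left |>.mpr ?_
    by_contra hno
    push_neg at hno
    have hsub : X.1 ⊆ Y.1 := fun z hz => (Finset.mem_inter.mp (hno z hz)).2
    exact h (Subtype.ext (Finset.eq_of_subset_of_card_le hsub (by rw [X.2, Y.2])))
  have := Finset.card_lt_card hss
  rwa [X.2] at this

open scoped Classical in
lemma common_count_iso {m : ℕ} (g : kneserGraph n (m+1) ≃g kneserGraph n (m+1))
    (A B : {s : Finset (Fin n) // s.card = m + 1}) :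
    (univ.filter (fun C => (kneserGraph n (m+1)).Adj (g A) C ∧
        (kneserGraph n (m+1)).Adj (g B) C)).card
      = (univ.filter (fun C => (kneserGraph n (m+1)).Adj A C ∧
        (kneserGraph n (m+1)).Adj B C)).card := by
  symm
  apply Finset.card_bij (fun C _ => g C)
  · intro C hC
    obtain ⟨h1, h2⟩ := (Finset.mem_filter.mp hC).2
    exact Finset.mem_filter.mpr ⟨Finset.mem_univ _, g.map_adj_iff.mpr h1, g.map_adj_iff.mpr h2⟩
  · intro C _ D _ hCD
    exact g.toEquiv.injective hCD
  · intro C' hC'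
    obtain ⟨h1, h2⟩ := (Finset.mem_filter.mp hC').2
    refine ⟨g.symm C', ?_, ?_⟩
    · rw [Finset.mem_filter]
      refine ⟨Finset.mem_univ _, ?_, ?_⟩
      · rw [← g.map_adj_iff]
        simpa using h1
      · rw [← g.map_adj_iff]
        simpa using h2
    · simp
  
lemma kneser_johnson {m : ℕ} (hn : 2 * m + 3 ≤ n)
    (g : kneserGraph n (m+1) ≃g kneserGraph n (m+1)) :
    ∀ A B : {s : Finset (Fin n) // s.card = m + 1}, A ≠ B →
      ((A.1 ∩ B.1).card = m ↔ ((g A).1 ∩ (g B).1).card = m) := by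
  classical
  have char : ∀ X Y : {s : Finset (Fin n) // s.card = m + 1}, X ≠ Y →
      ((X.1 ∩ Y.1).card = m ↔
        (n - (X.1 ∪ Y.1).card).choose (m+1) = (n - (m+2)).choose (m+1)) := by
    intro X Y hXY
    have hi := inter_card_le X Y hXY
    have huc := Finset.card_union_add_card_inter X.1 Y.1
    rw [X.2, Y.2] at huc
    constructor
    · intro h
      have : (X.1 ∪ Y.1).card = m + 2 := by omega
      rw [this]
    · intro h
      by_contra hne
      have hile : (X.1 ∩ Y.1).card < m := by omega
      have hu : m + 3 ≤ (X.1 ∪ Y.1).card := by omega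
      have h1 : (n - (X.1 ∪ Y.1).card).choose (m+1) ≤ (n - (m+3)).choose (m+1) :=
        Nat.choose_le_choose _ (by omega)
      have h2 : (n - (m+3)).choose (m+1) < (n - (m+2)).choose (m+1) := by
        have he : n - (m+2) = (n - (m+3)) + 1 := by omega
        rw [he, Nat.choose_succ_succ']
        have hpos : 0 < (n - (m+3)).choose m := Nat.choose_pos (by omega)
        omega
      omega
  intro A B hAB
  have hgAB : g A ≠ g B := fun h => hAB (g.toEquiv.injective h)
  rw [char A B hAB, char (g A) (g B) hgAB,
    ← common_count A B, ← common_count (g A) (g B), common_count_iso g A B]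

end Aux

theorem stmt_4 (n k : ℕ) (hn : 2 * k + 1 ≤ n)
    (S : Set {s : Finset (Fin n) // s.card = k})
    (h1 : ∀ a b : Fin n, a ≠ b →
      {V | V ∈ S ∧ a ∈ V.1} ≠ {V | V ∈ S ∧ b ∈ V.1})
    (h2 : {i : Fin n | ∀ V ∈ S, i ∉ V.1}.Subsingleton) :
    IsDeterminingSet (kneserGraph n k) S := by
  intro g h hagree
  cases k with
  | zero =>
    apply DFunLike.ext
    intro v
    have hall : ∀ w : {s : Finset (Fin n) // s.card = 0}, w = ⟨∅, rfl⟩ :=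
      fun w => Subtype.ext (Finset.card_eq_zero.mp w.2)
    rw [hall (g v), hall (h v)]
  | succ m =>
    have hn' : 2 * m + 3 ≤ n := by omega
    obtain ⟨σg, hσg⟩ := johnson_induced m hn' g.toEquiv (kneser_johnson hn' g)
    obtain ⟨σh, hσh⟩ := johnson_induced m hn' h.toEquiv (kneser_johnson hn' h)
    set τ : Equiv.Perm (Fin n) := σg.trans σh.symm with hτdef
    have hfix : ∀ V ∈ S, V.1.image τ = V.1 := by
      intro V hV
      have e : V.1.image σg = V.1.image σh := by
        rw [← hσg V, ← hσh V]
        exact congrArg Subtype.val (hagree V hV)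
      calc V.1.image τ = (V.1.image σg).image σh.symm := by
            rw [Finset.image_image]; rfl
        _ = (V.1.image σh).image σh.symm := by rw [e]
        _ = V.1 := by rw [Finset.image_image]; simp
    have hmem : ∀ (a : Fin n) (V) (_ : V ∈ S), a ∈ V.1 ↔ τ a ∈ V.1 := by
      intro a V hV
      constructor
      · intro ha
        rw [← hfix V hV]
        exact Finset.mem_image_of_mem τ ha
      · intro ha
        rw [← hfix V hV] at ha
        obtain ⟨b, hb, he⟩ := Finset.mem_image.mp ha
        rwa [← τ.injective he]
    have hτ : ∀ a, τ a = a := by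
      intro a
      by_contra hne
      exact h1 a (τ a) (fun he => hne he.symm)
        (Set.ext fun V => ⟨fun hV => ⟨hV.1, (hmem a V hV.1).mp hV.2⟩,
          fun hV => ⟨hV.1, (hmem a V hV.1).mpr hV.2⟩⟩)
    have hσ : ∀ x, σg x = σh x := by
      intro x
      have := hτ x
      rw [hτdef] at this
      simp only [Equiv.trans_apply] at this
      exact (Equiv.symm_apply_eq σh).mp this
    apply DFunLike.ext
    intro V
    apply Subtype.ext
    show (g V).1 = (h V).1
    have e1 : (g V).1 = V.1.image σg := hσg V
    have e2 : (h V).1 = V.1.image σh := hσh V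
    rw [e1, e2]
    exact Finset.image_congr (fun x _ => hσ x)
end

section
/- Let H be a simple k-regular hypergraph with d vertices and m edges. If m > d + C(d,2), then k·d ≥ 3m − 2d − C(d,2), where C(d,2) denotes the binomial coefficient. -/
/-- A simple `k`-regular hypergraph on vertex set `Fin d`: a finite family of
distinct nonempty edges such that every vertex lies in exactly `k` edges. -/
def IsRegularHypergraph (d k : ℕ) (E : Finset (Finset (Fin d))) : Prop :=
  (∀ e ∈ E, e.Nonempty) ∧ ∀ v : Fin d, (E.filter (fun e => v ∈ e)).card = k

theorem stmt_6 (d k : ℕ) (E : Finset (Finset (Fin d)))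
    (hE : IsRegularHypergraph d k E)
    (hm : E.card > d + d.choose 2) :
    k * d + 2 * d + d.choose 2 ≥ 3 * E.card := by
  obtain ⟨hne, hreg⟩ := hE
  -- sum of sizes equals k * d
  have hsum : ∑ e ∈ E, e.card = k * d := by
    have : ∑ e ∈ E, e.card = ∑ v : Fin d, (E.filter (fun e => v ∈ e)).card := by
      simp only [Finset.card_filter]
      rw [Finset.sum_comm]
      refine Finset.sum_congr rfl fun e _ => ?_
      simp [Finset.sum_ite_mem, Finset.univ_inter]
    rw [this]
    simp [hreg, Finset.card_univ, mul_comm]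
  -- counts of small edges
  have h1 : (E.filter (fun e => e.card = 1)).card ≤ d := by
    have hsub : E.filter (fun e => e.card = 1) ⊆ (Finset.univ : Finset (Fin d)).powersetCard 1 := by
      intro e he
      simp only [Finset.mem_filter] at he
      simp [Finset.mem_powersetCard, he.2]
    have := Finset.card_le_card hsub
    simpa [Finset.card_powersetCard] using this
  have h2 : (E.filter (fun e => e.card = 2)).card ≤ d.choose 2 := by
    have hsub : E.filter (fun e => e.card = 2) ⊆ (Finset.univ : Finset (Fin d)).powersetCard 2 := by
      intro e he
      simp only [Finset.mem_filter] at he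
      simp [Finset.mem_powersetCard, he.2]
    have := Finset.card_le_card hsub
    simpa [Finset.card_powersetCard] using this
  -- key pointwise bound summed
  have key : 3 * E.card ≤ (∑ e ∈ E, e.card) +
      (2 * (E.filter (fun e => e.card = 1)).card + (E.filter (fun e => e.card = 2)).card) := by
    have : ∑ e ∈ E, 3 ≤ ∑ e ∈ E, (e.card + ((if e.card = 1 then 2 else 0) + (if e.card = 2 then 1 else 0))) := by
      apply Finset.sum_le_sum
      intro e he
      have h1e : 1 ≤ e.card := Finset.card_pos.mpr (hne e he)
      rcases Nat.lt_or_ge e.card 3 with h | h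
      · interval_cases h' : e.card <;> simp_all
      · omega
    rw [Finset.sum_add_distrib, Finset.sum_add_distrib] at this
    simp only [Finset.sum_ite_eq, Finset.sum_const, smul_eq_mul] at this
    rw [← Finset.sum_filter, ← Finset.sum_filter] at this
    simp only [Finset.sum_const, smul_eq_mul, mul_comm, mul_one] at this
    omega
  omega
end

section
/- Let H be a simple k-regular hypergraph with d vertices and m edges. If m > d + C(d,2) + C(d,3), then k·d ≥ 4m − 3d − 2·C(d,2) − C(d,3). -/
theorem stmt_7 (d k : ℕ) (E : Finset (Finset (Fin d)))
    (hE : IsRegularHypergraph d k E)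
    (hm : E.card > d + d.choose 2 + d.choose 3) :
    k * d + 3 * d + 2 * d.choose 2 + d.choose 3 ≥ 4 * E.card := by
  obtain ⟨hne, hreg⟩ := hE
  -- double counting: k * d = ∑ e in E, e.card
  have hdc : k * d = ∑ e ∈ E, e.card := by
    have : ∑ v : Fin d, (E.filter (fun e => v ∈ e)).card = ∑ e ∈ E, e.card := by
      simp only [Finset.card_filter]
      rw [Finset.sum_comm]
      congr 1
      ext e
      simp [Finset.card_filter, Finset.filter_univ_mem]
    calc k * d = ∑ _v : Fin d, k := by simp [mul_comm]
    _ = ∑ v : Fin d, (E.filter (fun e => v ∈ e)).card := by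
        exact Finset.sum_congr rfl fun v _ => (hreg v).symm
    _ = ∑ e ∈ E, e.card := this
  -- bound numbers of small edges
  have hcount : ∀ i : ℕ, (E.filter (fun e => e.card = i)).card ≤ d.choose i := by
    intro i
    have hsub : E.filter (fun e => e.card = i) ⊆
        (Finset.univ : Finset (Fin d)).powersetCard i := by
      intro e he
      simp only [Finset.mem_filter] at he
      simp [Finset.mem_powersetCard, he.2]
    have := Finset.card_le_card hsub
    simpa [Finset.card_powersetCard] using this
  have h1 := hcount 1
  have h2 := hcount 2
  have h3 := hcount 3
  rw [Nat.choose_one_right] at h1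
  -- per-edge inequality summed
  have hsum : ∑ e ∈ E, e.card
      + 3 * (E.filter (fun e => e.card = 1)).card
      + 2 * (E.filter (fun e => e.card = 2)).card
      + (E.filter (fun e => e.card = 3)).card ≥ 4 * E.card := by
    have key : ∀ e ∈ E, 4 ≤ e.card + 3 * (if e.card = 1 then 1 else 0)
        + 2 * (if e.card = 2 then 1 else 0) + (if e.card = 3 then 1 else 0) := by
      intro e he
      have : 1 ≤ e.card := Finset.card_pos.mpr (hne e he)
      split_ifs <;> omega
    calc 4 * E.card = ∑ e ∈ E, 4 := by
          rw [Finset.sum_const, smul_eq_mul, mul_comm]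
    _ ≤ ∑ e ∈ E, (e.card + 3 * (if e.card = 1 then 1 else 0)
        + 2 * (if e.card = 2 then 1 else 0) + (if e.card = 3 then 1 else 0)) :=
        Finset.sum_le_sum key
    _ = ∑ e ∈ E, e.card
      + 3 * (E.filter (fun e => e.card = 1)).card
      + 2 * (E.filter (fun e => e.card = 2)).card
      + (E.filter (fun e => e.card = 3)).card := by
        rw [Finset.sum_add_distrib, Finset.sum_add_distrib, Finset.sum_add_distrib]
        rw [← Finset.mul_sum, ← Finset.mul_sum]
        rw [← Finset.card_filter, ← Finset.card_filter, ← Finset.card_filter]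
  omega
end

section
/- For every odd d ≥ 3 and every odd k with 1 ≤ k ≤ d, there exists a simple k-regular hypergraph with d vertices and exactly d(k+1)/2 edges. -/
open Fin.NatCast Fin.CommRing

section Aux

variable {d : ℕ} [NeZero d]

lemma aux_cast_ne_zero {j : ℕ} (h1 : 1 ≤ j) (h2 : j < d) : (j : Fin d) ≠ 0 := by
  intro h
  have := Fin.val_cast_of_lt (n := d) h2
  rw [h] at this
  simp at this
  omega

lemma aux_cast_inj {j j' : ℕ} (h2 : j < d) (h2' : j' < d)
    (h : (j : Fin d) = (j' : Fin d)) : j = j' := by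
  have t1 := Fin.val_cast_of_lt (n := d) h2
  have t2 := Fin.val_cast_of_lt (n := d) h2'
  rw [h] at t1; omega

lemma aux_cast_add_ne_zero {j j' : ℕ} (h1 : 1 ≤ j) (h : j + j' < d) :
    (j : Fin d) + (j' : Fin d) ≠ 0 := by
  have e : (j : Fin d) + (j' : Fin d) = ((j + j' : ℕ) : Fin d) := by push_cast; ring
  rw [e]
  exact aux_cast_ne_zero (by omega) h

end Aux

theorem stmt_11 (d k : ℕ) (hd3 : 3 ≤ d) (hdodd : Odd d)
    (hk1 : 1 ≤ k) (hkodd : Odd k) (hkd : k ≤ d) :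
    ∃ E : Finset (Finset (Fin d)),
      IsRegularHypergraph d k E ∧ E.card = d * (k + 1) / 2 := by
  haveI : NeZero d := ⟨by omega⟩
  obtain ⟨m, hm⟩ := hkodd
  have hmd : 2 * m + 1 ≤ d := by omega
  -- index set for "shifts"
  set J : Finset ℕ := Finset.Icc 1 m with hJ
  have hJmem : ∀ j ∈ J, 1 ≤ j ∧ j ≤ m := by
    intro j hj; rw [hJ, Finset.mem_Icc] at hj; exact hj
  have hjlt : ∀ j ∈ J, j < d := fun j hj => by have := hJmem j hj; omega
  have hjne : ∀ j ∈ J, ((j : Fin d)) ≠ 0 := fun j hj =>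
    aux_cast_ne_zero (hJmem j hj).1 (hjlt j hj)
  -- basic fact: w ≠ w + j for j ∈ J
  have hne : ∀ (w : Fin d), ∀ j ∈ J, w ≠ w + (j : Fin d) := by
    intro w j hj h
    exact hjne j hj (by
      have : w + (j : Fin d) = w + 0 := by rw [add_zero]; exact h.symm
      exact add_left_cancel this)
  have hsum : ∀ j ∈ J, ∀ j' ∈ J, (j : Fin d) + (j' : Fin d) ≠ 0 := by
    intro j hj j' hj'
    have h1 := hJmem j hj; have h2 := hJmem j' hj'
    exact aux_cast_add_ne_zero h1.1 (by omega)
  -- the edge sets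
  set E₁ : Finset (Finset (Fin d)) :=
    Finset.univ.image (fun v : Fin d => ({v} : Finset (Fin d))) with hE₁
  set E₂ : Finset (Finset (Fin d)) :=
    (Finset.univ ×ˢ J).image
      (fun p : Fin d × ℕ => ({p.1, p.1 + (p.2 : Fin d)} : Finset (Fin d))) with hE₂
  -- cards of edges
  have hcard1 : ∀ e ∈ E₁, e.card = 1 := by
    intro e he
    rw [hE₁, Finset.mem_image] at he
    obtain ⟨v, -, rfl⟩ := he
    simp
  have hcard2 : ∀ e ∈ E₂, e.card = 2 := by
    intro e he
    rw [hE₂, Finset.mem_image] at he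
    obtain ⟨⟨w, j⟩, hp, rfl⟩ := he
    rw [Finset.mem_product] at hp
    exact Finset.card_pair (hne w j hp.2)
  have hdisj : Disjoint E₁ E₂ := by
    rw [Finset.disjoint_left]
    intro e h1 h2
    have := hcard1 e h1
    have := hcard2 e h2
    omega
  refine ⟨E₁ ∪ E₂, ⟨?_, ?_⟩, ?_⟩
  · intro e he
    rw [Finset.mem_union] at he
    rcases he with he | he
    · exact Finset.card_pos.mp (by rw [hcard1 e he]; norm_num)
    · exact Finset.card_pos.mp (by rw [hcard2 e he]; norm_num)
  · intro v
    rw [Finset.filter_union]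
    rw [Finset.card_union_of_disjoint
      (Finset.disjoint_filter_filter hdisj)]
    have c1 : (E₁.filter (fun e => v ∈ e)).card = 1 := by
      have : E₁.filter (fun e => v ∈ e) = {({v} : Finset (Fin d))} := by
        apply Finset.eq_singleton_iff_unique_mem.mpr
        constructor
        · rw [Finset.mem_filter]
          exact ⟨by rw [hE₁]; exact Finset.mem_image_of_mem _ (Finset.mem_univ v),
            Finset.mem_singleton_self v⟩
        · intro e he
          rw [Finset.mem_filter, hE₁, Finset.mem_image] at he
          obtain ⟨⟨w, -, rfl⟩, hv⟩ := he
          rw [Finset.mem_singleton] at hv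
          rw [hv]
      rw [this]; simp
    have c2 : (E₂.filter (fun e => v ∈ e)).card = 2 * m := by
      have hrepr : E₂.filter (fun e => v ∈ e) =
          (J.image fun j : ℕ => ({v, v + (j : Fin d)} : Finset (Fin d))) ∪
          (J.image fun j : ℕ => ({v - (j : Fin d), v} : Finset (Fin d))) := by
        apply Finset.ext
        intro e
        simp only [Finset.mem_filter, Finset.mem_union, Finset.mem_image]
        constructor
        · rintro ⟨he, hv⟩
          rw [hE₂, Finset.mem_image] at he
          obtain ⟨⟨w, j⟩, hp, rfl⟩ := he
          rw [Finset.mem_product] at hp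
          simp only [Finset.mem_insert, Finset.mem_singleton] at hv
          rcases hv with rfl | rfl
          · exact Or.inl ⟨j, hp.2, rfl⟩
          · refine Or.inr ⟨j, hp.2, ?_⟩
            have hww : w + (j : Fin d) - (j : Fin d) = w := by ring
            rw [hww]
        · rintro (⟨j, hj, rfl⟩ | ⟨j, hj, rfl⟩)
          · refine ⟨?_, by simp⟩
            rw [hE₂, Finset.mem_image]
            exact ⟨(v, j), Finset.mem_product.mpr ⟨Finset.mem_univ _, hj⟩, rfl⟩
          · refine ⟨?_, by simp⟩
            rw [hE₂, Finset.mem_image]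
            refine ⟨(v - (j : Fin d), j),
              Finset.mem_product.mpr ⟨Finset.mem_univ _, hj⟩, ?_⟩
            have hvv : v - (j : Fin d) + (j : Fin d) = v := by ring
            rw [hvv]
      rw [hrepr]
      have inj1 : Set.InjOn (fun j : ℕ => ({v, v + (j : Fin d)} : Finset (Fin d))) J := by
        intro j hj j' hj' h
        simp only at h
        have : v + (j : Fin d) ∈ ({v, v + (j' : Fin d)} : Finset (Fin d)) := by
          rw [← h]; simp
        simp only [Finset.mem_insert, Finset.mem_singleton] at this
        rcases this with h' | h'
        · exact absurd h'.symm (hne v j hj)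
        · exact aux_cast_inj (hjlt j hj) (hjlt j' hj') (add_left_cancel h')
      have inj2 : Set.InjOn (fun j : ℕ => ({v - (j : Fin d), v} : Finset (Fin d))) J := by
        intro j hj j' hj' h
        simp only at h
        have : v - (j : Fin d) ∈ ({v - (j' : Fin d), v} : Finset (Fin d)) := by
          rw [← h]; simp
        simp only [Finset.mem_insert, Finset.mem_singleton] at this
        rcases this with h' | h'
        · exact aux_cast_inj (hjlt j hj) (hjlt j' hj') (sub_right_injective h')
        · exact absurd (sub_eq_self.mp h') (hjne j hj)
      have cun : Disjoint (J.image fun j : ℕ => ({v, v + (j : Fin d)} : Finset (Fin d)))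
          (J.image fun j : ℕ => ({v - (j : Fin d), v} : Finset (Fin d))) := by
        rw [Finset.disjoint_left]
        rintro e h1 h2
        rw [Finset.mem_image] at h1 h2
        obtain ⟨j, hj, rfl⟩ := h1
        obtain ⟨j', hj', he⟩ := h2
        have hv : v + (j : Fin d) ∈ ({v - (j' : Fin d), v} : Finset (Fin d)) := by
          rw [he]; simp
        simp only [Finset.mem_insert, Finset.mem_singleton] at hv
        rcases hv with h' | h'
        · apply hsum j hj j' hj'
          have h2 : v + ((j : Fin d) + (j' : Fin d)) = v + 0 := by
            rw [add_zero, ← add_assoc, h']; ring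
          exact add_left_cancel h2
        · exact absurd h'.symm (hne v j hj)
      rw [Finset.card_union_of_disjoint cun,
        Finset.card_image_of_injOn inj1, Finset.card_image_of_injOn inj2]
      rw [hJ]
      simp [Nat.card_Icc]
      omega
    rw [c1, c2]; omega
  · rw [Finset.card_union_of_disjoint hdisj]
    have c1 : E₁.card = d := by
      rw [hE₁, Finset.card_image_of_injective _ (fun a b h => Finset.singleton_inj.mp h)]
      simp
    have c2 : E₂.card = d * m := by
      rw [hE₂]
      rw [Finset.card_image_of_injOn]
      · rw [Finset.card_product]; simp [hJ]
      · rintro ⟨w, j⟩ hp ⟨w', j'⟩ hp' h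
        simp only [Finset.coe_product, Set.mem_prod, Finset.mem_coe] at hp hp'
        have hj := hp.2; have hj' := hp'.2
        simp only at h
        have hw : w ∈ ({w', w' + (j' : Fin d)} : Finset (Fin d)) := by rw [← h]; simp
        have hw' : w' ∈ ({w, w + (j : Fin d)} : Finset (Fin d)) := by rw [h]; simp
        simp only [Finset.mem_insert, Finset.mem_singleton] at hw hw'
        rcases hw with rfl | hw
        · have : w + (j : Fin d) ∈ ({w, w + (j' : Fin d)} : Finset (Fin d)) := by
            rw [← h]; simp
          simp only [Finset.mem_insert, Finset.mem_singleton] at this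
          rcases this with h' | h'
          · exact absurd h'.symm (hne w j hj)
          · have := aux_cast_inj (hjlt j hj) (hjlt j' hj') (add_left_cancel h')
            simp [this]
        · rcases hw' with h' | h'
          · exfalso
            rw [h'] at hw
            exact hne w j' hj' hw
          · exfalso
            apply hsum j' hj' j hj
            have h2 : w' + ((j' : Fin d) + (j : Fin d)) = w' + 0 := by
              rw [add_zero, ← add_assoc, ← hw]
              exact h'.symm
            exact add_left_cancel h2
    rw [c1, c2, hm]
    have h2 : d * (2 * m + 1 + 1) / 2 = d * (m + 1) := by
      have h3 : d * (2 * m + 1 + 1) = d * (m + 1) * 2 := by ring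
      rw [h3, Nat.mul_div_cancel _ (by norm_num : 0 < 2)]
    rw [h2]
    ring
end

section
/- Let k and d be positive integers with k ≤ d and d > 2. Then the determining number of the Kneser graph K_{n:k} with n = ⌊d(k+1)/2⌋ + 1 equals d. -/
namespace Stmt12
open Finset

abbrev KV (n j : ℕ) := {s : Finset (Fin n) // s.card = j}

variable {n k : ℕ}

instance : DecidableRel (kneserGraph n k).Adj := fun a b =>
  decidable_of_iff (Disjoint a.val b.val ∧ a ≠ b) Iff.rfl

theorem kAdj {A B : KV n k} : (kneserGraph n k).Adj A B ↔ Disjoint A.val B.val ∧ A ≠ B :=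
  Iff.rfl

/-- The automorphism of the Kneser graph induced by a permutation of points. -/
def indAuto (n k : ℕ) (σ : Equiv.Perm (Fin n)) : kneserGraph n k ≃g kneserGraph n k where
  toFun A := ⟨A.val.image σ, by rw [Finset.card_image_of_injective _ σ.injective, A.2]⟩
  invFun A := ⟨A.val.image σ.symm, by rw [Finset.card_image_of_injective _ σ.symm.injective, A.2]⟩
  left_inv A := by
    ext1; simp [Finset.image_image, Function.comp_def]
  right_inv A := by
    ext1; simp [Finset.image_image, Function.comp_def]
  map_rel_iff' := by
    intro A B
    simp only [kneserGraph, Equiv.coe_fn_mk]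
    constructor
    · rintro ⟨h1, h2⟩
      refine ⟨(Finset.disjoint_image σ.injective).1 h1, fun e => h2 (by rw [e])⟩
    · rintro ⟨h1, h2⟩
      refine ⟨(Finset.disjoint_image σ.injective).2 h1, fun e => h2 ?_⟩
      have h3 : A.val.image σ = B.val.image σ := congrArg Subtype.val e
      ext1
      exact Finset.image_injective σ.injective h3

/-- number of common neighbors -/
def codeg (A B : KV n k) : ℕ :=
  (univ.filter fun C : KV n k => (kneserGraph n k).Adj A C ∧ (kneserGraph n k).Adj B C).card

theorem codeg_eq (hk : 1 ≤ k) (A B : KV n k) :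
    codeg A B = (n - (A.val ∪ B.val).card).choose k := by
  classical
  have h1 : codeg A B = ((A.val ∪ B.val)ᶜ.powersetCard k).card := by
    apply Finset.card_bij (fun C _ => C.val)
    · intro C hC
      simp only [mem_filter, mem_univ, true_and, kAdj] at hC
      rw [mem_powersetCard]
      refine ⟨fun x hx => ?_, C.2⟩
      rw [mem_compl, mem_union]
      rintro (h | h)
      · exact (Finset.disjoint_right.mp hC.1.1 hx) h
      · exact (Finset.disjoint_right.mp hC.2.1 hx) h
    · exact fun C _ D _ h => Subtype.ext h
    · intro t ht
      rw [mem_powersetCard] at ht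
      have hsub : ∀ x ∈ t, x ∉ A.val ∪ B.val := fun x hx => (mem_compl.mp (ht.1 hx))
      have hdA : Disjoint A.val t :=
        Finset.disjoint_right.mpr fun x hx h => hsub x hx (mem_union_left _ h)
      have hdB : Disjoint B.val t :=
        Finset.disjoint_right.mpr fun x hx h => hsub x hx (mem_union_right _ h)
      have hAne : A ≠ ⟨t, ht.2⟩ := by
        intro h
        obtain ⟨x, hx⟩ := Finset.card_pos.mp (by rw [A.2]; omega : 0 < A.val.card)
        have : x ∈ t := by rw [← show A.val = t from congrArg Subtype.val h] at *; exact hx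
        exact hsub x this (mem_union_left _ (by rw [show A.val = t from congrArg Subtype.val h]; exact this))
      have hBne : B ≠ ⟨t, ht.2⟩ := by
        intro h
        obtain ⟨x, hx⟩ := Finset.card_pos.mp (by rw [B.2]; omega : 0 < B.val.card)
        have hxt : x ∈ t := by rw [show B.val = t from congrArg Subtype.val h] at hx; exact hx
        exact hsub x hxt (mem_union_right _ (by rw [show B.val = t from congrArg Subtype.val h]; exact hxt))
      exact ⟨⟨t, ht.2⟩, mem_filter.mpr ⟨mem_univ _, ⟨hdA, hAne⟩, ⟨hdB, hBne⟩⟩, rfl⟩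
  rw [h1, Finset.card_powersetCard, Finset.card_compl, Fintype.card_fin]

theorem codeg_map (g : kneserGraph n k ≃g kneserGraph n k) (A B : KV n k) :
    codeg (g A) (g B) = codeg A B := by
  classical
  symm
  apply Finset.card_bij (fun C _ => g C)
  · intro C hC
    simp only [mem_filter, mem_univ, true_and] at hC ⊢
    exact ⟨g.map_adj_iff.mpr hC.1, g.map_adj_iff.mpr hC.2⟩
  · exact fun C _ D _ h => g.injective h
  · intro C' hC'
    simp only [mem_filter, mem_univ, true_and] at hC'
    refine ⟨g.symm C', mem_filter.mpr ⟨mem_univ _, ?_, ?_⟩, by simp⟩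
    · have := g.map_adj_iff (v := A) (w := g.symm C'); rw [← this]; simpa using hC'.1
    · have := g.map_adj_iff (v := B) (w := g.symm C'); rw [← this]; simpa using hC'.2

end Stmt12

namespace Stmt12
open Finset

theorem union_le {j : ℕ} (A B : KV n j) : (A.val ∪ B.val).card ≤ 2*j := by
  have := Finset.card_union_le A.val B.val; rw [A.2, B.2] at this; omega

theorem le_union {j : ℕ} (A B : KV n j) : j ≤ (A.val ∪ B.val).card := by
  have h : A.val ⊆ A.val ∪ B.val := Finset.subset_union_left
  have := Finset.card_le_card h
  rw [A.2] at this; exact this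

theorem union_eq_level_iff {j : ℕ} (A B : KV n j) : (A.val ∪ B.val).card = j ↔ A = B := by
  constructor
  · intro h
    have e1 : A.val = A.val ∪ B.val :=
      eq_of_subset_of_card_le (Finset.subset_union_left) (by rw [h, A.2])
    have e2 : B.val = A.val ∪ B.val :=
      eq_of_subset_of_card_le (Finset.subset_union_right) (by rw [h, B.2])
    exact Subtype.ext (e1.trans e2.symm)
  · rintro rfl; rw [Finset.union_self, A.2]

theorem lt_union {j : ℕ} (A B : KV n j) (h : A ≠ B) : j+1 ≤ (A.val ∪ B.val).card := by
  have h1 := le_union A B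
  have h2 : (A.val ∪ B.val).card ≠ j := fun e => h ((union_eq_level_iff A B).mp e)
  omega

theorem choose_strict {k m : ℕ} (hk : 1 ≤ k) (hm : k - 1 ≤ m) :
    m.choose k < (m+1).choose k := by
  obtain ⟨k', rfl⟩ : ∃ k', k = k'+1 := ⟨k-1, by omega⟩
  rw [Nat.choose_succ_succ]
  simp only [Nat.succ_eq_add_one]
  have : 0 < m.choose k' := Nat.choose_pos (by omega)
  omega

theorem union_card_iff (hk : 2 ≤ k) (hn : 2*k+1 ≤ n) (A B : KV n k) :
    (A.val ∪ B.val).card = k+1 ↔ (A ≠ B ∧ codeg A B = (n-(k+1)).choose k) := by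
  constructor
  · intro h
    refine ⟨fun e => ?_, ?_⟩
    · have := (union_eq_level_iff A B).mpr e; omega
    · rw [codeg_eq (by omega) A B, h]
  · rintro ⟨hne, hcd⟩
    have hge := lt_union A B hne
    by_contra hne2
    have h2 : k+2 ≤ (A.val ∪ B.val).card := by omega
    rw [codeg_eq (by omega) A B] at hcd
    have hmono : (n - (A.val ∪ B.val).card).choose k ≤ (n-(k+2)).choose k :=
      Nat.choose_le_choose _ (by omega)
    have hstep : (n-(k+2)).choose k < (n-(k+1)).choose k := by
      have he : n-(k+1) = (n-(k+2))+1 := by omega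
      rw [he]; exact choose_strict (by omega) (by omega)
    omega

theorem good_top (hk : 2 ≤ k) (hn : 2*k+1 ≤ n) (g : kneserGraph n k ≃g kneserGraph n k)
    (A B : KV n k) :
    (A.val ∪ B.val).card = k+1 ↔ ((g A).val ∪ (g B).val).card = k+1 := by
  rw [union_card_iff hk hn A B, union_card_iff hk hn (g A) (g B), codeg_map]
  have : A ≠ B ↔ g A ≠ g B :=
    ⟨fun h e => h (g.injective e), fun h e => h (congrArg g e)⟩
  rw [this]

theorem sunflower {j : ℕ} (F : Finset (Finset (Fin n)))
    (hcard : ∀ T ∈ F, T.card = j)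
    (hpair : ∀ T ∈ F, ∀ T' ∈ F, T ≠ T' → (T ∪ T').card = j+1)
    (hF : j+2 ≤ F.card) :
    ∃ S : Finset (Fin n), S.card = j - 1 ∧ ∀ T ∈ F, S ⊆ T := by
  classical
  obtain ⟨A, hA, B, hB, hAB⟩ := Finset.one_lt_card.mp (show 1 < F.card by omega)
  have hinter : ∀ T ∈ F, ∀ T' ∈ F, T ≠ T' → (T ∩ T').card = j - 1 := by
    intro T hT T' hT' hne
    have h1 := Finset.card_union_add_card_inter T T'
    rw [hcard T hT, hcard T' hT', hpair T hT T' hT' hne] at h1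
    omega
  set S := A ∩ B with hSdef
  have hScard : S.card = j - 1 := hinter A hA B hB hAB
  by_cases hall : ∀ T ∈ F, S ⊆ T
  · exact ⟨S, hScard, hall⟩
  exfalso
  have hj : 1 ≤ j := by
    by_contra hj0
    have : j = 0 := by omega
    subst this
    have := hcard A hA
    have := hcard B hB
    exact hAB (by rw [Finset.card_eq_zero.mp ‹A.card = 0›, Finset.card_eq_zero.mp ‹B.card = 0›])
  push_neg at hall
  obtain ⟨C, hC, hSC⟩ := hall
  obtain ⟨s, hsS, hsC⟩ := Finset.not_subset.mp hSC
  have key : ∀ D ∈ F, ∀ s' ∈ S, s' ∉ D → A ∪ B = D ∪ {s'} := by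
    intro D hD s' hs'S hs'D
    have hs'A : s' ∈ A := Finset.mem_of_mem_inter_left hs'S
    have hs'B : s' ∈ B := Finset.mem_of_mem_inter_right hs'S
    have hDA : D ≠ A := fun e => hs'D (e ▸ hs'A)
    have hDB : D ≠ B := fun e => hs'D (e ▸ hs'B)
    have sdiffeq : ∀ X, X ∈ F → X ≠ D → s' ∈ X → X \ D = {s'} := by
      intro X hX hXD hs'X
      have h1 := hinter X hX D hD hXD
      have h2 : (X ∩ D).card + (X \ D).card = X.card := Finset.card_inter_add_card_sdiff X D
      rw [hcard X hX] at h2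
      have h3 : (X \ D).card = 1 := by omega
      obtain ⟨a, ha⟩ := Finset.card_eq_one.mp h3
      have : s' ∈ X \ D := Finset.mem_sdiff.mpr ⟨hs'X, hs'D⟩
      rw [ha] at this ⊢
      rw [← Finset.mem_singleton.mp this]
    have hADeq := sdiffeq A hA (Ne.symm hDA) hs'A
    have hBDeq := sdiffeq B hB (Ne.symm hDB) hs'B
    have hsub : A ∪ B ⊆ D ∪ {s'} := by
      intro x hx
      rcases Finset.mem_union.mp hx with h | h
      · by_cases hxD : x ∈ D
        · exact Finset.mem_union_left _ hxD
        · have : x ∈ A \ D := Finset.mem_sdiff.mpr ⟨h, hxD⟩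
          rw [hADeq] at this; exact Finset.mem_union_right _ this
      · by_cases hxD : x ∈ D
        · exact Finset.mem_union_left _ hxD
        · have : x ∈ B \ D := Finset.mem_sdiff.mpr ⟨h, hxD⟩
          rw [hBDeq] at this; exact Finset.mem_union_right _ this
    have hc1 : (A ∪ B).card = j+1 := hpair A hA B hB hAB
    have hc2 : (D ∪ {s'}).card ≤ j + 1 := by
      have := Finset.card_union_le D {s'}
      rw [hcard D hD, Finset.card_singleton] at this; exact this
    exact eq_of_subset_of_card_le hsub (by omega)
  have hCeq : A ∪ B = C ∪ {s} := key C hC s hsS hsC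
  have hsubAll : ∀ D ∈ F, D ⊆ A ∪ B := by
    intro D hD
    by_cases hSD : S ⊆ D
    · by_cases hDC : D = C
      · subst hDC; exact absurd (hSD hsS) hsC
      · have h1 := hinter D hD C hC hDC
        have h2 : (D ∩ C).card + (D \ C).card = D.card := Finset.card_inter_add_card_sdiff D C
        rw [hcard D hD] at h2
        have h3 : (D \ C).card = 1 := by omega
        obtain ⟨a, ha⟩ := Finset.card_eq_one.mp h3
        have hsDC : s ∈ D \ C := Finset.mem_sdiff.mpr ⟨hSD hsS, hsC⟩
        have haeq : a = s := by rw [ha] at hsDC; exact (Finset.mem_singleton.mp hsDC).symm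
        intro x hx
        by_cases hxC : x ∈ C
        · rw [hCeq]; exact Finset.mem_union_left _ hxC
        · have : x ∈ D \ C := Finset.mem_sdiff.mpr ⟨hx, hxC⟩
          rw [ha, haeq] at this
          rw [hCeq]; exact Finset.mem_union_right _ this
    · obtain ⟨s', hs'S, hs'D⟩ := Finset.not_subset.mp hSD
      have hkey := key D hD s' hs'S hs'D
      intro x hx; rw [hkey]; exact Finset.mem_union_left _ hx
  have hFsub : F ⊆ (A ∪ B).powersetCard j :=
    fun T hT => Finset.mem_powersetCard.mpr ⟨hsubAll T hT, hcard T hT⟩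
  have hle := Finset.card_le_card hFsub
  rw [Finset.card_powersetCard, hpair A hA B hB hAB] at hle
  have hch : (j+1).choose j = j+1 := by
    have h1 : (j+1).choose ((j+1) - 1) = (j+1).choose 1 := Nat.choose_symm (by omega)
    simp only [Nat.add_sub_cancel] at h1
    rw [h1, Nat.choose_one_right]
  omega

theorem star_card {j : ℕ} (hjn : j + 1 ≤ n) (S : Finset (Fin n)) (hS : S.card = j) :
    (univ.filter fun T : KV n (j+1) => S ⊆ T.val).card = n - j := by
  classical
  have h1 : Sᶜ.card = (univ.filter fun T : KV n (j+1) => S ⊆ T.val).card := by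
    apply Finset.card_bij (fun x hx => (⟨insert x S, by
      rw [Finset.card_insert_of_notMem (by simpa using hx), hS]⟩ : KV n (j+1)))
    · intro x hx
      exact Finset.mem_filter.mpr ⟨mem_univ _, Finset.subset_insert _ _⟩
    · intro x hx y hy h
      have h' : insert x S = insert y S := congrArg Subtype.val h
      have : x ∈ insert y S := h' ▸ Finset.mem_insert_self x S
      rcases Finset.mem_insert.mp this with h | h
      · exact h
      · exact absurd h (by simpa using hx)
    · intro T hT
      have hsub : S ⊆ T.val := (Finset.mem_filter.mp hT).2
      have hcd : (T.val \ S).card = 1 := by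
        rw [Finset.card_sdiff_of_subset hsub, T.2, hS]; omega
      obtain ⟨x, hx⟩ := Finset.card_eq_one.mp hcd
      have hxT : x ∈ T.val \ S := by rw [hx]; exact Finset.mem_singleton_self x
      have hxS : x ∉ S := (Finset.mem_sdiff.mp hxT).2
      refine ⟨x, by simpa using hxS, ?_⟩
      apply Subtype.ext
      show insert x S = T.val
      apply eq_of_subset_of_card_le
      · exact Finset.insert_subset (Finset.mem_sdiff.mp hxT).1 hsub
      · rw [Finset.card_insert_of_notMem hxS, hS, T.2]
  rw [← h1, Finset.card_compl, Fintype.card_fin, hS]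

theorem descend {j : ℕ} (hj : 1 ≤ j) (hjk : j + 1 ≤ k) (hn : 2*k+1 ≤ n)
    (χ : KV n (j+1) ≃ KV n (j+1))
    (hgood : ∀ T T' : KV n (j+1),
      (T.val ∪ T'.val).card = j+2 ↔ ((χ T).val ∪ (χ T').val).card = j+2) :
    ∃ ψ : KV n j ≃ KV n j,
      (∀ S S' : KV n j, (S.val ∪ S'.val).card = j+1 ↔ ((ψ S).val ∪ (ψ S').val).card = j+1)
      ∧ ∀ (S : KV n j) (T : KV n (j+1)), S.val ⊆ T.val ↔ (ψ S).val ⊆ (χ T).val := by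
  classical
  have hjn : j + 1 ≤ n := by omega
  have hstarcard : ∀ S : KV n j,
      (univ.filter fun T : KV n (j+1) => S.val ⊆ T.val).card = n - j :=
    fun S => star_card hjn S.val S.2
  have key : ∀ S : KV n j, ∃ S' : KV n j,
      ∀ T : KV n (j+1), (S.val ⊆ T.val ↔ S'.val ⊆ (χ T).val) := by
    intro S
    set F : Finset (Finset (Fin n)) :=
      ((univ.filter fun T : KV n (j+1) => S.val ⊆ T.val)).image (fun T => (χ T).val) with hF
    have hvalinj : Function.Injective (fun T : KV n (j+1) => (χ T).val) :=
      fun a b h => χ.injective (Subtype.ext h)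
    have hFcard : F.card = n - j := by
      rw [hF, Finset.card_image_of_injective _ hvalinj, hstarcard]
    have hFsets : ∀ X ∈ F, X.card = j+1 := by
      intro X hX; obtain ⟨T, _, rfl⟩ := Finset.mem_image.mp hX; exact (χ T).2
    have hFpair : ∀ X ∈ F, ∀ Y ∈ F, X ≠ Y → (X ∪ Y).card = (j+1)+1 := by
      intro X hX Y hY hne
      obtain ⟨T, hT, rfl⟩ := Finset.mem_image.mp hX
      obtain ⟨T', hT', rfl⟩ := Finset.mem_image.mp hY
      have hTT' : T ≠ T' := fun e => hne (by rw [e])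
      have hsubT : S.val ⊆ T.val := (Finset.mem_filter.mp hT).2
      have hsubT' : S.val ⊆ T'.val := (Finset.mem_filter.mp hT').2
      have := (hgood T T').mp ?_
      · omega
      have hint : S.val ⊆ T.val ∩ T'.val := Finset.subset_inter hsubT hsubT'
      have h1 : j ≤ (T.val ∩ T'.val).card := by
        have := Finset.card_le_card hint; rw [S.2] at this; exact this
      have h2 : (T.val ∩ T'.val).card ≠ j+1 := by
        intro h
        have he : T.val ∩ T'.val = T.val :=
          eq_of_subset_of_card_le Finset.inter_subset_left (le_of_eq (T.2.trans h.symm))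
        have hsub : T.val ⊆ T'.val := by rw [← he]; exact Finset.inter_subset_right
        exact hTT' (Subtype.ext (eq_of_subset_of_card_le hsub (by rw [T.2, T'.2])))
      have h3 : (T.val ∩ T'.val).card ≤ j+1 := by
        have h4 : T.val ∩ T'.val ⊆ T.val := Finset.inter_subset_left
        have := Finset.card_le_card h4; rw [T.2] at this; exact this
      have h5 := Finset.card_union_add_card_inter T.val T'.val
      rw [T.2, T'.2] at h5
      omega
    have hFbig : (j+1)+2 ≤ F.card := by rw [hFcard]; omega
    obtain ⟨S', hS'card, hS'⟩ := sunflower F hFsets hFpair hFbig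
    have hS'card' : S'.card = j := by simpa using hS'card
    refine ⟨⟨S', hS'card'⟩, ?_⟩
    intro T
    constructor
    · intro hST
      exact hS' (χ T).val
        (Finset.mem_image.mpr ⟨T, Finset.mem_filter.mpr ⟨mem_univ _, hST⟩, rfl⟩)
    · intro hS'T
      have himg : ((univ.filter fun T : KV n (j+1) => S.val ⊆ T.val)).image χ
          = (univ.filter fun T' : KV n (j+1) => S' ⊆ T'.val) := by
        apply Finset.eq_of_subset_of_card_le
        · intro X hX
          obtain ⟨T₀, hT₀, rfl⟩ := Finset.mem_image.mp hX
          exact Finset.mem_filter.mpr ⟨mem_univ _,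
            hS' (χ T₀).val (Finset.mem_image.mpr ⟨T₀, hT₀, rfl⟩)⟩
        · rw [star_card hjn S' hS'card', Finset.card_image_of_injective _ χ.injective,
            hstarcard]
      have hmem : χ T ∈ (univ.filter fun T' : KV n (j+1) => S' ⊆ T'.val) :=
        Finset.mem_filter.mpr ⟨mem_univ _, hS'T⟩
      rw [← himg] at hmem
      obtain ⟨T₀, hT₀, hTeq⟩ := Finset.mem_image.mp hmem
      rw [← χ.injective hTeq]
      exact (Finset.mem_filter.mp hT₀).2
  choose ψ₀ hψ₀ using key
  have hinj : Function.Injective ψ₀ := by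
    intro S S₂ he
    have hiff : ∀ T : KV n (j+1), S.val ⊆ T.val ↔ S₂.val ⊆ T.val := by
      intro T
      rw [hψ₀ S T, he, ← hψ₀ S₂ T]
    have hsub : S₂.val ⊆ S.val := by
      by_contra hc
      obtain ⟨a, haS₂, haS⟩ := Finset.not_subset.mp hc
      have hSa : S.val ⊆ univ.erase a :=
        fun x hx => Finset.mem_erase.mpr ⟨fun e => haS (e ▸ hx), mem_univ x⟩
      obtain ⟨u, hu1, hu2, hu3⟩ := Finset.exists_subsuperset_card_eq (n := j+1) hSa
        (by rw [S.2]; omega) (by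
          rw [Finset.card_erase_of_mem (mem_univ a), Finset.card_univ, Fintype.card_fin]
          omega)
      have : S₂.val ⊆ u := (hiff ⟨u, hu3⟩).mp hu1
      exact (Finset.mem_erase.mp (hu2 (this haS₂))).1 rfl
    exact (Subtype.ext (eq_of_subset_of_card_le hsub (by rw [S.2, S₂.2]))).symm
  set ψ : KV n j ≃ KV n j := Equiv.ofBijective ψ₀ (Finite.injective_iff_bijective.mp hinj)
    with hψdef
  have hψapp : ∀ S, ψ S = ψ₀ S := fun S => rfl
  have hψlink : ∀ (S : KV n j) (T : KV n (j+1)), S.val ⊆ T.val ↔ (ψ S).val ⊆ (χ T).val := by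
    intro S T; rw [hψapp]; exact hψ₀ S T
  refine ⟨ψ, ?_, hψlink⟩
  intro S S'
  constructor
  · intro h
    have hne : S ≠ S' := by
      intro e; subst e
      have := (union_eq_level_iff S S).mpr rfl
      omega
    have h1 : (ψ S).val ⊆ (χ ⟨S.val ∪ S'.val, h⟩).val :=
      (hψlink S ⟨S.val ∪ S'.val, h⟩).mp Finset.subset_union_left
    have h2 : (ψ S').val ⊆ (χ ⟨S.val ∪ S'.val, h⟩).val :=
      (hψlink S' ⟨S.val ∪ S'.val, h⟩).mp Finset.subset_union_right
    have hneψ : ψ S ≠ ψ S' := fun e => hne (ψ.injective e)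
    have hcup : (ψ S).val ∪ (ψ S').val ⊆ (χ ⟨S.val ∪ S'.val, h⟩).val :=
      Finset.union_subset h1 h2
    have hle : ((ψ S).val ∪ (ψ S').val).card ≤ j+1 := by
      have := Finset.card_le_card hcup
      rw [(χ ⟨S.val ∪ S'.val, h⟩).2] at this; exact this
    have hge := lt_union (ψ S) (ψ S') hneψ
    omega
  · intro h
    have hneψ : ψ S ≠ ψ S' := by
      intro e
      rw [e] at h
      have := (union_eq_level_iff (ψ S') (ψ S')).mpr rfl
      omega
    have hne : S ≠ S' := fun e => hneψ (by rw [e])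
    set T : KV n (j+1) := χ.symm ⟨(ψ S).val ∪ (ψ S').val, h⟩ with hTdef
    have hχT : (χ T).val = (ψ S).val ∪ (ψ S').val := by
      rw [hTdef, χ.apply_symm_apply]
    have h1 : S.val ⊆ T.val := (hψlink S T).mpr (by rw [hχT]; exact Finset.subset_union_left)
    have h2 : S'.val ⊆ T.val := (hψlink S' T).mpr (by rw [hχT]; exact Finset.subset_union_right)
    have hcup : S.val ∪ S'.val ⊆ T.val := Finset.union_subset h1 h2
    have hle : (S.val ∪ S'.val).card ≤ j+1 := by
      have := Finset.card_le_card hcup; rw [T.2] at this; exact this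
    have hge := lt_union S S' hne
    omega

theorem chain (hk : 1 ≤ k) (hn : 2*k+1 ≤ n) (g : kneserGraph n k ≃g kneserGraph n k) :
    ∀ m j, j + m = k → 1 ≤ j →
    ∃ χ : KV n j ≃ KV n j,
      (∀ T T' : KV n j, (T.val ∪ T'.val).card = j+1 ↔ ((χ T).val ∪ (χ T').val).card = j+1)
      ∧ ∀ (S : KV n j) (A : KV n k), S.val ⊆ A.val ↔ (χ S).val ⊆ (g A).val := by
  intro m
  induction m with
  | zero =>
    intro j hjm hj
    have hjk : j = k := by omega
    subst hjk
    refine ⟨g.toEquiv, ?_, ?_⟩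
    · intro T T'
      by_cases hk1 : j = 1
      · subst hk1
        constructor
        · intro h2
          have hne : T ≠ T' := by
            intro e; subst e
            have := (union_eq_level_iff T T).mpr rfl; omega
          have hne' : g.toEquiv T ≠ g.toEquiv T' := fun e => hne (g.toEquiv.injective e)
          have h3 := union_le (g.toEquiv T) (g.toEquiv T')
          have h4 := lt_union _ _ hne'
          omega
        · intro h2
          have hne' : g.toEquiv T ≠ g.toEquiv T' := by
            intro e; rw [e] at h2
            have := (union_eq_level_iff (g.toEquiv T') (g.toEquiv T')).mpr rfl
            omega
          have hne : T ≠ T' := fun e => hne' (by rw [e])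
          have h3 := union_le T T'
          have h4 := lt_union _ _ hne
          omega
      · exact good_top (by omega) hn g T T'
    · intro S A
      constructor
      · intro h
        have he : S = A := Subtype.ext (eq_of_subset_of_card_le h (by rw [S.2, A.2]))
        subst he
        exact subset_rfl
      · intro h
        have he : g.toEquiv S = g A := Subtype.ext (eq_of_subset_of_card_le h
          (by rw [(g.toEquiv S).2, (g A).2]))
        have : S = A := g.toEquiv.injective he
        subst this
        exact subset_rfl
  | succ m ih =>
    intro j hjm hj
    obtain ⟨χ, hgood, hlink⟩ := ih (j+1) (by omega) (by omega)
    obtain ⟨ψ, hψgood, hψlink⟩ := descend hj (by omega) hn χ hgood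
    refine ⟨ψ, hψgood, ?_⟩
    intro S A
    constructor
    · intro h
      obtain ⟨T, hT1, hT2, hT3⟩ := Finset.exists_subsuperset_card_eq (n := j+1) h
        (by rw [S.2]; omega) (by rw [A.2]; omega)
      exact ((hψlink S ⟨T, hT3⟩).mp hT1).trans ((hlink ⟨T, hT3⟩ A).mp hT2)
    · intro h
      obtain ⟨T', hT1, hT2, hT3⟩ := Finset.exists_subsuperset_card_eq (n := j+1) h
        (by rw [(ψ S).2]; omega) (by rw [(g A).2]; omega)
      set T : KV n (j+1) := χ.symm ⟨T', hT3⟩ with hTdef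
      have hχT : (χ T).val = T' := by rw [hTdef, χ.apply_symm_apply]
      have e1 : S.val ⊆ T.val := (hψlink S T).mpr (by rw [hχT]; exact hT1)
      have e2 : T.val ⊆ A.val := (hlink T A).mpr (by rw [hχT]; exact hT2)
      exact e1.trans e2

theorem exists_perm (hk : 1 ≤ k) (hn : 2*k+1 ≤ n) (g : kneserGraph n k ≃g kneserGraph n k) :
    ∃ σ : Equiv.Perm (Fin n), ∀ A : KV n k, (g A).val = A.val.image σ := by
  classical
  obtain ⟨χ, _, hlink⟩ := chain hk hn g (k-1) 1 (by omega) le_rfl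
  have hsing : ∀ x : Fin n, ({x} : Finset (Fin n)).card = 1 := fun x => Finset.card_singleton x
  have hex : ∀ S : KV n 1, ∃ y, S.val = {y} := fun S => Finset.card_eq_one.mp S.2
  set σ₀ : Fin n → Fin n := fun x => (hex (χ ⟨{x}, hsing x⟩)).choose with hσ₀
  have hσ₀spec : ∀ x, (χ ⟨{x}, hsing x⟩).val = {σ₀ x} := fun x => (hex _).choose_spec
  have hmem : ∀ (x : Fin n) (A : KV n k), x ∈ A.val ↔ σ₀ x ∈ (g A).val := by
    intro x A
    have h := hlink ⟨{x}, hsing x⟩ A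
    rw [hσ₀spec x] at h
    simpa [Finset.singleton_subset_iff] using h
  have hinj : Function.Injective σ₀ := by
    intro x y hxy
    have h1 : (χ ⟨{x}, hsing x⟩) = (χ ⟨{y}, hsing y⟩) :=
      Subtype.ext (by rw [hσ₀spec, hσ₀spec, hxy])
    have h2 := χ.injective h1
    have h3 : ({x} : Finset (Fin n)) = {y} := congrArg Subtype.val h2
    exact Finset.singleton_injective h3
  refine ⟨Equiv.ofBijective σ₀ (Finite.injective_iff_bijective.mp hinj), ?_⟩
  intro A
  have hsub : A.val.image σ₀ ⊆ (g A).val := by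
    intro y hy
    obtain ⟨x, hx, rfl⟩ := Finset.mem_image.mp hy
    exact (hmem x A).mp hx
  have hcd : (g A).val.card ≤ (A.val.image σ₀).card := by
    rw [Finset.card_image_of_injective _ hinj, A.2, (g A).2]
  exact (eq_of_subset_of_card_le hsub hcd).symm

end Stmt12

namespace Stmt12
open Finset

theorem hn2k_lemma {d k : ℕ} (hk : 1 ≤ k) (hkd : k ≤ d) (hd : 3 ≤ d) :
    2*k+1 ≤ d*(k+1)/2 + 1 := by
  have h4 : 4*k ≤ d*(k+1) := by
    rcases le_or_gt k 3 with h | h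
    · have h3 : 3*(k+1) ≤ d*(k+1) := Nat.mul_le_mul_right _ hd
      omega
    · have h1 : 4 ≤ k+1 := by omega
      have h2 : 4*k ≤ (k+1)*k := Nat.mul_le_mul_right _ h1
      have h3 : k*(k+1) ≤ d*(k+1) := Nat.mul_le_mul_right _ hkd
      have h5 : (k+1)*k = k*(k+1) := Nat.mul_comm _ _
      omega
  have h5 : (4*k)/2 ≤ d*(k+1)/2 := Nat.div_le_div_right h4
  rw [show (4*k)/2 = 2*k by omega] at h5
  omega

theorem lower_bound {d : ℕ} (hk : 1 ≤ k) (hd2 : 2 ≤ d)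
    (hn : n = d*(k+1)/2 + 1) (hn2k : 2*k+1 ≤ n) (S : Finset (KV n k))
    (hdet : IsDeterminingSet (kneserGraph n k) (S : Set (KV n k))) :
    d ≤ S.card := by
  classical
  by_contra hc
  push_neg at hc
  set m := S.card with hm
  set t : Fin n → Finset (KV n k) := fun x => S.filter (fun A => x ∈ A.val) with ht
  have htinj : Function.Injective t := by
    intro x y hxy
    by_contra hne
    set σ := Equiv.swap x y with hσ
    have hfix : ∀ A ∈ S, (indAuto n k σ) A = A := by
      intro A hA
      apply Subtype.ext
      show A.val.image σ = A.val
      have hxy' : x ∈ A.val ↔ y ∈ A.val := by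
        constructor <;> intro hmem
        · have h1 : A ∈ t x := Finset.mem_filter.mpr ⟨hA, hmem⟩
          rw [hxy] at h1; exact (Finset.mem_filter.mp h1).2
        · have h1 : A ∈ t y := Finset.mem_filter.mpr ⟨hA, hmem⟩
          rw [← hxy] at h1; exact (Finset.mem_filter.mp h1).2
      have hclosed : A.val.image σ ⊆ A.val := by
        intro z hz
        obtain ⟨w, hw, rfl⟩ := Finset.mem_image.mp hz
        rcases eq_or_ne w x with rfl | hwx
        · rw [hσ, Equiv.swap_apply_left]; exact hxy'.mp hw
        · rcases eq_or_ne w y with rfl | hwy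
          · rw [hσ, Equiv.swap_apply_right]; exact hxy'.mpr hw
          · rw [hσ, Equiv.swap_apply_of_ne_of_ne hwx hwy]; exact hw
      exact eq_of_subset_of_card_le hclosed
        (le_of_eq (Finset.card_image_of_injective _ σ.injective).symm)
    have hagree : ∀ v ∈ (S : Set (KV n k)), (indAuto n k σ) v = (SimpleGraph.Iso.refl (G := kneserGraph n k)) v :=
      fun v hv => hfix v hv
    have heq := hdet (indAuto n k σ) (SimpleGraph.Iso.refl (G := kneserGraph n k)) hagree
    -- find a moved vertex
    have hxW : ({x} : Finset (Fin n)) ⊆ univ.erase y :=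
      Finset.singleton_subset_iff.mpr (Finset.mem_erase.mpr ⟨hne, mem_univ x⟩)
    obtain ⟨W, hW1, hW2, hW3⟩ := Finset.exists_subsuperset_card_eq (n := k) hxW
      (by simp; omega) (by
        rw [Finset.card_erase_of_mem (mem_univ y), Finset.card_univ, Fintype.card_fin]
        omega)
    have hWx : x ∈ W := hW1 (Finset.mem_singleton_self x)
    have hWy : y ∉ W := fun hy => (Finset.mem_erase.mp (hW2 hy)).1 rfl
    have hmoved : (indAuto n k σ) ⟨W, hW3⟩ = ⟨W, hW3⟩ := by rw [heq]; rfl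
    have : W.image σ = W := congrArg Subtype.val hmoved
    have hyW : y ∈ W.image σ := Finset.mem_image.mpr ⟨x, hWx, by rw [hσ, Equiv.swap_apply_left]⟩
    rw [this] at hyW
    exact hWy hyW
  have hdouble : ∑ x : Fin n, (t x).card = m * k := by
    calc ∑ x : Fin n, (t x).card
        = ∑ x : Fin n, ∑ A ∈ S, (if x ∈ A.val then 1 else 0) := by
          refine Finset.sum_congr rfl fun x _ => ?_
          rw [ht]; rw [Finset.card_filter]
      _ = ∑ A ∈ S, ∑ x : Fin n, (if x ∈ A.val then 1 else 0) := Finset.sum_comm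
      _ = ∑ A ∈ S, (A.val).card := by
          refine Finset.sum_congr rfl fun A _ => ?_
          rw [← Finset.card_filter]
          congr 1
          simp
      _ = ∑ _A ∈ S, k := Finset.sum_congr rfl fun A _ => A.2
      _ = m * k := by rw [Finset.sum_const, smul_eq_mul]
  set U0 := univ.filter (fun x : Fin n => (t x).card = 0) with hU0def
  set U1 := univ.filter (fun x : Fin n => (t x).card = 1) with hU1def
  set U2 := univ.filter (fun x : Fin n => 2 ≤ (t x).card) with hU2def
  have hd01 : Disjoint U0 U1 := by
    rw [Finset.disjoint_left]; intro a h0 h1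
    have := (Finset.mem_filter.mp h0).2; have := (Finset.mem_filter.mp h1).2; omega
  have hd02 : Disjoint (U0 ∪ U1) U2 := by
    rw [Finset.disjoint_left]; intro a h0 h2
    have h2' := (Finset.mem_filter.mp h2).2
    rcases Finset.mem_union.mp h0 with h | h
    · have := (Finset.mem_filter.mp h).2; omega
    · have := (Finset.mem_filter.mp h).2; omega
  have hcover : U0 ∪ U1 ∪ U2 = univ := by
    ext a
    simp only [Finset.mem_union, hU0def, hU1def, hU2def, Finset.mem_filter, mem_univ,
      true_and, iff_true]
    omega
  have hpart : U0.card + U1.card + U2.card = n := by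
    have h1 := Finset.card_union_of_disjoint hd02
    have h2 := Finset.card_union_of_disjoint hd01
    rw [hcover] at h1
    rw [Finset.card_univ, Fintype.card_fin] at h1
    omega
  have hU0card : U0.card ≤ 1 := by
    apply Finset.card_le_one.mpr
    intro a ha b hb
    have ha' := (Finset.mem_filter.mp ha).2
    have hb' := (Finset.mem_filter.mp hb).2
    apply htinj
    rw [Finset.card_eq_zero.mp ha', Finset.card_eq_zero.mp hb']
  have hU1card : U1.card ≤ m := by
    have hex : ∀ x ∈ U1, ∃ A, t x = {A} :=
      fun x hx => Finset.card_eq_one.mp (Finset.mem_filter.mp hx).2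
    choose f hf using hex
    obtain ⟨W0, _, hW0⟩ := Finset.exists_subset_card_eq (s := (univ : Finset (Fin n))) (n := k)
      (by rw [Finset.card_univ, Fintype.card_fin]; omega)
    have : Nonempty (KV n k) := ⟨⟨W0, hW0⟩⟩
    calc U1.card ≤ S.card := by
          apply Finset.card_le_card_of_injOn (fun x => if hx : x ∈ U1 then f x hx else Classical.arbitrary _)
          · intro a ha
            simp only [dif_pos ha]
            have : f a ha ∈ t a := by rw [hf a ha]; exact Finset.mem_singleton_self _
            simpa [dif_pos (Finset.mem_coe.mp ha)] using (Finset.mem_filter.mp this).1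
          · intro a ha b hb hab
            simp only [Finset.mem_coe] at ha hb
            simp only [dif_pos ha, dif_pos hb] at hab
            apply htinj
            rw [hf a ha, hf b hb, hab]
      _ = m := rfl
  have hsum_lb : U1.card + 2 * U2.card ≤ m * k := by
    rw [← hdouble]
    have e1 : ∑ x ∈ U1, (t x).card = U1.card := by
      rw [Finset.sum_congr rfl (fun x hx => (Finset.mem_filter.mp hx).2), Finset.sum_const,
        smul_eq_mul, Nat.mul_one]
    have e2 : 2 * U2.card ≤ ∑ x ∈ U2, (t x).card := by
      have e2' := Finset.card_nsmul_le_sum U2 (fun x => (t x).card) 2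
        (fun x hx => (Finset.mem_filter.mp hx).2)
      simp only [smul_eq_mul] at e2'
      omega
    have e3 : ∑ x ∈ U1 ∪ U2, (t x).card ≤ ∑ x : Fin n, (t x).card :=
      Finset.sum_le_sum_of_subset (Finset.subset_univ _)
    have hd12 : Disjoint U1 U2 := by
      rw [Finset.disjoint_left]; intro a h1 h2
      have := (Finset.mem_filter.mp h1).2; have := (Finset.mem_filter.mp h2).2; omega
    rw [Finset.sum_union hd12] at e3
    omega
  -- final arithmetic
  have hdkn : 2*n ≥ d*(k+1) + 1 := by
    have h1 := Nat.div_add_mod (d*(k+1)) 2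
    have h2 : d*(k+1) % 2 < 2 := Nat.mod_lt _ (by omega)
    omega
  obtain ⟨e, he⟩ : ∃ e, d = m + 1 + e := ⟨d - m - 1, by omega⟩
  have hexp : d*(k+1) = m*k + m + e*k + e + k + 1 := by subst he; ring
  have hfin : 2*n ≤ 2 + m + m*k := by omega
  omega
end Stmt12

namespace Stmt12
open Finset


theorem pair_eq_iff {α : Type*} [DecidableEq α] {a b c e : α} :
    ({a,b} : Finset α) = {c,e} ↔ (a=c ∧ b=e) ∨ (a=e ∧ b=c) := by
  rw [← Finset.coe_inj]
  simp only [Finset.coe_insert, Finset.coe_singleton]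
  exact Set.pair_eq_pair_iff

section PartB
variable {d : ℕ} [NeZero d]
open Fin.NatCast

theorem cast_inj' {a b : ℕ} (ha : a < d) (hb : b < d) : (a : Fin d) = (b : Fin d) ↔ a = b := by
  constructor
  · intro h
    have := congrArg Fin.val h
    rwa [Fin.val_cast_of_lt ha, Fin.val_cast_of_lt hb] at this
  · intro h; rw [h]

theorem cast_ne_zero' {a : ℕ} (h0 : 0 < a) (hd : a < d) : (a : Fin d) ≠ 0 := by
  intro h
  have := congrArg Fin.val h
  rw [Fin.val_cast_of_lt hd, Fin.val_zero] at this
  omega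

theorem val_add_cast (v : Fin d) {a : ℕ} (ha : a < d) :
    (v + (a : Fin d)).val = if v.val + a < d then v.val + a else v.val + a - d := by
  rw [Fin.add_def, Fin.val_cast_of_lt ha]
  show (v.val + a) % d = _
  split
  · exact Nat.mod_eq_of_lt ‹_›
  · have h1 : d ≤ v.val + a := by omega
    have h2 : v.val + a - d < d := by have := v.2; omega
    rw [Nat.mod_eq_sub_mod h1, Nat.mod_eq_of_lt h2]

/-- cycle family with gap g -/
def cyc (d g : ℕ) [NeZero d] : Finset (Finset (Fin d)) :=
  univ.image (fun v : Fin d => {v, v + (g : ℕ)})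

theorem mem_cyc {g : ℕ} {X : Finset (Fin d)} :
    X ∈ cyc d g ↔ ∃ v : Fin d, {v, v + (g:ℕ)} = X := by
  simp [cyc]

theorem cyc_mem_card {g : ℕ} (hg : (g : Fin d) ≠ 0) {X : Finset (Fin d)}
    (hX : X ∈ cyc d g) : X.card = 2 := by
  obtain ⟨v, rfl⟩ := mem_cyc.mp hX
  rw [Finset.card_insert_of_notMem (by
    simp only [Finset.mem_singleton]
    intro h
    exact hg (by rwa [left_eq_add] at h)), Finset.card_singleton]

theorem cyc_card {g : ℕ} (hg2 : (g : Fin d) + (g : Fin d) ≠ 0) : (cyc d g).card = d := by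
  rw [cyc, Finset.card_image_of_injective _ ?_, Finset.card_univ, Fintype.card_fin]
  intro v w h
  rcases pair_eq_iff.mp h with ⟨h1, _⟩ | ⟨h1, h2⟩
  · exact h1
  · exfalso
    apply hg2
    have h3 : w + ((g:Fin d) + (g:ℕ)) = w := by rw [← add_assoc, ← h1, h2]
    exact add_eq_left.mp h3

theorem cyc_filter_card {g : ℕ} (i : Fin d) (hg : (g : Fin d) ≠ 0)
    (hg2 : (g : Fin d) + (g : Fin d) ≠ 0) :
    ((cyc d g).filter (fun X => i ∈ X)).card = 2 := by
  have heq : (cyc d g).filter (fun X => i ∈ X)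
      = {({i, i + (g:ℕ)} : Finset (Fin d)), {i - (g:ℕ), i}} := by
    ext X
    simp only [Finset.mem_filter, Finset.mem_insert, Finset.mem_singleton]
    constructor
    · rintro ⟨hX, hiX⟩
      obtain ⟨v, rfl⟩ := mem_cyc.mp hX
      rcases Finset.mem_insert.mp hiX with h | h
      · subst h; left; rfl
      · rw [Finset.mem_singleton] at h
        right
        have hv : v = i - (g:ℕ) := eq_sub_iff_add_eq.mpr h.symm
        subst hv
        rw [sub_add_cancel]
    · rintro (rfl | rfl)
      · exact ⟨mem_cyc.mpr ⟨i, rfl⟩, Finset.mem_insert_self _ _⟩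
      · refine ⟨mem_cyc.mpr ⟨i - (g:ℕ), by rw [sub_add_cancel]⟩, ?_⟩
        exact Finset.mem_insert_of_mem (Finset.mem_singleton_self i)
  rw [heq]
  rw [Finset.card_insert_of_notMem, Finset.card_singleton]
  simp only [Finset.mem_singleton]
  intro h
  rcases pair_eq_iff.mp h with ⟨h1, _⟩ | ⟨_, h2⟩
  · exact hg (sub_eq_self.mp h1.symm)
  · apply hg2
    have h3 : i + ((g:Fin d) + (g:ℕ)) = i := by
      rw [← add_assoc, h2, sub_add_cancel]
    exact add_eq_left.mp h3

theorem cyc_disjoint {g g' : ℕ} (hne : (g : Fin d) ≠ (g' : Fin d))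
    (hsum : (g : Fin d) + (g' : Fin d) ≠ 0) :
    Disjoint (cyc d g) (cyc d g') := by
  rw [Finset.disjoint_left]
  intro X hX hX'
  obtain ⟨v, hv⟩ := mem_cyc.mp hX
  obtain ⟨w, hw⟩ := mem_cyc.mp hX'
  rw [← hw] at hv
  rcases pair_eq_iff.mp hv with ⟨h1, h2⟩ | ⟨h1, h2⟩
  · subst h1; exact hne (add_left_cancel h2)
  · apply hsum
    have h4 : w + ((g':Fin d) + (g:Fin d)) = w := by rw [← add_assoc, ← h1, h2]
    have := add_eq_left.mp h4
    rwa [add_comm] at this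

/-- singleton family -/
def sgl (V : Finset (Fin d)) : Finset (Finset (Fin d)) :=
  V.image (fun i => ({i} : Finset (Fin d)))

theorem sgl_card (V : Finset (Fin d)) : (sgl V).card = V.card :=
  Finset.card_image_of_injective _ (fun a b h => Finset.singleton_injective h)

theorem sgl_filter_card (V : Finset (Fin d)) (i : Fin d) :
    ((sgl V).filter (fun X => i ∈ X)).card = if i ∈ V then 1 else 0 := by
  have heq : (sgl V).filter (fun X => i ∈ X)
      = if i ∈ V then {({i} : Finset (Fin d))} else ∅ := by
    ext X
    simp only [Finset.mem_filter, sgl, Finset.mem_image]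
    constructor
    · rintro ⟨⟨j, hj, rfl⟩, hiX⟩
      rw [Finset.mem_singleton] at hiX
      subst hiX
      rw [if_pos hj]
      exact Finset.mem_singleton_self _
    · intro hX
      by_cases hiV : i ∈ V
      · rw [if_pos hiV, Finset.mem_singleton] at hX
        subst hX
        exact ⟨⟨i, hiV, rfl⟩, Finset.mem_singleton_self _⟩
      · rw [if_neg hiV] at hX
        exact absurd hX (Finset.notMem_empty _)
  rw [heq]
  split <;> simp

/-- matching-type family along indices -/
def mat (d h : ℕ) [NeZero d] (idx : Finset (Fin d)) : Finset (Finset (Fin d)) :=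
  idx.image (fun v : Fin d => {v, v + (h : ℕ)})

theorem mem_mat {h : ℕ} {idx : Finset (Fin d)} {X : Finset (Fin d)} :
    X ∈ mat d h idx ↔ ∃ v ∈ idx, {v, v + (h:ℕ)} = X := by
  simp [mat]

theorem mat_mem_card {h : ℕ} (hh : (h : Fin d) ≠ 0) {idx : Finset (Fin d)} {X : Finset (Fin d)}
    (hX : X ∈ mat d h idx) : X.card = 2 := by
  obtain ⟨v, _, rfl⟩ := mem_mat.mp hX
  rw [Finset.card_insert_of_notMem (by
    simp only [Finset.mem_singleton]
    intro h1
    exact hh (by rwa [left_eq_add] at h1)), Finset.card_singleton]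

theorem mat_cyc_disjoint {g h : ℕ} {idx : Finset (Fin d)}
    (hne : (g : Fin d) ≠ (h : Fin d)) (hsum : (g : Fin d) + (h : Fin d) ≠ 0) :
    Disjoint (cyc d g) (mat d h idx) := by
  rw [Finset.disjoint_left]
  intro X hX hX'
  obtain ⟨v, hv⟩ := mem_cyc.mp hX
  obtain ⟨w, _, hw⟩ := mem_mat.mp hX'
  rw [← hw] at hv
  rcases pair_eq_iff.mp hv with ⟨h1, h2⟩ | ⟨h1, h2⟩
  · subst h1; exact hne (add_left_cancel h2)
  · apply hsum
    have h4 : w + ((h:Fin d) + (g:Fin d)) = w := by rw [← add_assoc, ← h1, h2]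
    have := add_eq_left.mp h4
    rwa [add_comm] at this

theorem filter_val_lt_card {c : ℕ} (hc : c ≤ d) :
    ((univ : Finset (Fin d)).filter (fun v => v.val < c)).card = c := by
  have heq : (univ : Finset (Fin d)).filter (fun v => v.val < c)
      = (Finset.range c).image (Nat.cast : ℕ → Fin d) := by
    ext v
    simp only [Finset.mem_filter, Finset.mem_univ, true_and, Finset.mem_image,
      Finset.mem_range]
    constructor
    · intro h
      exact ⟨v.val, h, Fin.cast_val_eq_self v⟩
    · rintro ⟨m, hm, rfl⟩
      rw [Fin.val_cast_of_lt (by omega)]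
      exact hm
  rw [heq, Finset.card_image_of_injOn, Finset.card_range]
  intro a ha b hb hab
  simp only [Finset.coe_range, Set.mem_Iio] at ha hb
  exact (cast_inj' (by omega) (by omega)).mp hab

theorem circ_pair_disj {t : ℕ} (ht : 2*t < d) :
    ∀ g ∈ Finset.Icc 1 t, ∀ g' ∈ Finset.Icc 1 t, g ≠ g' →
      Disjoint (cyc d g) (cyc d g') := by
  intro g hg g' hg' hne
  rw [Finset.mem_Icc] at hg hg'
  apply cyc_disjoint
  · intro h
    exact hne ((cast_inj' (by omega) (by omega)).mp h)
  · rw [show ((g:Fin d) + (g':Fin d)) = ((g + g' : ℕ) : Fin d) by push_cast; ring]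
    exact cast_ne_zero' (by omega) (by omega)

theorem circ_card {t : ℕ} (ht : 2*t < d) :
    ((Finset.Icc 1 t).biUnion (cyc d ·)).card = t * d := by
  rw [Finset.card_biUnion (circ_pair_disj ht)]
  have hconst : ∀ g ∈ Finset.Icc 1 t, (cyc d g).card = d := by
    intro g hg
    rw [Finset.mem_Icc] at hg
    exact cyc_card (by
      rw [show ((g:Fin d) + (g:Fin d)) = ((g + g : ℕ) : Fin d) by push_cast; ring]
      exact cast_ne_zero' (by omega) (by omega))
  rw [Finset.sum_congr rfl hconst, Finset.sum_const, Nat.card_Icc, smul_eq_mul,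
    Nat.add_sub_cancel]

theorem circ_filter_card {t : ℕ} (ht : 2*t < d) (i : Fin d) :
    (((Finset.Icc 1 t).biUnion (cyc d ·)).filter (fun X => i ∈ X)).card = 2*t := by
  rw [Finset.filter_biUnion]
  rw [Finset.card_biUnion (fun g hg g' hg' hne =>
    Finset.disjoint_filter_filter (circ_pair_disj ht g hg g' hg' hne))]
  have hconst : ∀ g ∈ Finset.Icc 1 t, ((cyc d g).filter (fun X => i ∈ X)).card = 2 := by
    intro g hg
    rw [Finset.mem_Icc] at hg
    refine cyc_filter_card i (cast_ne_zero' (by omega) (by omega)) ?_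
    rw [show ((g:Fin d) + (g:Fin d)) = ((g + g : ℕ) : Fin d) by push_cast; ring]
    exact cast_ne_zero' (by omega) (by omega)
  rw [Finset.sum_congr rfl hconst, Finset.sum_const, Nat.card_Icc, smul_eq_mul]
  omega

theorem circ_mem_card {t : ℕ} (ht : 2*t < d) {X : Finset (Fin d)}
    (hX : X ∈ (Finset.Icc 1 t).biUnion (cyc d ·)) : X.card = 2 := by
  obtain ⟨g, hg, hXg⟩ := Finset.mem_biUnion.mp hX
  rw [Finset.mem_Icc] at hg
  exact cyc_mem_card (cast_ne_zero' (by omega) (by omega)) hXg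

theorem val_sub_cast (v : Fin d) {a : ℕ} (ha : a < d) :
    (v - (a : Fin d)).val = if a ≤ v.val then v.val - a else v.val + d - a := by
  rw [Fin.sub_def, Fin.val_cast_of_lt ha]
  show (d - a + v.val) % d = _
  have hv := v.2
  split
  · have h1 : d ≤ d - a + v.val := by omega
    rw [Nat.mod_eq_sub_mod h1, Nat.mod_eq_of_lt (by omega)]
    omega
  · rw [Nat.mod_eq_of_lt (by omega)]
    omega

theorem mat_filter_even (hdev : d % 2 = 0) (hd : 2 ≤ d) (i : Fin d) :
    ((mat d (d/2) ((univ : Finset (Fin d)).filter (fun v => v.val < d/2))).filter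
      (fun X => i ∈ X)).card = 1 := by
  set h := d/2 with hh
  have hh_lt : h < d := by omega
  have hh_pos : 0 < h := by omega
  have h2h : ((h:ℕ) : Fin d) + ((h:ℕ) : Fin d) = 0 := by
    rw [show ((h:ℕ):Fin d) + ((h:ℕ):Fin d) = ((h + h : ℕ) : Fin d) by push_cast; ring,
      show h + h = d by omega, Fin.natCast_self]
  have heq : (mat d h ((univ : Finset (Fin d)).filter (fun v => v.val < h))).filter
      (fun X => i ∈ X) = {({i, i + (h:ℕ)} : Finset (Fin d))} := by
    ext X
    simp only [Finset.mem_filter, Finset.mem_singleton]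
    constructor
    · rintro ⟨hX, hiX⟩
      obtain ⟨v, hvidx, rfl⟩ := mem_mat.mp hX
      rcases Finset.mem_insert.mp hiX with h1 | h1
      · subst h1; rfl
      · rw [Finset.mem_singleton] at h1
        have hv : v = i + (h:ℕ) := by
          rw [h1, add_assoc, h2h, add_zero]
        subst hv
        rw [add_assoc, h2h, add_zero]
        exact Finset.pair_comm _ _
    · rintro rfl
      by_cases hiv : i.val < h
      · exact ⟨mem_mat.mpr ⟨i, Finset.mem_filter.mpr ⟨mem_univ _, hiv⟩, rfl⟩,
          Finset.mem_insert_self _ _⟩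
      · refine ⟨mem_mat.mpr ⟨i + (h:ℕ), Finset.mem_filter.mpr ⟨mem_univ _, ?_⟩, ?_⟩,
          Finset.mem_insert_self _ _⟩
        · rw [val_add_cast i hh_lt, if_neg (by have := i.2; omega)]
          have := i.2; omega
        · rw [add_assoc, h2h, add_zero]
          exact Finset.pair_comm _ _
  rw [heq, Finset.card_singleton]

theorem mat_filter_odd (hdodd : d % 2 = 1) (hd : 3 ≤ d) (i : Fin d) :
    ((mat d ((d-1)/2) ((univ : Finset (Fin d)).filter
        (fun v => v.val < (d-1)/2 + 1))).filter (fun X => i ∈ X)).card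
      = if i = (((d-1)/2 : ℕ) : Fin d) then 2 else 1 := by
  set h := (d-1)/2 with hh
  have hh_lt : h < d := by omega
  have hh_pos : 0 < h := by omega
  have hval : (((h:ℕ)) : Fin d).val = h := Fin.val_cast_of_lt hh_lt
  have h2h : ((h:ℕ) : Fin d) + ((h:ℕ) : Fin d) = ((d - 1 : ℕ) : Fin d) := by
    rw [show ((h:ℕ):Fin d) + ((h:ℕ):Fin d) = ((h + h : ℕ) : Fin d) by push_cast; ring,
      show h + h = d - 1 by omega]
  have h2hne : ((h:ℕ) : Fin d) + ((h:ℕ) : Fin d) ≠ 0 := by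
    rw [h2h]; exact cast_ne_zero' (by omega) (by omega)
  have hieq : i = ((h:ℕ) : Fin d) ↔ i.val = h := by
    constructor
    · intro he; rw [he, hval]
    · intro he; apply Fin.ext; rw [hval, he]
  -- membership characterization
  have hmemchar : ∀ X, (X ∈ mat d h ((univ : Finset (Fin d)).filter
      (fun v => v.val < h + 1)) ∧ i ∈ X) ↔
      ((i.val ≤ h ∧ X = {i, i + (h:ℕ)}) ∨ ((i - (h:ℕ)).val ≤ h ∧ X = {i - (h:ℕ), i})) := by
    intro X
    constructor
    · rintro ⟨hX, hiX⟩
      obtain ⟨v, hvidx, rfl⟩ := mem_mat.mp hX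
      have hvlt : v.val < h + 1 := (Finset.mem_filter.mp hvidx).2
      rcases Finset.mem_insert.mp hiX with h1 | h1
      · subst h1; exact Or.inl ⟨by omega, rfl⟩
      · rw [Finset.mem_singleton] at h1
        have hv : v = i - (h:ℕ) := eq_sub_iff_add_eq.mpr h1.symm
        subst hv
        refine Or.inr ⟨by omega, ?_⟩
        rw [sub_add_cancel]
    · rintro (⟨hle, rfl⟩ | ⟨hle, rfl⟩)
      · exact ⟨mem_mat.mpr ⟨i, Finset.mem_filter.mpr ⟨mem_univ _, by omega⟩, rfl⟩,
          Finset.mem_insert_self _ _⟩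
      · refine ⟨mem_mat.mpr ⟨i - (h:ℕ), Finset.mem_filter.mpr ⟨mem_univ _, by omega⟩, ?_⟩,
          Finset.mem_insert_of_mem (Finset.mem_singleton_self i)⟩
        rw [sub_add_cancel]
  have hsubval : (i - (h:ℕ)).val = if h ≤ i.val then i.val - h else i.val + d - h :=
    val_sub_cast i hh_lt
  rcases lt_trichotomy i.val h with hcase | hcase | hcase
  · -- only v = i branch
    rw [if_neg (fun he => by rw [hieq] at he; omega)]
    have heq2 : (mat d h ((univ : Finset (Fin d)).filter (fun v => v.val < h + 1))).filter
        (fun X => i ∈ X) = {({i, i + (h:ℕ)} : Finset (Fin d))} := by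
      ext X
      rw [Finset.mem_filter, hmemchar X, Finset.mem_singleton]
      constructor
      · rintro (⟨_, rfl⟩ | ⟨hle, rfl⟩)
        · rfl
        · exfalso
          rw [hsubval, if_neg (by omega)] at hle
          omega
      · rintro rfl; exact Or.inl ⟨by omega, rfl⟩
    rw [heq2, Finset.card_singleton]
  · -- i = hf : two edges
    rw [if_pos (hieq.mpr hcase)]
    have heq2 : (mat d h ((univ : Finset (Fin d)).filter (fun v => v.val < h + 1))).filter
        (fun X => i ∈ X)
        = {({i, i + (h:ℕ)} : Finset (Fin d)), ({i - (h:ℕ), i} : Finset (Fin d))} := by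
      ext X
      rw [Finset.mem_filter, hmemchar X, Finset.mem_insert, Finset.mem_singleton]
      constructor
      · rintro (⟨_, rfl⟩ | ⟨_, rfl⟩)
        · exact Or.inl rfl
        · exact Or.inr rfl
      · rintro (rfl | rfl)
        · exact Or.inl ⟨by omega, rfl⟩
        · refine Or.inr ⟨?_, rfl⟩
          rw [hsubval, if_pos (by omega)]
          omega
    rw [heq2]
    rw [Finset.card_insert_of_notMem, Finset.card_singleton]
    simp only [Finset.mem_singleton]
    intro hpair
    rcases pair_eq_iff.mp hpair with ⟨h1, h2⟩ | ⟨_, h2⟩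
    · exact cast_ne_zero' hh_pos hh_lt (add_eq_left.mp h2)
    · apply h2hne
      have h3 : i + (((h:ℕ):Fin d) + ((h:ℕ):Fin d)) = i := by
        rw [← add_assoc, h2, sub_add_cancel]
      exact add_eq_left.mp h3
  · -- only v = i - h branch
    rw [if_neg (fun he => by rw [hieq] at he; omega)]
    have hivd := i.2
    have heq2 : (mat d h ((univ : Finset (Fin d)).filter (fun v => v.val < h + 1))).filter
        (fun X => i ∈ X) = {({i - (h:ℕ), i} : Finset (Fin d))} := by
      ext X
      rw [Finset.mem_filter, hmemchar X, Finset.mem_singleton]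
      constructor
      · rintro (⟨hle, rfl⟩ | ⟨_, rfl⟩)
        · omega
        · rfl
      · rintro rfl
        refine Or.inr ⟨?_, rfl⟩
        rw [hsubval, if_pos (by omega)]
        omega
    rw [heq2, Finset.card_singleton]

theorem mat_card_even (hdev : d % 2 = 0) (hd : 2 ≤ d) :
    (mat d (d/2) ((univ : Finset (Fin d)).filter (fun v => v.val < d/2))).card = d/2 := by
  rw [mat, Finset.card_image_of_injOn, filter_val_lt_card (by omega)]
  intro v hv w hw hvw
  simp only [Finset.coe_filter, Set.mem_setOf_eq] at hv hw
  rcases pair_eq_iff.mp hvw with ⟨h1, _⟩ | ⟨h1, h2⟩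
  · exact h1
  · exfalso
    have hwval : (w + ((d/2 : ℕ) : Fin d)).val = w.val + d/2 := by
      rw [val_add_cast w (by omega), if_pos (by omega)]
    have := congrArg Fin.val h1
    rw [hwval] at this
    omega

theorem mat_card_odd (hdodd : d % 2 = 1) (hd : 3 ≤ d) :
    (mat d ((d-1)/2) ((univ : Finset (Fin d)).filter
      (fun v => v.val < (d-1)/2 + 1))).card = (d-1)/2 + 1 := by
  set h := (d-1)/2 with hh
  have h2hne : ((h:ℕ) : Fin d) + ((h:ℕ) : Fin d) ≠ 0 := by
    rw [show ((h:ℕ):Fin d) + ((h:ℕ):Fin d) = ((h + h : ℕ) : Fin d) by push_cast; ring,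
      show h + h = d - 1 by omega]
    exact cast_ne_zero' (by omega) (by omega)
  rw [mat, Finset.card_image_of_injOn, filter_val_lt_card (by omega)]
  intro v hv w hw hvw
  rcases pair_eq_iff.mp hvw with ⟨h1, _⟩ | ⟨h1, h2⟩
  · exact h1
  · exfalso
    apply h2hne
    have h3 : v + (((h:ℕ):Fin d) + ((h:ℕ):Fin d)) = v := by
      rw [← add_assoc, h2, ← h1]
    exact add_eq_left.mp h3

theorem mat_cyc_disj_all {t hh : ℕ} (ht : t < hh) (hsum : t + hh < d) (hh0 : 0 < hh)
    {idx : Finset (Fin d)} :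
    ∀ g ∈ Finset.Icc 1 t, Disjoint (cyc d g) (mat d hh idx) := by
  intro g hg
  rw [Finset.mem_Icc] at hg
  apply mat_cyc_disjoint
  · intro he
    have := (cast_inj' (show g < d by omega) (show hh < d by omega)).mp he
    omega
  · rw [show ((g:Fin d) + (hh:Fin d)) = ((g + hh : ℕ) : Fin d) by push_cast; ring]
    exact cast_ne_zero' (by omega) (by omega)

end PartB

open Fin.NatCast in
theorem exists_traces (d k : ℕ) (hk : 1 ≤ k) (hkd : k ≤ d) (hd : 3 ≤ d) :
    ∃ T : Finset (Finset (Fin d)), T.card = d*(k+1)/2 + 1 ∧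
      (∀ i : Fin d, (T.filter fun tr => i ∈ tr).card = k) ∧
      (∀ i i' : Fin d, i ≠ i' → ∃ tr ∈ T, i ∈ tr ∧ i' ∉ tr) := by
  haveI : NeZero d := ⟨by omega⟩
  classical
  by_cases hko : k % 2 = 1
  · -- k odd
    set t := (k-1)/2 with htdef
    have hk2 : k = 2*t + 1 := by omega
    have ht : 2*t < d := by omega
    set C : Finset (Finset (Fin d)) := (Finset.Icc 1 t).biUnion (cyc d ·) with hC
    set T : Finset (Finset (Fin d)) := insert ∅ (sgl univ ∪ C) with hT
    have hdisj1 : Disjoint (sgl univ) C := by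
      rw [Finset.disjoint_left]
      intro X hX hX'
      obtain ⟨i, _, rfl⟩ := Finset.mem_image.mp hX
      have := circ_mem_card ht hX'
      simp at this
    have hempty : ∅ ∉ sgl univ ∪ C := by
      intro hmem
      rcases Finset.mem_union.mp hmem with hmem | hmem
      · obtain ⟨i, _, hi⟩ := Finset.mem_image.mp hmem
        exact absurd hi (by simp)
      · have := circ_mem_card ht hmem
        simp at this
    refine ⟨T, ?_, ?_, ?_⟩
    · rw [hT, Finset.card_insert_of_notMem hempty, Finset.card_union_of_disjoint hdisj1,
        sgl_card, Finset.card_univ, Fintype.card_fin, circ_card ht]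
      obtain ⟨X, hX⟩ : ∃ X, X = d*(t+1) := ⟨_, rfl⟩
      have hdk : d*(k+1) = 2*X := by rw [hX, hk2]; ring
      have hdiv : d*(k+1)/2 = X := by rw [hdk]; omega
      rw [hdiv, hX]
      ring
    · intro i
      rw [hT, Finset.filter_insert, if_neg (Finset.notMem_empty i), Finset.filter_union,
        Finset.card_union_of_disjoint (Finset.disjoint_filter_filter hdisj1),
        sgl_filter_card, if_pos (Finset.mem_univ i), circ_filter_card ht]
      omega
    · intro i i' hne
      refine ⟨{i}, ?_, Finset.mem_singleton_self i, ?_⟩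
      · rw [hT]
        exact Finset.mem_insert_of_mem (Finset.mem_union_left _
          (Finset.mem_image.mpr ⟨i, Finset.mem_univ i, rfl⟩))
      · rw [Finset.mem_singleton]; exact fun h => hne h.symm
  · -- k even
    have hk2' : 2 ≤ k := by omega
    set t := (k-2)/2 with htdef
    have hk2 : k = 2*t + 2 := by omega
    have ht : 2*t < d := by omega
    set C : Finset (Finset (Fin d)) := (Finset.Icc 1 t).biUnion (cyc d ·) with hC
    by_cases hdo : d % 2 = 0
    · -- d even
      set M : Finset (Finset (Fin d)) :=
        mat d (d/2) ((univ : Finset (Fin d)).filter (fun v => v.val < d/2)) with hM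
      have hhne : ((d/2 : ℕ) : Fin d) ≠ 0 := cast_ne_zero' (by omega) (by omega)
      have hdisjCM : Disjoint C M := by
        rw [hC, Finset.disjoint_biUnion_left]
        exact mat_cyc_disj_all (by omega) (by omega) (by omega)
      have hdisj1 : Disjoint (sgl univ) (C ∪ M) := by
        rw [Finset.disjoint_left]
        intro X hX hX'
        obtain ⟨i, _, rfl⟩ := Finset.mem_image.mp hX
        rcases Finset.mem_union.mp hX' with hX' | hX'
        · have := circ_mem_card ht hX'; simp at this
        · have := mat_mem_card hhne hX'; simp at this
      have hempty : ∅ ∉ sgl univ ∪ (C ∪ M) := by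
        intro hmem
        rcases Finset.mem_union.mp hmem with hmem | hmem
        · obtain ⟨i, _, hi⟩ := Finset.mem_image.mp hmem
          exact absurd hi (by simp)
        · rcases Finset.mem_union.mp hmem with hmem | hmem
          · have := circ_mem_card ht hmem; simp at this
          · have := mat_mem_card hhne hmem; simp at this
      set T : Finset (Finset (Fin d)) := insert ∅ (sgl univ ∪ (C ∪ M)) with hT
      refine ⟨T, ?_, ?_, ?_⟩
      · rw [hT, Finset.card_insert_of_notMem hempty, Finset.card_union_of_disjoint hdisj1,
          Finset.card_union_of_disjoint hdisjCM, sgl_card, Finset.card_univ,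
          Fintype.card_fin, circ_card ht, hM, mat_card_even hdo (by omega)]
        obtain ⟨e, he⟩ : ∃ e, d = 2*e := ⟨d/2, by omega⟩
        obtain ⟨X, hX⟩ : ∃ X, X = e*(2*t+3) := ⟨_, rfl⟩
        have hdk : d*(k+1) = 2*X := by rw [hX, he, hk2]; ring
        have hdiv : d*(k+1)/2 = X := by rw [hdk]; omega
        rw [hdiv, hX, he, Nat.mul_div_cancel_left e (by norm_num : (0:ℕ) < 2)]
        ring
      · intro i
        rw [hT, Finset.filter_insert, if_neg (Finset.notMem_empty i), Finset.filter_union,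
          Finset.card_union_of_disjoint (Finset.disjoint_filter_filter hdisj1),
          Finset.filter_union,
          Finset.card_union_of_disjoint (Finset.disjoint_filter_filter hdisjCM),
          sgl_filter_card, if_pos (Finset.mem_univ i), circ_filter_card ht, hM,
          mat_filter_even hdo (by omega)]
        omega
      · intro i i' hne
        refine ⟨{i}, ?_, Finset.mem_singleton_self i, ?_⟩
        · rw [hT]
          exact Finset.mem_insert_of_mem (Finset.mem_union_left _
            (Finset.mem_image.mpr ⟨i, Finset.mem_univ i, rfl⟩))
        · rw [Finset.mem_singleton]; exact fun h => hne h.symm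
    · -- d odd
      have hdo' : d % 2 = 1 := by omega
      set hh := (d-1)/2 with hhdef
      have hh_lt : hh < d := by omega
      have hh_pos : 0 < hh := by omega
      set hf : Fin d := ((hh:ℕ) : Fin d) with hfdef
      set M : Finset (Finset (Fin d)) :=
        mat d hh ((univ : Finset (Fin d)).filter (fun v => v.val < hh + 1)) with hM
      have hhne : ((hh : ℕ) : Fin d) ≠ 0 := cast_ne_zero' hh_pos hh_lt
      have hdisjCM : Disjoint C M := by
        rw [hC, Finset.disjoint_biUnion_left]
        exact mat_cyc_disj_all (by omega) (by omega) (by omega)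
      have hdisj1 : Disjoint (sgl (univ.erase hf)) (C ∪ M) := by
        rw [Finset.disjoint_left]
        intro X hX hX'
        obtain ⟨i, _, rfl⟩ := Finset.mem_image.mp hX
        rcases Finset.mem_union.mp hX' with hX' | hX'
        · have := circ_mem_card ht hX'; simp at this
        · have := mat_mem_card hhne hX'; simp at this
      have hempty : ∅ ∉ sgl (univ.erase hf) ∪ (C ∪ M) := by
        intro hmem
        rcases Finset.mem_union.mp hmem with hmem | hmem
        · obtain ⟨i, _, hi⟩ := Finset.mem_image.mp hmem
          exact absurd hi (by simp)
        · rcases Finset.mem_union.mp hmem with hmem | hmem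
          · have := circ_mem_card ht hmem; simp at this
          · have := mat_mem_card hhne hmem; simp at this
      set T : Finset (Finset (Fin d)) := insert ∅ (sgl (univ.erase hf) ∪ (C ∪ M)) with hT
      refine ⟨T, ?_, ?_, ?_⟩
      · rw [hT, Finset.card_insert_of_notMem hempty, Finset.card_union_of_disjoint hdisj1,
          Finset.card_union_of_disjoint hdisjCM, sgl_card,
          Finset.card_erase_of_mem (Finset.mem_univ hf), Finset.card_univ,
          Fintype.card_fin, circ_card ht, hM, mat_card_odd hdo' (by omega)]
        obtain ⟨X, hX⟩ : ∃ X, X = hh*(2*t+3)+t+1 := ⟨_, rfl⟩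
        have hdk : d*(k+1) = 2*X + 1 := by
          rw [hX, show d = 2*hh+1 by omega, hk2]; ring
        have hdiv : d*(k+1)/2 = X := by rw [hdk]; omega
        rw [hdiv, hX, show d - 1 = 2*hh by omega, show d = 2*hh+1 by omega]
        have h9 : 2*hh/2 = hh := by omega
        rw [h9]
        ring
      · intro i
        rw [hT, Finset.filter_insert, if_neg (Finset.notMem_empty i), Finset.filter_union,
          Finset.card_union_of_disjoint (Finset.disjoint_filter_filter hdisj1),
          Finset.filter_union,
          Finset.card_union_of_disjoint (Finset.disjoint_filter_filter hdisjCM),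
          sgl_filter_card, circ_filter_card ht, hM, mat_filter_odd hdo' (by omega)]
        by_cases hi : i = hf
        · rw [if_neg (by rw [hi]; simp), if_pos (by rw [hi, hfdef])]
          omega
        · rw [if_pos (Finset.mem_erase.mpr ⟨hi, Finset.mem_univ i⟩),
            if_neg (by rw [← hfdef]; exact hi)]
          omega
      · intro i i' hne
        by_cases hi : i = hf
        · subst hi
          by_cases hi' : i' = 0
          · refine ⟨{hf, hf + (hh:ℕ)}, ?_, Finset.mem_insert_self _ _, ?_⟩
            · rw [hT]
              refine Finset.mem_insert_of_mem (Finset.mem_union_right _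
                (Finset.mem_union_right _ (mem_mat.mpr ⟨hf, ?_, rfl⟩)))
              refine Finset.mem_filter.mpr ⟨Finset.mem_univ _, ?_⟩
              rw [hfdef, Fin.val_cast_of_lt hh_lt]
              omega
            · subst hi'
              intro hmem
              rcases Finset.mem_insert.mp hmem with h0 | h0
              · exact hhne h0.symm
              · rw [Finset.mem_singleton] at h0
                have : ((hh:ℕ):Fin d) + ((hh:ℕ):Fin d) = 0 := by rw [← hfdef, ← h0]
                rw [show ((hh:ℕ):Fin d) + ((hh:ℕ):Fin d) = ((hh + hh : ℕ) : Fin d) by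
                  push_cast; ring, show hh + hh = d - 1 by omega] at this
                exact cast_ne_zero' (by omega) (by omega) this
          · refine ⟨{(0 : Fin d), (0:Fin d) + (hh:ℕ)}, ?_, ?_, ?_⟩
            · rw [hT]
              refine Finset.mem_insert_of_mem (Finset.mem_union_right _
                (Finset.mem_union_right _ (mem_mat.mpr ⟨0, ?_, rfl⟩)))
              refine Finset.mem_filter.mpr ⟨Finset.mem_univ _, ?_⟩
              simp only [Fin.val_zero]
              omega
            · rw [zero_add]
              exact Finset.mem_insert_of_mem (Finset.mem_singleton_self _)
            · intro hmem
              rcases Finset.mem_insert.mp hmem with h0 | h0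
              · exact hi' h0
              · rw [Finset.mem_singleton, zero_add, ← hfdef] at h0
                exact hne h0.symm
        · refine ⟨{i}, ?_, Finset.mem_singleton_self i, ?_⟩
          · rw [hT]
            exact Finset.mem_insert_of_mem (Finset.mem_union_left _
              (Finset.mem_image.mpr ⟨i, Finset.mem_erase.mpr ⟨hi, Finset.mem_univ i⟩, rfl⟩))
          · rw [Finset.mem_singleton]; exact fun h => hne h.symm


theorem upper {d : ℕ} (hk : 1 ≤ k) (hn2k : 2*k+1 ≤ n)
    (T : Finset (Finset (Fin d))) (hTcard : T.card = n)
    (hdeg : ∀ i : Fin d, (T.filter fun tr => i ∈ tr).card = k)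
    (hsep : ∀ i i' : Fin d, i ≠ i' → ∃ tr ∈ T, i ∈ tr ∧ i' ∉ tr) :
    ∃ S : Finset (KV n k), S.card = d ∧
      IsDeterminingSet (kneserGraph n k) (S : Set (KV n k)) := by
  classical
  have e : Fin n ≃ {tr // tr ∈ T} := ((T.equivFin).trans (finCongr hTcard)).symm
  set tr : Fin n → Finset (Fin d) := fun x => (e x).val with htr
  have htrinj : Function.Injective tr := fun x y h => e.injective (Subtype.ext h)
  set Ai : Fin d → Finset (Fin n) := fun i => univ.filter (fun x => i ∈ tr x) with hAi
  have hAicard : ∀ i, (Ai i).card = k := by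
    intro i
    rw [← hdeg i]
    apply Finset.card_bij (fun x _ => tr x)
    · intro x hx
      exact Finset.mem_filter.mpr ⟨(e x).2, (Finset.mem_filter.mp hx).2⟩
    · exact fun x _ y _ h => htrinj h
    · intro t0 ht0
      have ht0' := Finset.mem_filter.mp ht0
      refine ⟨e.symm ⟨t0, ht0'.1⟩, ?_, ?_⟩
      · apply Finset.mem_filter.mpr
        refine ⟨mem_univ _, ?_⟩
        show i ∈ (e (e.symm ⟨t0, ht0'.1⟩)).val
        rw [e.apply_symm_apply]
        exact ht0'.2
      · show (e (e.symm ⟨t0, ht0'.1⟩)).val = t0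
        rw [e.apply_symm_apply]
  set SA : Fin d → KV n k := fun i => ⟨Ai i, hAicard i⟩ with hSA
  have hSAinj : Function.Injective SA := by
    intro i i' h
    by_contra hne
    obtain ⟨t0, ht0T, ht0i, ht0i'⟩ := hsep i i' hne
    set x := e.symm ⟨t0, ht0T⟩ with hx
    have htrx : tr x = t0 := by
      show (e (e.symm ⟨t0, ht0T⟩)).val = t0
      rw [e.apply_symm_apply]
    have hx1 : x ∈ Ai i := Finset.mem_filter.mpr ⟨mem_univ _, by rw [htrx]; exact ht0i⟩
    have hx2 : x ∉ Ai i' := by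
      intro hc
      exact ht0i' (by rw [← htrx]; exact (Finset.mem_filter.mp hc).2)
    rw [show Ai i = Ai i' from congrArg Subtype.val h] at hx1
    exact hx2 hx1
  refine ⟨univ.image SA, by
    rw [Finset.card_image_of_injective _ hSAinj, Finset.card_univ, Fintype.card_fin], ?_⟩
  intro g h hagree
  have hfix : ∀ i : Fin d, h.symm (g (SA i)) = SA i := by
    intro i
    have hmem : SA i ∈ ((univ.image SA : Finset (KV n k)) : Set (KV n k)) := by
      simp only [Finset.coe_image, Finset.coe_univ, Set.image_univ]
      exact Set.mem_range_self i
    have := hagree (SA i) hmem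
    rw [this]
    exact h.symm_apply_apply _
  set f : kneserGraph n k ≃g kneserGraph n k := g.trans h.symm with hf
  obtain ⟨σ, hσ⟩ := exists_perm hk hn2k f
  have hfixA : ∀ i, (Ai i).image σ = Ai i := by
    intro i
    have h1 : (f (SA i)).val = (SA i).val.image σ := hσ (SA i)
    have h2 : f (SA i) = SA i := hfix i
    rw [h2] at h1
    exact h1.symm
  have hσid : ∀ x : Fin n, σ x = x := by
    intro x
    have htreq : tr (σ x) = tr x := by
      apply Finset.ext
      intro i
      have hx : x ∈ Ai i ↔ σ x ∈ Ai i := by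
        constructor
        · intro hx0; rw [← hfixA i]; exact Finset.mem_image_of_mem σ hx0
        · intro hx0
          rw [← hfixA i] at hx0
          obtain ⟨y, hy, hxy⟩ := Finset.mem_image.mp hx0
          rwa [← σ.injective hxy]
      simp only [hAi, Finset.mem_filter, mem_univ, true_and] at hx
      exact ⟨fun hi => hx.mpr hi, fun hi => hx.mp hi⟩
    have := htrinj htreq
    exact this
  have hgh : ∀ A : KV n k, g A = h A := by
    intro A
    have h1 : (f A).val = A.val.image σ := hσ A
    have h2 : A.val.image σ = A.val := by
      rw [show (σ : Fin n → Fin n) = id from funext hσid, Finset.image_id]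
    have h3 : f A = A := Subtype.ext (h1.trans h2)
    have h4 := congrArg h h3
    have h5 : h (h.symm (g A)) = g A := h.apply_symm_apply _
    rw [show f A = h.symm (g A) from rfl] at h4
    rw [h5] at h4
    exact h4
  exact RelIso.ext hgh

end Stmt12

theorem stmt_12 (d k : ℕ) (hk : 0 < k) (hkd : k ≤ d) (hd : 2 < d) :
    detNumber (kneserGraph (d * (k + 1) / 2 + 1) k) = d := by
  classical
  set n := d * (k + 1) / 2 + 1 with hn
  have hn2k : 2*k+1 ≤ n := Stmt12.hn2k_lemma hk hkd hd
  obtain ⟨T, hT1, hT2, hT3⟩ := Stmt12.exists_traces d k hk hkd hd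
  obtain ⟨S, hScard, hSdet⟩ := Stmt12.upper hk hn2k T (by rw [hT1]) hT2 hT3
  have hdmem : d ∈ {m | ∃ S : Finset (Stmt12.KV n k), S.card = m ∧
      IsDeterminingSet (kneserGraph n k) (S : Set (Stmt12.KV n k))} := ⟨S, hScard, hSdet⟩
  apply le_antisymm
  · exact Nat.sInf_le hdmem
  · apply le_csInf ⟨d, hdmem⟩
    rintro m ⟨S', hS'card, hS'det⟩
    have := Stmt12.lower_bound hk (by omega) hn hn2k S' hS'det
    omega
end

section
/- Let k and d be positive integers with 3 ≤ k+1 ≤ d, and let n be a natural number with ⌊(d−1)(k+1)/2⌋ < n < ⌊d(k+1)/2⌋. Then the determining number of the Kneser graph K_{n+1:k} equals d. -/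
open Finset

section StarSec
variable {α : Type*} [DecidableEq α] [Fintype α]

def jstar (k : ℕ) (K : Finset α) : Finset (Finset α) :=
  ((Finset.univ : Finset α).powersetCard k).filter (fun A => K ⊆ A)

lemma mem_jstar {k : ℕ} {K A : Finset α} : A ∈ jstar k K ↔ A.card = k ∧ K ⊆ A := by
  simp [jstar, Finset.mem_powersetCard, and_comm]

lemma card_jstar {k : ℕ} (K : Finset α) (hK : K.card + 1 = k) :
    (jstar k K).card + k = Fintype.card α + 1 := by
  have h : (Finset.univ \ K).card = (jstar k K).card := by
    apply Finset.card_bij (fun x _ => insert x K)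
    · intro x hx
      simp only [mem_sdiff, mem_univ, true_and] at hx
      exact mem_jstar.2 ⟨by rw [Finset.card_insert_of_notMem hx, hK],
        Finset.subset_insert _ _⟩
    · intro x hx y hy h
      simp only [mem_sdiff, mem_univ, true_and] at hx hy
      have : x ∈ insert y K := h ▸ Finset.mem_insert_self x K
      rcases Finset.mem_insert.1 this with h' | h'
      · exact h'
      · exact absurd h' hx
    · intro A hA
      rw [mem_jstar] at hA
      have : (A \ K).card = 1 := by
        rw [Finset.card_sdiff_of_subset hA.2]
        omega
      obtain ⟨x, hx⟩ := Finset.card_eq_one.1 this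
      have hxA : x ∈ A \ K := hx ▸ Finset.mem_singleton_self x
      rw [Finset.mem_sdiff] at hxA
      refine ⟨x, by simp [hxA.2], ?_⟩
      apply Finset.eq_of_subset_of_card_le
      · exact Finset.insert_subset hxA.1 hA.2
      · rw [hA.1, Finset.card_insert_of_notMem hxA.2]
        omega
  rw [← h, Finset.card_sdiff_of_subset (Finset.subset_univ K), Finset.card_univ]
  have : K.card ≤ Fintype.card α := by
    rw [← Finset.card_univ]; exact Finset.card_le_card (Finset.subset_univ K)
  omega


lemma clique_subset_star {k : ℕ} (hk : 2 ≤ k) (F : Finset (Finset α))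
    (hcard : ∀ A ∈ F, A.card = k)
    (hcl : ∀ A ∈ F, ∀ B ∈ F, A ≠ B → (A ∩ B).card + 1 = k)
    (hF : k + 2 ≤ F.card) :
    ∃ K : Finset α, K.card + 1 = k ∧ ∀ C ∈ F, K ⊆ C := by
  obtain ⟨A, hA, B, hB, hAB⟩ := Finset.one_lt_card.1 (by omega : 1 < F.card)
  set K := A ∩ B with hKdef
  have hKcard : K.card + 1 = k := hcl A hA B hB hAB
  have hKA : K ⊆ A := Finset.inter_subset_left
  have hKB : K ⊆ B := Finset.inter_subset_right
  -- A \ B is a singleton {a}, B \ A = {b}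
  have hAc := hcard A hA
  have hBc := hcard B hB
  have hacard : (A \ B).card = 1 := by
    have h := Finset.card_sdiff_add_card_inter A B
    rw [← hKdef] at h
    omega
  have hbcard : (B \ A).card = 1 := by
    have h := Finset.card_sdiff_add_card_inter B A
    rw [Finset.inter_comm, ← hKdef] at h
    omega
  obtain ⟨a, ha⟩ := Finset.card_eq_one.1 hacard
  obtain ⟨b, hb⟩ := Finset.card_eq_one.1 hbcard
  have haA : a ∈ A ∧ a ∉ B := by
    have : a ∈ A \ B := ha ▸ Finset.mem_singleton_self a
    exact Finset.mem_sdiff.1 this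
  have hbB : b ∈ B ∧ b ∉ A := by
    have : b ∈ B \ A := hb ▸ Finset.mem_singleton_self b
    exact Finset.mem_sdiff.1 this
  have hab : a ≠ b := fun h => haA.2 (h ▸ hbB.1)
  have haK : a ∉ K := fun h => haA.2 (hKB h)
  have hbK : b ∉ K := fun h => hbB.2 (hKA h)
  have hAeq : A = insert a K := by
    apply (Finset.eq_of_subset_of_card_le (Finset.insert_subset haA.1 hKA) ?_).symm
    rw [Finset.card_insert_of_notMem haK]; omega
  have hBeq : B = insert b K := by
    apply (Finset.eq_of_subset_of_card_le (Finset.insert_subset hbB.1 hKB) ?_).symm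
    rw [Finset.card_insert_of_notMem hbK]; omega
  -- classification of "bad" members
  have badform : ∀ C ∈ F, ¬ K ⊆ C → ∃ x ∈ K, C = insert a (insert b (K.erase x)) := by
    intro C hC hKC
    have hCA : C ≠ A := fun h => hKC (h ▸ hKA)
    have hCB : C ≠ B := fun h => hKC (h ▸ hKB)
    obtain ⟨x, hxK, hxC⟩ := Finset.not_subset.1 hKC
    have hCc := hcard C hC
    -- C ∩ K ⊆ K.erase x with card bound
    have hCKsub : C ∩ K ⊆ K.erase x := by
      intro y hy
      rw [Finset.mem_inter] at hy
      exact Finset.mem_erase.2 ⟨fun h => hxC (h ▸ hy.1), hy.2⟩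
    have hKe : (K.erase x).card + 2 = k := by
      rw [Finset.card_erase_of_mem hxK]; omega
    have hCK_le : (C ∩ K).card + 2 ≤ k := by
      have := Finset.card_le_card hCKsub; omega
    have hstep : ∀ c' : α, c' ∉ K → c' ∉ B → c' ∈ C → insert c' K = A ∨ insert c' K = B → 
        True := fun _ _ _ _ _ => trivial
    have hintA : (C ∩ A).card + 1 = k := hcl C hC A hA hCA
    have hintB : (C ∩ B).card + 1 = k := hcl C hC B hB hCB
    have hCA_split : C ∩ A ⊆ insert a (C ∩ K) := by
      intro y hy
      rw [Finset.mem_inter] at hy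
      rw [hAeq, Finset.mem_insert] at hy
      rcases hy.2 with h | h
      · exact Finset.mem_insert.2 (Or.inl h)
      · exact Finset.mem_insert.2 (Or.inr (Finset.mem_inter.2 ⟨hy.1, h⟩))
    have hCB_split : C ∩ B ⊆ insert b (C ∩ K) := by
      intro y hy
      rw [Finset.mem_inter] at hy
      rw [hBeq, Finset.mem_insert] at hy
      rcases hy.2 with h | h
      · exact Finset.mem_insert.2 (Or.inl h)
      · exact Finset.mem_insert.2 (Or.inr (Finset.mem_inter.2 ⟨hy.1, h⟩))
    have haC : a ∈ C ∧ (C ∩ K).card + 2 = k := by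
      by_contra hcon
      have h1 : (C ∩ A).card ≤ (insert a (C ∩ K)).card := Finset.card_le_card hCA_split
      have h2 : (insert a (C ∩ K)).card ≤ (C ∩ K).card + 1 := Finset.card_insert_le _ _
      rcases Decidable.em (a ∈ C) with hain | hain
      · -- then card C ∩ K < k - 2
        have : (C ∩ K).card + 2 ≠ k := fun h => hcon ⟨hain, h⟩
        omega
      · have : C ∩ A ⊆ C ∩ K := by
          intro y hy
          have := hCA_split hy
          rcases Finset.mem_insert.1 this with h | h
          · exact absurd ((Finset.mem_inter.1 hy).1) (h ▸ hain)
          · exact h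
        have := Finset.card_le_card this
        omega
    have hbC : b ∈ C := by
      by_contra hbin
      have : C ∩ B ⊆ C ∩ K := by
        intro y hy
        have := hCB_split hy
        rcases Finset.mem_insert.1 this with h | h
        · exact absurd ((Finset.mem_inter.1 hy).1) (h ▸ hbin)
        · exact h
      have := Finset.card_le_card this
      omega
    have hCKeq : C ∩ K = K.erase x :=
      Finset.eq_of_subset_of_card_le hCKsub (by omega)
    refine ⟨x, hxK, ?_⟩
    apply (Finset.eq_of_subset_of_card_le ?_ ?_).symm
    · apply Finset.insert_subset haC.1
      apply Finset.insert_subset hbC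
      rw [← hCKeq]
      exact Finset.inter_subset_left
    · have h1 : b ∉ K.erase x := fun h => hbK (Finset.mem_of_mem_erase h)
      have h2 : a ∉ insert b (K.erase x) := by
        rw [Finset.mem_insert]
        rintro (h | h)
        · exact hab h
        · exact haK (Finset.mem_of_mem_erase h)
      rw [Finset.card_insert_of_notMem h2, Finset.card_insert_of_notMem h1]
      omega
  -- main contradiction
  by_contra hcon
  push_neg at hcon
  obtain ⟨C₀, hC₀F, hKC₀⟩ := hcon K hKcard
  obtain ⟨x₀, hx₀K, hC₀eq⟩ := badform C₀ hC₀F hKC₀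
  -- every C ∈ F with K ⊆ C equals A or B
  have good : ∀ C ∈ F, K ⊆ C → C = A ∨ C = B := by
    intro C hC hKC
    by_contra hcon2
    push_neg at hcon2
    have hCc := hcard C hC
    have hCe : (C \ K).card = 1 := by
      have := Finset.card_sdiff_of_subset hKC; omega
    obtain ⟨e, he⟩ := Finset.card_eq_one.1 hCe
    have heC : e ∈ C ∧ e ∉ K := Finset.mem_sdiff.1 (he ▸ Finset.mem_singleton_self e)
    have hCeq : C = insert e K := by
      apply (Finset.eq_of_subset_of_card_le (Finset.insert_subset heC.1 hKC) ?_).symm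
      rw [Finset.card_insert_of_notMem heC.2]; omega
    have hea : e ≠ a := by
      intro h; exact hcon2.1 (by rw [hCeq, h, hAeq])
    have heb : e ≠ b := by
      intro h; exact hcon2.2 (by rw [hCeq, h, hBeq])
    have hCC₀ : C ≠ C₀ := fun h => hKC₀ (h ▸ hKC)
    have hint : (C ∩ C₀).card + 1 = k := hcl C hC C₀ hC₀F hCC₀
    have : C ∩ C₀ = K.erase x₀ := by
      apply Finset.Subset.antisymm
      · intro y hy
        rw [Finset.mem_inter, hCeq, Finset.mem_insert] at hy
        rcases hy.1 with h | h
        · -- y = e: e ∈ C₀?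
          subst h
          rw [hC₀eq, Finset.mem_insert, Finset.mem_insert] at hy
          rcases hy.2 with h | h | h
          · exact absurd h hea
          · exact absurd h heb
          · exact absurd (Finset.mem_of_mem_erase h) heC.2
        · rw [hC₀eq] at hy
          rw [Finset.mem_insert, Finset.mem_insert] at hy
          rcases hy.2 with h' | h' | h'
          · exact absurd (h' ▸ h) haK
          · exact absurd (h' ▸ h) hbK
          · exact h'
      · intro y hy
        have hyK : y ∈ K := Finset.mem_of_mem_erase hy
        rw [Finset.mem_inter]
        constructor
        · exact hKC hyK
        · rw [hC₀eq]
          exact Finset.mem_insert.2 (Or.inr (Finset.mem_insert.2 (Or.inr hy)))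
    rw [this, Finset.card_erase_of_mem hx₀K] at hint
    omega
  -- F ⊆ {A, B} ∪ K.image f
  have hsub : F ⊆ insert A (insert B (K.image (fun x => insert a (insert b (K.erase x))))) := by
    intro C hC
    rcases Decidable.em (K ⊆ C) with h | h
    · rcases good C hC h with h' | h'
      · exact Finset.mem_insert.2 (Or.inl h')
      · exact Finset.mem_insert.2 (Or.inr (Finset.mem_insert.2 (Or.inl h')))
    · obtain ⟨x, hx, hCeq⟩ := badform C hC h
      refine Finset.mem_insert.2 (Or.inr (Finset.mem_insert.2 (Or.inr ?_)))
      exact Finset.mem_image.2 ⟨x, hx, hCeq.symm⟩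
  have hle := Finset.card_le_card hsub
  have h1 := Finset.card_insert_le A (insert B (K.image (fun x => insert a (insert b (K.erase x)))))
  have h2 := Finset.card_insert_le B (K.image (fun x => insert a (insert b (K.erase x))))
  have h3 := Finset.card_image_le (s := K) (f := fun x => insert a (insert b (K.erase x)))
  omega


lemma inter_card_lt {α : Type*} [DecidableEq α] {A B : Finset α} (hA : A.card = B.card)
    (hne : A ≠ B) : (A ∩ B).card < A.card := by
  have hle := Finset.card_le_card (Finset.inter_subset_left (s₁ := A) (s₂ := B))
  rcases lt_or_eq_of_le hle with h | h
  · exact h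
  · exfalso
    have h1 : A ∩ B = A := Finset.eq_of_subset_of_card_le Finset.inter_subset_left (le_of_eq h.symm)
    have h2 : A ⊆ B := Finset.inter_eq_left.1 h1
    exact hne (Finset.eq_of_subset_of_card_le h2 (le_of_eq hA.symm))

lemma inter_card_iff_exists {k : ℕ} (hk : 1 ≤ k) {K₁ K₂ : Finset α}
    (h1 : K₁.card = k) (h2 : K₂.card = k) (hne : K₁ ≠ K₂) :
    ((K₁ ∩ K₂).card + 1 = k) ↔ ∃ A : Finset α, A.card = k + 1 ∧ K₁ ⊆ A ∧ K₂ ⊆ A := by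
  have hui := Finset.card_union_add_card_inter K₁ K₂
  constructor
  · intro h
    exact ⟨K₁ ∪ K₂, by omega, Finset.subset_union_left, Finset.subset_union_right⟩
  · rintro ⟨A, hA, hs1, hs2⟩
    have hu : (K₁ ∪ K₂).card ≤ k + 1 := by
      calc (K₁ ∪ K₂).card ≤ A.card := Finset.card_le_card (Finset.union_subset hs1 hs2)
      _ = k + 1 := hA
    have hlt : (K₁ ∩ K₂).card < k := by
      have := inter_card_lt (by omega : K₁.card = K₂.card) hne
      omega
    omega

theorem johnson (k : ℕ) (g : Finset α → Finset α)
    (hcard : ∀ A : Finset α, A.card = k → (g A).card = k)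
    (hinj : ∀ A B : Finset α, A.card = k → B.card = k → g A = g B → A = B)
    (hrel : ∀ A B : Finset α, A.card = k → B.card = k →
      ((A ∩ B).card + 1 = k ↔ ((g A) ∩ (g B)).card + 1 = k))
    (hN : 2 * k + 1 ≤ Fintype.card α) :
    ∃ π : Equiv.Perm α, ∀ A : Finset α, A.card = k → g A = A.image π := by
  induction k generalizing g with
  | zero =>
    refine ⟨1, fun A hA => ?_⟩
    have h1 : A = ∅ := Finset.card_eq_zero.1 hA
    have h2 : g A = ∅ := Finset.card_eq_zero.1 (hcard A hA)
    rw [h2, h1]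
    simp
  | succ k ih =>
    -- surjectivity of g on (k+1)-sets
    have hsurj : ∀ B : Finset α, B.card = k + 1 → ∃ A, A.card = k + 1 ∧ g A = B := by
      intro B hB
      have := Finset.surj_on_of_inj_on_of_card_le
        (s := (Finset.univ : Finset α).powersetCard (k+1))
        (t := (Finset.univ : Finset α).powersetCard (k+1))
        (fun A _ => g A)
        (fun A hA => by
          rw [Finset.mem_powersetCard_univ] at hA ⊢
          exact hcard A hA)
        (fun A₁ A₂ h₁ h₂ he => by
          rw [Finset.mem_powersetCard_univ] at h₁ h₂
          exact hinj A₁ A₂ h₁ h₂ he)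
        le_rfl B (Finset.mem_powersetCard_univ.2 hB)
      obtain ⟨A, hA, hgA⟩ := this
      exact ⟨A, Finset.mem_powersetCard_univ.1 hA, hgA.symm⟩
    rcases Nat.eq_zero_or_pos k with hk0 | hkpos
    · -- singleton case
      subst hk0
      have hsing : ∀ x : α, ∃ y, g {x} = {y} := fun x =>
        Finset.card_eq_one.1 (hcard {x} (Finset.card_singleton x))
      choose f hf using hsing
      have finj : Function.Injective f := by
        intro x y h
        have : g {x} = g {y} := by rw [hf, hf, h]
        have := hinj {x} {y} (Finset.card_singleton x) (Finset.card_singleton y) this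
        exact Finset.singleton_injective this
      refine ⟨Equiv.ofBijective f (Finite.injective_iff_bijective.1 finj), fun A hA => ?_⟩
      obtain ⟨x, hx⟩ := Finset.card_eq_one.1 hA
      subst hx
      rw [hf x, Finset.image_singleton]
      rfl
    · -- main case: k ≥ 1, level k+1 ≥ 2
      have hcardα : 2 * k + 3 ≤ Fintype.card α := by omega
      have hstar : ∀ K : Finset α, K.card = k →
          ∃ K', K'.card = k ∧ (jstar (k+1) K).image g = jstar (k+1) K' := by
        intro K hK
        set F := (jstar (k+1) K).image g with hFdef
        have hFc : ∀ A ∈ F, A.card = k + 1 := by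
          intro A hA
          obtain ⟨B, hB, rfl⟩ := Finset.mem_image.1 hA
          exact hcard B (mem_jstar.1 hB).1
        have hincl : ∀ A B : Finset α, A ∈ jstar (k+1) K → B ∈ jstar (k+1) K → A ≠ B →
            (A ∩ B).card + 1 = k + 1 := by
          intro A B hA hB hAB
          rw [mem_jstar] at hA hB
          have hsubK : K ⊆ A ∩ B := Finset.subset_inter hA.2 hB.2
          have hlt : (A ∩ B).card < k + 1 := by
            have := inter_card_lt (by omega : A.card = B.card) hAB
            omega
          have hge := Finset.card_le_card hsubK
          omega
        have hFcl : ∀ A ∈ F, ∀ B ∈ F, A ≠ B → (A ∩ B).card + 1 = k + 1 := by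
          intro A' hA' B' hB' hne
          obtain ⟨A, hA, rfl⟩ := Finset.mem_image.1 hA'
          obtain ⟨B, hB, rfl⟩ := Finset.mem_image.1 hB'
          have hAc := (mem_jstar.1 hA).1
          have hBc := (mem_jstar.1 hB).1
          have hABne : A ≠ B := fun h => hne (h ▸ rfl)
          exact (hrel A B hAc hBc).1 (hincl A B hA hB hABne)
        have hstarcard : (jstar (k+1) K).card + (k+1) = Fintype.card α + 1 :=
          card_jstar K (by omega)
        have hFcard : F.card = (jstar (k+1) K).card := by
          apply Finset.card_image_of_injOn
          intro A hA B hB h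
          exact hinj A B (mem_jstar.1 hA).1 (mem_jstar.1 hB).1 h
        obtain ⟨K', hK'c, hK'⟩ := clique_subset_star (by omega) F hFc hFcl (by omega)
        refine ⟨K', by omega, ?_⟩
        apply Finset.eq_of_subset_of_card_le
        · intro C hC
          exact mem_jstar.2 ⟨hFc C hC, hK' C hC⟩
        · have := card_jstar K' hK'c
          omega
      have hstar' : ∀ K : Finset α, ∃ K', K.card = k →
          K'.card = k ∧ (jstar (k+1) K).image g = jstar (k+1) K' := by
        intro K
        rcases Decidable.em (K.card = k) with h | h
        · obtain ⟨K', h1, h2⟩ := hstar K h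
          exact ⟨K', fun _ => ⟨h1, h2⟩⟩
        · exact ⟨∅, fun h' => absurd h' h⟩
      choose φ hφ using hstar'
      have hφc : ∀ K : Finset α, K.card = k → (φ K).card = k := fun K hK => (hφ K hK).1
      have hiff : ∀ K : Finset α, K.card = k → ∀ A : Finset α, A.card = k + 1 →
          (K ⊆ A ↔ φ K ⊆ g A) := by
        intro K hK A hA
        constructor
        · intro h
          have : g A ∈ (jstar (k+1) K).image g :=
            Finset.mem_image_of_mem g (mem_jstar.2 ⟨hA, h⟩)
          rw [(hφ K hK).2] at this
          exact (mem_jstar.1 this).2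
        · intro h
          have : g A ∈ jstar (k+1) (φ K) := mem_jstar.2 ⟨hcard A hA, h⟩
          rw [← (hφ K hK).2] at this
          obtain ⟨B, hB, hBA⟩ := Finset.mem_image.1 this
          rw [mem_jstar] at hB
          have := hinj B A hB.1 hA hBA
          exact this ▸ hB.2
      have hφinj : ∀ K₁ K₂ : Finset α, K₁.card = k → K₂.card = k → φ K₁ = φ K₂ → K₁ = K₂ := by
        intro K₁ K₂ h1 h2 he
        by_contra hne
        have hz : ∃ z ∈ K₂, z ∉ K₁ := by
          by_contra hcon
          push_neg at hcon
          exact hne (Finset.eq_of_subset_of_card_le hcon (by omega)).symm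
        obtain ⟨z, hz2, hz1⟩ := hz
        have hex : (Finset.univ \ insert z K₁).Nonempty := by
          rw [← Finset.card_pos, Finset.card_sdiff_of_subset (Finset.subset_univ _), Finset.card_univ]
          have h3 := Finset.card_insert_le z K₁
          omega
        obtain ⟨x, hx⟩ := hex
        rw [Finset.mem_sdiff, Finset.mem_insert] at hx
        push_neg at hx
        have hAcard : (insert x K₁).card = k + 1 := by
          rw [Finset.card_insert_of_notMem hx.2.2]; omega
        have h4 : φ K₁ ⊆ g (insert x K₁) :=
          (hiff K₁ h1 _ hAcard).1 (Finset.subset_insert _ _)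
        rw [he] at h4
        have h5 : K₂ ⊆ insert x K₁ := (hiff K₂ h2 _ hAcard).2 h4
        have := h5 hz2
        rw [Finset.mem_insert] at this
        rcases this with h | h
        · exact hx.2.1 h.symm
        · exact hz1 h
      have hφrel : ∀ K₁ K₂ : Finset α, K₁.card = k → K₂.card = k →
          ((K₁ ∩ K₂).card + 1 = k ↔ ((φ K₁) ∩ (φ K₂)).card + 1 = k) := by
        intro K₁ K₂ h1 h2
        rcases Decidable.em (K₁ = K₂) with he | hne
        · subst he
          rw [Finset.inter_self, Finset.inter_self, h1, hφc K₁ h1]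
        · have hφne : φ K₁ ≠ φ K₂ := fun h => hne (hφinj _ _ h1 h2 h)
          rw [inter_card_iff_exists hkpos h1 h2 hne,
              inter_card_iff_exists hkpos (hφc K₁ h1) (hφc K₂ h2) hφne]
          constructor
          · rintro ⟨A, hA, hs1, hs2⟩
            exact ⟨g A, hcard A hA, (hiff K₁ h1 A hA).1 hs1, (hiff K₂ h2 A hA).1 hs2⟩
          · rintro ⟨B, hB, hs1, hs2⟩
            obtain ⟨A, hA, rfl⟩ := hsurj B hB
            exact ⟨A, hA, (hiff K₁ h1 A hA).2 hs1, (hiff K₂ h2 A hA).2 hs2⟩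
      obtain ⟨π, hπ⟩ := ih φ hφc hφinj hφrel (by omega)
      refine ⟨π, fun A hA => ?_⟩
      have hsub : ∀ x ∈ A, (A.erase x).image π ⊆ g A := by
        intro x hx
        have hKc : (A.erase x).card = k := by
          rw [Finset.card_erase_of_mem hx]; omega
        have := (hiff _ hKc A hA).1 (Finset.erase_subset _ _)
        rw [hπ _ hKc] at this
        exact this
      obtain ⟨a, ha, b, hb, hab⟩ := Finset.one_lt_card.1 (by omega : 1 < A.card)
      have himg : A.image π ⊆ g A := by
        intro y hy
        obtain ⟨z, hz, rfl⟩ := Finset.mem_image.1 hy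
        rcases Decidable.em (z = a) with h | h
        · exact hsub b hb (Finset.mem_image_of_mem π (Finset.mem_erase.2 ⟨h ▸ hab, hz⟩))
        · exact hsub a ha (Finset.mem_image_of_mem π (Finset.mem_erase.2 ⟨h, hz⟩))
      apply (Finset.eq_of_subset_of_card_le himg ?_).symm
      rw [hcard A hA, Finset.card_image_of_injective _ π.injective, hA]


end StarSec

section Kneser
variable {N k : ℕ}

instance : DecidableRel (kneserGraph N k).Adj :=
  fun a b => inferInstanceAs (Decidable (Disjoint a.1 b.1 ∧ a ≠ b))

abbrev KV (N k : ℕ) := {s : Finset (Fin N) // s.card = k}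

/-- permutations induce automorphisms of the Kneser graph -/
def permIso (π : Equiv.Perm (Fin N)) : kneserGraph N k ≃g kneserGraph N k where
  toFun A := ⟨A.1.image π, by rw [Finset.card_image_of_injective _ π.injective, A.2]⟩
  invFun A := ⟨A.1.image π.symm, by rw [Finset.card_image_of_injective _ π.symm.injective, A.2]⟩
  left_inv A := by
    apply Subtype.ext
    simp [Finset.image_image, Function.comp_def]
  right_inv A := by
    apply Subtype.ext
    simp [Finset.image_image, Function.comp_def]
  map_rel_iff' := by
    intro A B
    simp only [kneserGraph, Equiv.coe_fn_mk]
    constructor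
    · rintro ⟨h1, h2⟩
      constructor
      · rw [← Finset.disjoint_image (f := π) π.injective]
        exact h1
      · intro h; exact h2 (by rw [h])
    · rintro ⟨h1, h2⟩
      constructor
      · exact (Finset.disjoint_image π.injective).2 h1
      · intro h
        apply h2
        apply Subtype.ext
        have := congrArg (fun s : KV N k => s.1.image π.symm) h
        simpa [Finset.image_image, Function.comp_def] using this

/-- number of common neighbours -/
def cn (A B : KV N k) : ℕ :=
  (Finset.univ.filter (fun C : KV N k =>
    (kneserGraph N k).Adj C A ∧ (kneserGraph N k).Adj C B)).card

lemma cn_map (g : kneserGraph N k ≃g kneserGraph N k) (A B : KV N k) :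
    cn (g A) (g B) = cn A B := by
  unfold cn
  apply Finset.card_bij' (fun C _ => g.symm C) (fun C _ => g C)
  · intro C hC
    simp only [Finset.mem_filter, Finset.mem_univ, true_and] at hC ⊢
    have h1 := g.symm.map_rel_iff.2 hC.1
    have h2 := g.symm.map_rel_iff.2 hC.2
    rw [g.symm_apply_apply] at h1 h2
    exact ⟨h1, h2⟩
  · intro C hC
    simp only [Finset.mem_filter, Finset.mem_univ, true_and] at hC ⊢
    exact ⟨g.map_rel_iff.2 hC.1, g.map_rel_iff.2 hC.2⟩
  · intro C _; simp
  · intro C _; simp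

lemma cn_eq (hk : 1 ≤ k) (A B : KV N k) :
    cn A B = (N - (A.1 ∪ B.1).card).choose k := by
  have h : cn A B = ((A.1 ∪ B.1)ᶜ.powersetCard k).card := by
    unfold cn
    apply Finset.card_bij (fun C _ => C.1)
    · intro C hC
      rw [Finset.mem_filter] at hC
      simp only [Finset.mem_filter, Finset.mem_univ, true_and, kneserGraph] at hC
      rw [Finset.mem_powersetCard]
      refine ⟨?_, C.2⟩
      have : Disjoint C.1 (A.1 ∪ B.1) := Finset.disjoint_union_right.2 ⟨hC.1.1, hC.2.1⟩
      exact le_compl_iff_disjoint_right.2 this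
    · intro C₁ h₁ C₂ h₂ h
      exact Subtype.ext h
    · intro s hs
      rw [Finset.mem_powersetCard] at hs
      refine ⟨⟨s, hs.2⟩, ?_, rfl⟩
      have hd : Disjoint s (A.1 ∪ B.1) := le_compl_iff_disjoint_right.1 hs.1
      rw [Finset.disjoint_union_right] at hd
      have hne : ∀ D : KV N k, Disjoint s D.1 → (⟨s, hs.2⟩ : KV N k) ≠ D := by
        intro D hdisj h
        rw [← h] at hdisj
        simp only [disjoint_self] at hdisj
        have hcs := hs.2
        rw [hdisj] at hcs
        simp only [Finset.bot_eq_empty, Finset.card_empty] at hcs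
        omega
      rw [Finset.mem_filter]
      simp only [Finset.mem_filter, Finset.mem_univ, true_and, kneserGraph]
      exact ⟨⟨hd.1, hne A hd.1⟩, ⟨hd.2, hne B hd.2⟩⟩
  rw [h, Finset.card_powersetCard, Finset.card_compl]
  congr 1
  simp [Fintype.card_fin]

lemma choose_lt_choose {k a b : ℕ} (hk : 1 ≤ k) (ha : k ≤ a) (hab : a < b) :
    a.choose k < b.choose k := by
  induction b with
  | zero => omega
  | succ b ih =>
    have hstep : b.choose k < (b + 1).choose k := by
      obtain ⟨k', rfl⟩ : ∃ k', k = k' + 1 := ⟨k - 1, by omega⟩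
      rw [Nat.choose_succ_succ]
      have : 0 < b.choose k' := Nat.choose_pos (by omega)
      simp only [Nat.succ_eq_add_one]
      omega
    rcases (by omega : a = b ∨ a < b) with h | h
    · exact h ▸ hstep
    · exact lt_trans (ih h) hstep

lemma inter_card_lt' {α : Type*} [DecidableEq α] {A B : Finset α} (hA : A.card = B.card)
    (hne : A ≠ B) : (A ∩ B).card < A.card := by
  have hle := Finset.card_le_card (Finset.inter_subset_left (s₁ := A) (s₂ := B))
  rcases lt_or_eq_of_le hle with h | h
  · exact h
  · exfalso
    have h1 : A ∩ B = A := Finset.eq_of_subset_of_card_le Finset.inter_subset_left (le_of_eq h.symm)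
    have h2 : A ⊆ B := Finset.inter_eq_left.1 h1
    exact hne (Finset.eq_of_subset_of_card_le h2 (le_of_eq hA.symm))

lemma kneser_iff (hk : 2 ≤ k) (h3k : 3 * k ≤ N + 1)
    (g : kneserGraph N k ≃g kneserGraph N k) (A B : KV N k) :
    ((A.1 ∩ B.1).card + 1 = k) ↔ (((g A).1 ∩ (g B).1).card + 1 = k) := by
  rcases Decidable.em (A = B) with rfl | hne
  · rw [Finset.inter_self, Finset.inter_self, A.2, (g A).2]
  · have hgne : g A ≠ g B := fun h => hne (g.toEquiv.injective h)
    have hne1 : A.1 ≠ B.1 := fun h => hne (Subtype.ext h)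
    have hgne1 : (g A).1 ≠ (g B).1 := fun h => hgne (Subtype.ext h)
    rcases Decidable.em ((kneserGraph N k).Adj A B) with hadj | hadj
    · have hgadj := g.map_rel_iff.2 hadj
      have h1 : (A.1 ∩ B.1).card = 0 := by
        rw [Finset.card_eq_zero, ← Finset.disjoint_iff_inter_eq_empty]
        exact hadj.1
      have h2 : ((g A).1 ∩ (g B).1).card = 0 := by
        rw [Finset.card_eq_zero, ← Finset.disjoint_iff_inter_eq_empty]
        exact hgadj.1
      rw [h1, h2]
    · have hgadj : ¬ (kneserGraph N k).Adj (g A) (g B) := fun h => hadj (g.map_rel_iff.1 h)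
      have hpos : 0 < (A.1 ∩ B.1).card := by
        rw [Finset.card_pos, ← Finset.not_disjoint_iff_nonempty_inter]
        intro hd
        exact hadj ⟨hd, hne⟩
      have hgpos : 0 < ((g A).1 ∩ (g B).1).card := by
        rw [Finset.card_pos, ← Finset.not_disjoint_iff_nonempty_inter]
        intro hd
        exact hgadj ⟨hd, hgne⟩
      have hlt : (A.1 ∩ B.1).card < k := by
        have := inter_card_lt' (A := A.1) (B := B.1) (by rw [A.2, B.2]) hne1
        rw [A.2] at this; exact this
      have hglt : ((g A).1 ∩ (g B).1).card < k := by
        have := inter_card_lt' (A := (g A).1) (B := (g B).1) (by rw [(g A).2, (g B).2]) hgne1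
        rw [(g A).2] at this; exact this
      have hcn := cn_map g A B
      rw [cn_eq (by omega) A B, cn_eq (by omega) (g A) (g B)] at hcn
      have hu1 : (A.1 ∪ B.1).card + (A.1 ∩ B.1).card = 2 * k := by
        have := Finset.card_union_add_card_inter A.1 B.1
        rw [A.2, B.2] at this; omega
      have hu2 : ((g A).1 ∪ (g B).1).card + ((g A).1 ∩ (g B).1).card = 2 * k := by
        have := Finset.card_union_add_card_inter (g A).1 (g B).1
        rw [(g A).2, (g B).2] at this; omega
      have hN1 : (A.1 ∪ B.1).card ≤ N := by
        have := Finset.card_le_univ (A.1 ∪ B.1)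
        rwa [Fintype.card_fin] at this
      have hN2 : ((g A).1 ∪ (g B).1).card ≤ N := by
        have := Finset.card_le_univ ((g A).1 ∪ (g B).1)
        rwa [Fintype.card_fin] at this
      set t1 := (A.1 ∩ B.1).card
      set t2 := ((g A).1 ∩ (g B).1).card
      have ha1 : N - ((g A).1 ∪ (g B).1).card = N - 2 * k + t2 := by omega
      have ha2 : N - (A.1 ∪ B.1).card = N - 2 * k + t1 := by omega
      rw [ha1, ha2] at hcn
      have hteq : t1 = t2 := by
        by_contra hne'
        rcases (by omega : t1 < t2 ∨ t2 < t1) with h | h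
        · have := choose_lt_choose (k := k) (by omega) (by omega) (by omega : N - 2*k + t1 < N - 2*k + t2)
          omega
        · have := choose_lt_choose (k := k) (by omega) (by omega) (by omega : N - 2*k + t2 < N - 2*k + t1)
          omega
      omega

theorem kneser_aut (hk : 2 ≤ k) (h3k : 3 * k ≤ N + 1)
    (g : kneserGraph N k ≃g kneserGraph N k) :
    ∃ π : Equiv.Perm (Fin N), ∀ A : KV N k, (g A).1 = A.1.image π := by
  classical
  set G : Finset (Fin N) → Finset (Fin N) :=
    fun A => if h : A.card = k then (g ⟨A, h⟩).1 else A with hGdef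
  have hGval : ∀ (A : KV N k), G A.1 = (g A).1 := by
    intro A
    rw [hGdef]
    simp only [A.2, dif_pos]
  have hcard : ∀ A : Finset (Fin N), A.card = k → (G A).card = k := by
    intro A hA
    have : G A = (g ⟨A, hA⟩).1 := by rw [hGdef]; simp only [hA, dif_pos]
    rw [this]
    exact (g ⟨A, hA⟩).2
  have hinj : ∀ A B : Finset (Fin N), A.card = k → B.card = k → G A = G B → A = B := by
    intro A B hA hB h
    have h1 : G A = (g ⟨A, hA⟩).1 := by rw [hGdef]; simp only [hA, dif_pos]
    have h2 : G B = (g ⟨B, hB⟩).1 := by rw [hGdef]; simp only [hB, dif_pos]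
    rw [h1, h2] at h
    have := g.toEquiv.injective (Subtype.ext h)
    exact congrArg Subtype.val this
  have hrel : ∀ A B : Finset (Fin N), A.card = k → B.card = k →
      ((A ∩ B).card + 1 = k ↔ ((G A) ∩ (G B)).card + 1 = k) := by
    intro A B hA hB
    have h1 : G A = (g ⟨A, hA⟩).1 := by rw [hGdef]; simp only [hA, dif_pos]
    have h2 : G B = (g ⟨B, hB⟩).1 := by rw [hGdef]; simp only [hB, dif_pos]
    rw [h1, h2]
    exact kneser_iff hk h3k g ⟨A, hA⟩ ⟨B, hB⟩
  obtain ⟨π, hπ⟩ := johnson k G hcard hinj hrel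
    (by rw [Fintype.card_fin]; omega)
  refine ⟨π, fun A => ?_⟩
  rw [← hGval A]
  exact hπ A.1 A.2

end Kneser


theorem kneser_lower {d k N : ℕ} (hk : 2 ≤ k) (hkN : k + 1 ≤ N)
    (ha : (d - 1) * (k + 1) < 2 * (N - 1)) (m : ℕ) (S : Finset (KV N k))
    (hSm : S.card = m) (hdet : IsDeterminingSet (kneserGraph N k) (S : Set (KV N k))) :
    d ≤ m := by
  classical
  by_contra hcon
  push_neg at hcon
  set vec : Fin N → Finset (KV N k) := fun x => S.filter (fun A => x ∈ A.1) with hvec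
  rcases Classical.em (Function.Injective vec) with hinj | hninj
  · -- counting case
    have key1 : ∑ x : Fin N, (vec x).card = m * k := by
      have h1 : ∀ x : Fin N, (vec x).card = ∑ A ∈ S, if x ∈ A.1 then 1 else 0 := by
        intro x
        rw [hvec]
        exact Finset.card_filter _ _
      rw [Finset.sum_congr rfl (fun x _ => h1 x), Finset.sum_comm]
      have h2 : ∀ A : KV N k, A ∈ S → ∑ x : Fin N, (if x ∈ A.1 then 1 else 0) = k := by
        intro A _
        rw [← Finset.card_filter]
        have : Finset.univ.filter (fun x => x ∈ A.1) = A.1 := by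
          ext z; simp
        rw [this, A.2]
      rw [Finset.sum_congr rfl h2, Finset.sum_const, smul_eq_mul, hSm]
    set A0 := Finset.univ.filter (fun x : Fin N => (vec x).card = 0) with hA0
    set A1 := Finset.univ.filter (fun x : Fin N => (vec x).card = 1) with hA1
    set A2 := Finset.univ.filter (fun x : Fin N => 2 ≤ (vec x).card) with hA2
    have hc0 : A0.card ≤ 1 := by
      rw [Finset.card_le_one]
      intro a ha' b hb'
      rw [hA0, Finset.mem_filter] at ha' hb'
      apply hinj
      rw [Finset.card_eq_zero.1 ha'.2, Finset.card_eq_zero.1 hb'.2]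
    have hc1 : A1.card ≤ m := by
      have : A1.card ≤ (S.powersetCard 1).card := by
        apply Finset.card_le_card_of_injOn vec
        · intro x hx
          rw [hA1, Finset.mem_coe, Finset.mem_filter] at hx
          rw [Finset.mem_coe, Finset.mem_powersetCard]
          exact ⟨Finset.filter_subset _ _, hx.2⟩
        · exact fun x _ y _ h => hinj h
      rwa [Finset.card_powersetCard, hSm, Nat.choose_one_right] at this
    have hd01 : Disjoint A0 A1 := by
      rw [Finset.disjoint_left]
      intro a ha' hb'
      rw [hA0, Finset.mem_filter] at ha'
      rw [hA1, Finset.mem_filter] at hb'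
      omega
    have hd02 : Disjoint (A0 ∪ A1) A2 := by
      rw [Finset.disjoint_left]
      intro a ha' hb'
      rw [Finset.mem_union, hA0, hA1, Finset.mem_filter, Finset.mem_filter] at ha'
      rw [hA2, Finset.mem_filter] at hb'
      rcases ha' with h | h <;> omega
    have hpart : A0.card + A1.card + A2.card = N := by
      have huniv : (A0 ∪ A1) ∪ A2 = Finset.univ := by
        ext x
        simp only [Finset.mem_union, hA0, hA1, hA2, Finset.mem_filter, Finset.mem_univ,
          true_and, iff_true]
        omega
      have := Finset.card_union_of_disjoint hd02
      rw [Finset.card_union_of_disjoint hd01] at this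
      rw [huniv, Finset.card_univ, Fintype.card_fin] at this
      omega
    have hW : A1.card + 2 * A2.card ≤ ∑ x : Fin N, (vec x).card := by
      have hsub : A1 ∪ A2 ⊆ Finset.univ := Finset.subset_univ _
      have hd12 : Disjoint A1 A2 := by
        rw [Finset.disjoint_left]
        intro a ha' hb'
        rw [hA1, Finset.mem_filter] at ha'
        rw [hA2, Finset.mem_filter] at hb'
        omega
      have h1 : ∑ x ∈ A1 ∪ A2, (vec x).card ≤ ∑ x : Fin N, (vec x).card :=
        Finset.sum_le_sum_of_subset hsub
      rw [Finset.sum_union hd12] at h1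
      have h2 : ∑ x ∈ A1, (vec x).card = A1.card := by
        have he : ∀ x ∈ A1, (vec x).card = 1 := fun x hx => by
          rw [hA1, Finset.mem_filter] at hx
          exact hx.2
        calc ∑ x ∈ A1, (vec x).card = ∑ _x ∈ A1, 1 := Finset.sum_congr rfl he
        _ = A1.card := by simp
      have h3 : 2 * A2.card ≤ ∑ x ∈ A2, (vec x).card := by
        rw [mul_comm, ← smul_eq_mul]
        apply Finset.card_nsmul_le_sum
        intro x hx
        rw [hA2, Finset.mem_filter] at hx
        exact hx.2
      omega
    have hle : m * k + m ≤ (d - 1) * (k + 1) := by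
      have h1 : m * (k + 1) ≤ (d - 1) * (k + 1) :=
        Nat.mul_le_mul_right (k + 1) (by omega)
      have h2 : m * (k + 1) = m * k + m := by ring
      omega
    omega
  · -- non-injective case: a transposition fixes S pointwise
    rw [Function.not_injective_iff] at hninj
    obtain ⟨x, y, hxy, hne⟩ := hninj
    have hmem : ∀ A : KV N k, A ∈ S → (x ∈ A.1 ↔ y ∈ A.1) := by
      intro A hA
      constructor
      · intro h
        have : A ∈ vec x := by rw [hvec]; exact Finset.mem_filter.2 ⟨hA, h⟩
        rw [hxy, hvec] at this
        exact (Finset.mem_filter.1 this).2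
      · intro h
        have : A ∈ vec y := by rw [hvec]; exact Finset.mem_filter.2 ⟨hA, h⟩
        rw [← hxy, hvec] at this
        exact (Finset.mem_filter.1 this).2
    set π := Equiv.swap x y with hπ
    have himg : ∀ A : KV N k, A ∈ S → A.1.image π = A.1 := by
      intro A hA
      ext z
      have hmi : z ∈ A.1.image π ↔ π z ∈ A.1 := by
        rw [Finset.mem_image]
        constructor
        · rintro ⟨w, hw, rfl⟩
          rwa [hπ, Equiv.swap_apply_self]
        · intro h
          exact ⟨π z, h, by rw [hπ, Equiv.swap_apply_self]⟩
      rw [hmi]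
      rcases Decidable.em (z = x) with rfl | hzx
      · rw [hπ, Equiv.swap_apply_left]
        exact (hmem A hA).symm
      · rcases Decidable.em (z = y) with rfl | hzy
        · rw [hπ, Equiv.swap_apply_right]
          exact hmem A hA
        · rw [hπ, Equiv.swap_apply_of_ne_of_ne hzx hzy]
    have hagree : ∀ v ∈ (S : Set (KV N k)), (permIso π : kneserGraph N k ≃g kneserGraph N k) v
        = (RelIso.refl _ : kneserGraph N k ≃g kneserGraph N k) v := by
      intro v hv
      rw [Finset.mem_coe] at hv
      apply Subtype.ext
      exact himg v hv
    have geq := hdet (permIso π) (RelIso.refl _) hagree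
    -- construct a moved vertex
    have hcard2 : ({x, y} : Finset (Fin N)).card = 2 := by
      rw [Finset.card_insert_of_notMem (by simpa using hne), Finset.card_singleton]
    have hsd : (Finset.univ \ ({x, y} : Finset (Fin N))).card = N - 2 := by
      rw [Finset.card_sdiff_of_subset (Finset.subset_univ _), Finset.card_univ, Fintype.card_fin, hcard2]
    obtain ⟨t, hts, htc⟩ := Finset.exists_subset_card_eq
      (show k - 1 ≤ (Finset.univ \ ({x, y} : Finset (Fin N))).card by omega)
    have hxt : x ∉ t := fun h => by
      have := hts h
      rw [Finset.mem_sdiff] at this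
      exact this.2 (Finset.mem_insert_self x {y})
    have hyt : y ∉ t := fun h => by
      have := hts h
      rw [Finset.mem_sdiff] at this
      exact this.2 (Finset.mem_insert_of_mem (Finset.mem_singleton_self y))
    have hA₀card : (insert x t).card = k := by
      rw [Finset.card_insert_of_notMem hxt, htc]
      omega
    set A₀ : KV N k := ⟨insert x t, hA₀card⟩ with hA₀
    have h1 : (permIso π : kneserGraph N k ≃g kneserGraph N k) A₀ = A₀ := by
      rw [geq]; rfl
    have h2 : y ∈ A₀.1.image π := by
      apply Finset.mem_image.2
      exact ⟨x, Finset.mem_insert_self x t, by rw [hπ, Equiv.swap_apply_left]⟩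
    have h3 : A₀.1.image π = A₀.1 := congrArg Subtype.val h1
    rw [h3] at h2
    rw [hA₀, Finset.mem_insert] at h2
    rcases h2 with h | h
    · exact hne h.symm
    · exact hyt h

section Construction
variable {d : ℕ} [NeZero d]

lemma zmod_cast_inj {x y : ℕ} (hx : x < d) (hy : y < d) :
    ((x : ZMod d) = (y : ZMod d)) ↔ x = y := by
  constructor
  · intro h
    have := congrArg ZMod.val h
    rwa [ZMod.val_cast_of_lt hx, ZMod.val_cast_of_lt hy] at this
  · intro h; rw [h]

lemma zmod_eq_cast_iff (c : ZMod d) {x : ℕ} (hx : x < d) : c = (x : ZMod d) ↔ c.val = x := by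
  constructor
  · intro h; rw [h, ZMod.val_cast_of_lt hx]
  · intro h; rw [← h, ZMod.natCast_zmod_val]

lemma zmod_cast_ne_zero {x : ℕ} (h0 : 0 < x) (hx : x < d) : (x : ZMod d) ≠ 0 := by
  rw [Ne, ZMod.natCast_eq_zero_iff]
  intro h
  exact absurd (Nat.le_of_dvd h0 h) (by omega)

/-- a pair at cyclic distance `s` -/
def epair (s : ℕ) (j : ZMod d) : Finset (ZMod d) := {j, j + (s : ZMod d)}

/-- the class of all pairs at distance `s` -/
def cls (d : ℕ) [NeZero d] (s : ℕ) : Finset (Finset (ZMod d)) :=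
  Finset.univ.image (epair s)

lemma pair_eq_cases {α : Type*} [DecidableEq α] {a b c e : α} (hab : a ≠ b)
    (h : ({a, b} : Finset α) = {c, e}) : (a = c ∧ b = e) ∨ (a = e ∧ b = c) := by
  have ha : a ∈ ({c, e} : Finset α) := h ▸ (Finset.mem_insert_self a {b})
  have hb : b ∈ ({c, e} : Finset α) := h ▸ (Finset.mem_insert_of_mem (Finset.mem_singleton_self b))
  have hc : c ∈ ({a, b} : Finset α) := h ▸ (Finset.mem_insert_self c {e})
  have he : e ∈ ({a, b} : Finset α) := h ▸ (Finset.mem_insert_of_mem (Finset.mem_singleton_self e))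
  simp only [Finset.mem_insert, Finset.mem_singleton] at ha hb hc he
  rcases ha with h1 | h1 <;> rcases hb with h2 | h2
  · exact absurd (h1.trans h2.symm) hab
  · exact Or.inl ⟨h1, h2⟩
  · exact Or.inr ⟨h1, h2⟩
  · exact absurd (h1.trans h2.symm) hab

section cls
variable {s : ℕ} (hs0 : 0 < s) (hsd : 2 * s < d)

include hs0 hsd

lemma epair_ne (j : ZMod d) : j ≠ j + (s : ZMod d) := by
  intro h
  have : (s : ZMod d) = 0 := by
    have := congrArg (fun z => z - j) h
    simpa using this.symm
  exact zmod_cast_ne_zero hs0 (by omega) this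

lemma epair_card (j : ZMod d) : (epair (d := d) s j).card = 2 := by
  rw [epair, Finset.card_insert_of_notMem (by simpa using epair_ne hs0 hsd j),
    Finset.card_singleton]

lemma epair_inj : Function.Injective (epair (d := d) s) := by
  intro j j' h
  rcases pair_eq_cases (epair_ne hs0 hsd j) h with ⟨h1, _⟩ | ⟨h1, h2⟩
  · exact h1
  · -- j = j' + s and j + s = j'
    exfalso
    have : (s : ZMod d) + (s : ZMod d) = 0 := by
      have := congrArg (fun z => z + (s : ZMod d)) h1
      rw [← h2] at this
      have h3 := congrArg (fun z => z - j) this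
      simpa [add_assoc, add_comm, add_left_comm] using h3.symm
    rw [← Nat.cast_add] at this
    exact zmod_cast_ne_zero (by omega) (by omega) this

lemma cls_card : (cls d s).card = d := by
  rw [cls, Finset.card_image_of_injective _ (epair_inj hs0 hsd), Finset.card_univ, ZMod.card]

lemma cls_mem_card {e : Finset (ZMod d)} (he : e ∈ cls d s) : e.card = 2 := by
  obtain ⟨j, _, rfl⟩ := Finset.mem_image.1 he
  exact epair_card hs0 hsd j

lemma cls_filter (c : ZMod d) :
    ((cls d s).filter (fun e => c ∈ e)).card = 2 := by
  rw [cls, Finset.filter_image]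
  have h1 : Finset.univ.filter (fun j : ZMod d => c ∈ epair (d := d) s j) = {c, c - (s : ZMod d)} := by
    ext j
    simp only [Finset.mem_filter, Finset.mem_univ, true_and, epair, Finset.mem_insert,
      Finset.mem_singleton]
    constructor
    · rintro (h | h)
      · exact Or.inl h.symm
      · exact Or.inr (by rw [h]; ring)
    · rintro (h | h)
      · exact Or.inl h.symm
      · exact Or.inr (by rw [h]; ring)
  rw [h1, Finset.card_image_of_injective _ (epair_inj hs0 hsd)]
  rw [Finset.card_insert_of_notMem, Finset.card_singleton]
  simp only [Finset.mem_singleton]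
  intro h
  have : (s : ZMod d) = 0 := by
    have := congrArg (fun z => c - z) h
    simpa using this.symm
  exact zmod_cast_ne_zero hs0 (by omega) this

end cls

lemma cls_disjoint {s s' : ℕ} (hs0 : 0 < s) (hs'0 : 0 < s') (hss : s + s' < d)
    (hsd : 2 * s < d) (hs'd : 2 * s' < d) (hne : s ≠ s') :
    Disjoint (cls d s) (cls d s') := by
  rw [Finset.disjoint_left]
  intro e he he'
  obtain ⟨j, _, rfl⟩ := Finset.mem_image.1 he
  obtain ⟨j', _, hj'⟩ := Finset.mem_image.1 he'
  rcases pair_eq_cases (epair_ne hs'0 hs'd j') hj' with ⟨h1, h2⟩ | ⟨h1, h2⟩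
  · -- j' = j, j' + s' = j + s
    rw [h1] at h2
    have : (s' : ZMod d) = (s : ZMod d) := by
      have := congrArg (fun z => z - j) h2
      simpa using this
    rw [zmod_cast_inj (by omega) (by omega)] at this
    exact hne this.symm
  · -- j' = j + s, j' + s' = j
    rw [h1] at h2
    have : ((s + s' : ℕ) : ZMod d) = 0 := by
      push_cast
      have := congrArg (fun z => z - j) h2
      simpa [add_assoc] using this
    exact zmod_cast_ne_zero (by omega) hss this
/-- matching rows -/
def mrow (a i : ℕ) : Finset (ZMod d) := {((a + 2*i : ℕ) : ZMod d), ((a + 2*i + 1 : ℕ) : ZMod d)}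

def matching (d : ℕ) [NeZero d] (a len : ℕ) : Finset (Finset (ZMod d)) :=
  (Finset.range (len / 2)).image (mrow a)

section matching
variable {a len : ℕ} (hal : a + len ≤ d)
include hal

lemma mrow_card {i : ℕ} (hi : i < len / 2) : (mrow (d := d) a i).card = 2 := by
  rw [mrow, Finset.card_insert_of_notMem, Finset.card_singleton]
  rw [Finset.mem_singleton, zmod_cast_inj (by omega) (by omega)]
  omega

lemma mrow_mem_iff {i : ℕ} (hi : i < len / 2) (c : ZMod d) :
    c ∈ mrow (d := d) a i ↔ (c.val = a + 2*i ∨ c.val = a + 2*i + 1) := by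
  rw [mrow, Finset.mem_insert, Finset.mem_singleton,
    zmod_eq_cast_iff c (by omega : a + 2*i < d), zmod_eq_cast_iff c (by omega : a + 2*i + 1 < d)]

lemma matching_card : (matching d a len).card = len / 2 := by
  rw [matching, Finset.card_image_of_injOn, Finset.card_range]
  intro i hi j hj h
  rw [Finset.mem_coe, Finset.mem_range] at hi hj
  have : ((a + 2*i : ℕ) : ZMod d) ∈ mrow (d := d) a j := by
    rw [← h, mrow]
    exact Finset.mem_insert_self _ _
  rw [mrow_mem_iff hal hj, ZMod.val_cast_of_lt (by omega)] at this
  omega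

lemma matching_mem_card {e : Finset (ZMod d)} (he : e ∈ matching d a len) : e.card = 2 := by
  obtain ⟨i, hi, rfl⟩ := Finset.mem_image.1 he
  exact mrow_card hal (Finset.mem_range.1 hi)

lemma matching_filter (c : ZMod d) :
    ((matching d a len).filter (fun e => c ∈ e)).card
      = if a ≤ c.val ∧ c.val < a + 2 * (len / 2) then 1 else 0 := by
  rw [matching, Finset.filter_image]
  have h1 : (Finset.range (len/2)).filter (fun i => c ∈ mrow (d := d) a i)
      = if a ≤ c.val ∧ c.val < a + 2 * (len / 2) then {(c.val - a)/2} else ∅ := by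
    ext i
    rw [Finset.mem_filter, Finset.mem_range]
    rcases Decidable.em (a ≤ c.val ∧ c.val < a + 2 * (len / 2)) with h | h
    · rw [if_pos h, Finset.mem_singleton]
      constructor
      · rintro ⟨hi, hm⟩
        rw [mrow_mem_iff hal hi] at hm
        omega
      · intro hi
        subst hi
        refine ⟨by omega, ?_⟩
        rw [mrow_mem_iff hal (by omega)]
        omega
    · rw [if_neg h]
      simp only [Finset.notMem_empty, iff_false, not_and]
      intro hi hm
      rw [mrow_mem_iff hal hi] at hm
      omega
  rw [h1]
  rcases Decidable.em (a ≤ c.val ∧ c.val < a + 2 * (len / 2)) with h | h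
  · rw [if_pos h, if_pos h, Finset.image_singleton, Finset.card_singleton]
  · rw [if_neg h, if_neg h, Finset.image_empty, Finset.card_empty]

end matching

/-- unit rows -/
def units (d : ℕ) [NeZero d] (u : ℕ) : Finset (Finset (ZMod d)) :=
  (Finset.range u).image (fun i : ℕ => ({(Nat.cast i : ZMod d)} : Finset (ZMod d)))

section units
variable {u : ℕ} (hu : u ≤ d)
include hu

lemma units_card : (units d u).card = u := by
  rw [units, Finset.card_image_of_injOn, Finset.card_range]
  intro i hi j hj h
  rw [Finset.mem_coe, Finset.mem_range] at hi hj
  rw [Finset.singleton_injective.eq_iff, zmod_cast_inj (by omega) (by omega)] at h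
  exact h

lemma units_filter (c : ZMod d) :
    ((units d u).filter (fun e => c ∈ e)).card = if c.val < u then 1 else 0 := by
  rw [units, Finset.filter_image]
  have h1 : (Finset.range u).filter (fun i : ℕ => c ∈ ({(Nat.cast i : ZMod d)} : Finset (ZMod d)))
      = if c.val < u then {c.val} else ∅ := by
    ext i
    rw [Finset.mem_filter, Finset.mem_range, Finset.mem_singleton]
    rcases Decidable.em (c.val < u) with h | h
    · rw [if_pos h, Finset.mem_singleton]
      constructor
      · rintro ⟨hi, hm⟩
        rw [zmod_eq_cast_iff c (by omega)] at hm
        omega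
      · intro hi
        subst hi
        exact ⟨h, by rw [ZMod.natCast_zmod_val]⟩
    · rw [if_neg h]
      simp only [Finset.notMem_empty, iff_false, not_and]
      intro hi hm
      rw [zmod_eq_cast_iff c (by omega)] at hm
      omega
  rw [h1]
  rcases Decidable.em (c.val < u) with h | h
  · rw [if_pos h, if_pos h, Finset.image_singleton, Finset.card_singleton]
  · rw [if_neg h, if_neg h, Finset.image_empty, Finset.card_empty]

end units
lemma filter_sdiff'' {α : Type*} [DecidableEq α] (p : α → Prop) [DecidablePred p]
    (X M : Finset α) : (X \ M).filter p = X.filter p \ M.filter p := by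
  ext x
  simp only [Finset.mem_filter, Finset.mem_sdiff]
  tauto

lemma units_mem_card {u : ℕ} {e : Finset (ZMod d)} (he : e ∈ units d u) : e.card = 1 := by
  obtain ⟨i, _, rfl⟩ := Finset.mem_image.1 he
  exact Finset.card_singleton _

theorem exists_family_evenk {k N : ℕ} (hk : 2 ≤ k) (hke : Even k) (hkd : k + 1 ≤ d)
    (h1 : d * k + 3 ≤ 2 * N) (h2 : 2 * N ≤ d * (k + 1)) :
    ∃ R : Finset (Finset (ZMod d)), R.card = N ∧
      ∀ c : ZMod d, (R.filter (fun e => c ∈ e)).card = k := by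
  obtain ⟨q, hq⟩ := hke
  have hq' : k = 2 * q := by omega
  have hdq : d * k = 2 * (q * d) := by rw [hq']; ring
  have hdk1 : d * (k + 1) = d * k + d := by ring
  have hddk : d ≤ d * k := by
    calc d = d * 1 := by ring
    _ ≤ d * k := Nat.mul_le_mul_left d (by omega)
  set u : ℕ := 2 * N - d * k with hu
  have hud : u ≤ d := by omega
  have hur : ∃ r, u = 2 * r := ⟨N - q * d, by omega⟩
  obtain ⟨r, hr⟩ := hur
  have hd3 : 3 ≤ d := by omega
  -- the classes
  have hcls : ∀ s ∈ Finset.Icc 1 q, 0 < s ∧ 2 * s < d := by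
    intro s hs
    rw [Finset.mem_Icc] at hs
    omega
  have hpd : ∀ s ∈ Finset.Icc 1 q, ∀ s' ∈ Finset.Icc 1 q, s ≠ s' →
      Disjoint (cls d s) (cls d s') := by
    intro s hs s' hs' hne
    rw [Finset.mem_Icc] at hs hs'
    exact cls_disjoint (by omega) (by omega) (by omega) (by omega) (by omega) hne
  set X := (Finset.Icc 1 q).biUnion (fun s => cls d s) with hX
  have hXcard : X.card = q * d := by
    rw [hX, Finset.card_biUnion hpd]
    have : ∀ s ∈ Finset.Icc 1 q, (cls d s).card = d := by
      intro s hs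
      obtain ⟨h1', h2'⟩ := hcls s hs
      exact cls_card h1' h2'
    rw [Finset.sum_congr rfl this, Finset.sum_const, Nat.card_Icc, smul_eq_mul,
      Nat.add_sub_cancel]
  set M := matching d 0 u with hM
  have hMsub : M ⊆ X := by
    intro e he
    obtain ⟨i, hi, rfl⟩ := Finset.mem_image.1 he
    rw [Finset.mem_range] at hi
    have hrow : mrow (d := d) 0 i = epair 1 ((0 + 2*i : ℕ) : ZMod d) := by
      have h2 : ((0 + 2*i + 1 : ℕ) : ZMod d) = ((0 + 2*i : ℕ) : ZMod d) + ((1 : ℕ) : ZMod d) := by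
        push_cast
        ring
      rw [mrow, epair, h2]
    rw [hX, Finset.mem_biUnion]
    refine ⟨1, Finset.mem_Icc.2 ⟨le_refl 1, by omega⟩, ?_⟩
    rw [hrow, cls]
    exact Finset.mem_image_of_mem _ (Finset.mem_univ _)
  have hMcard : M.card = r := by
    rw [hM, matching_card (by omega : (0:ℕ) + u ≤ d)]
    omega
  set R := units d u ∪ (X \ M) with hR
  have hdisj : Disjoint (units d u) (X \ M) := by
    rw [Finset.disjoint_left]
    intro e he he'
    have h1' := units_mem_card he
    have he'' := (Finset.mem_sdiff.1 he').1
    rw [hX, Finset.mem_biUnion] at he''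
    obtain ⟨s, hs, hes⟩ := he''
    obtain ⟨hs1, hs2⟩ := hcls s hs
    have := cls_mem_card hs1 hs2 hes
    omega
  refine ⟨R, ?_, ?_⟩
  · have e1 : R.card = u + (q * d - r) := by
      rw [hR, Finset.card_union_of_disjoint hdisj, units_card hud,
        Finset.card_sdiff_of_subset hMsub, hXcard, hMcard]
    rw [e1]
    omega
  · intro c
    rw [hR, Finset.filter_union, Finset.card_union_of_disjoint
      (Finset.disjoint_filter_filter hdisj), units_filter hud c]
    rw [filter_sdiff'', Finset.card_sdiff_of_subset (Finset.filter_subset_filter _ hMsub)]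
    have hXf : (X.filter (fun e => c ∈ e)).card = 2 * q := by
      rw [hX, Finset.filter_biUnion, Finset.card_biUnion]
      · have : ∀ s ∈ Finset.Icc 1 q, ((cls d s).filter (fun e => c ∈ e)).card = 2 := by
          intro s hs
          obtain ⟨h1', h2'⟩ := hcls s hs
          exact cls_filter h1' h2' c
        rw [Finset.sum_congr rfl this, Finset.sum_const, Nat.card_Icc, smul_eq_mul]
        omega
      · intro s hs s' hs' hne
        exact Finset.disjoint_filter_filter (hpd s hs s' hs' hne)
    have hMf : (M.filter (fun e => c ∈ e)).card = if c.val < u then 1 else 0 := by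
      rw [hM, matching_filter (by omega : (0:ℕ) + u ≤ d) c]
      congr 1
      simp only [eq_iff_iff]
      omega
    rw [hXf, hMf]
    split_ifs with h
    · omega
    · omega

theorem exists_family_oddk {k N : ℕ} (hk : 2 ≤ k) (hke : Odd k) (hkd : k + 2 ≤ d)
    (h1 : d * k + 3 ≤ 2 * N) (h2 : 2 * N ≤ d * (k + 1)) :
    ∃ R : Finset (Finset (ZMod d)), R.card = N ∧
      ∀ c : ZMod d, (R.filter (fun e => c ∈ e)).card = k := by
  obtain ⟨q', hq⟩ := hke
  set q : ℕ := q' + 1 with hqdef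
  have hq' : k + 1 = 2 * q := by omega
  have hq2 : 2 ≤ q := by omega
  have hdq : d * (k + 1) = 2 * (q * d) := by rw [hq']; ring
  have hdk1 : d * (k + 1) = d * k + d := by ring
  have hddk : d ≤ d * k := by
    calc d = d * 1 := by ring
    _ ≤ d * k := Nat.mul_le_mul_left d (by omega)
  set u : ℕ := 2 * N - d * k with hu
  have hud : u ≤ d := by omega
  have hw : ∃ w, d - u = 2 * w := ⟨q * d - N, by omega⟩
  obtain ⟨w, hwe⟩ := hw
  have hd3 : 3 ≤ d := by omega
  have hcls : ∀ s ∈ Finset.Icc 2 q, 0 < s ∧ 2 * s < d := by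
    intro s hs
    rw [Finset.mem_Icc] at hs
    omega
  have hpd : ∀ s ∈ Finset.Icc 2 q, ∀ s' ∈ Finset.Icc 2 q, s ≠ s' →
      Disjoint (cls d s) (cls d s') := by
    intro s hs s' hs' hne
    rw [Finset.mem_Icc] at hs hs'
    exact cls_disjoint (by omega) (by omega) (by omega) (by omega) (by omega) hne
  set X := (Finset.Icc 2 q).biUnion (fun s => cls d s) with hX
  have hXcard : X.card = (q - 1) * d := by
    rw [hX, Finset.card_biUnion hpd]
    have : ∀ s ∈ Finset.Icc 2 q, (cls d s).card = d := by
      intro s hs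
      obtain ⟨h1', h2'⟩ := hcls s hs
      exact cls_card h1' h2'
    rw [Finset.sum_congr rfl this, Finset.sum_const, Nat.card_Icc, smul_eq_mul]
    have h9 : q + 1 - 2 = q - 1 := by omega
    rw [h9]
  set M := matching d u (d - u) with hM
  have hMX : Disjoint X M := by
    rw [Finset.disjoint_left]
    intro e he he'
    rw [hX, Finset.mem_biUnion] at he
    obtain ⟨s, hs, hes⟩ := he
    rw [Finset.mem_Icc] at hs
    obtain ⟨j, _, hj⟩ := Finset.mem_image.1 hes
    obtain ⟨i, hi, hie⟩ := Finset.mem_image.1 he'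
    rw [Finset.mem_range] at hi
    have hrow : mrow (d := d) u i = epair 1 ((u + 2*i : ℕ) : ZMod d) := by
      have he2 : ((u + 2*i + 1 : ℕ) : ZMod d) = ((u + 2*i : ℕ) : ZMod d) + ((1 : ℕ) : ZMod d) := by
        push_cast
        ring
      rw [mrow, epair, he2]
    rw [← hie, hrow] at hj
    -- epair s j = epair 1 x
    set x := ((u + 2*i : ℕ) : ZMod d) with hx
    rcases pair_eq_cases (epair_ne (by omega : 0 < s) (by omega : 2 * s < d) j) hj
      with ⟨hh1, hh2⟩ | ⟨hh1, hh2⟩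
    · -- j = x, j + s = x + 1
      rw [hh1] at hh2
      have : (s : ZMod d) = ((1:ℕ) : ZMod d) := by
        push_cast
        linear_combination hh2
      rw [zmod_cast_inj (by omega) (by omega)] at this
      omega
    · -- j = x + 1, j + s = x
      rw [hh1] at hh2
      have : ((s + 1 : ℕ) : ZMod d) = 0 := by
        push_cast
        linear_combination hh2
      exact zmod_cast_ne_zero (by omega) (by omega) this
  have hMcard : M.card = w := by
    rw [hM, matching_card (by omega : u + (d - u) ≤ d)]
    omega
  set R := units d u ∪ (X ∪ M) with hR
  have hdisj : Disjoint (units d u) (X ∪ M) := by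
    rw [Finset.disjoint_left]
    intro e he he'
    have h1' := units_mem_card he
    rcases Finset.mem_union.1 he' with h | h
    · rw [hX, Finset.mem_biUnion] at h
      obtain ⟨s, hs, hes⟩ := h
      obtain ⟨hs1, hs2⟩ := hcls s hs
      have := cls_mem_card hs1 hs2 hes
      omega
    · have := matching_mem_card (by omega : u + (d - u) ≤ d) h
      omega
  refine ⟨R, ?_, ?_⟩
  · have e1 : R.card = u + ((q - 1) * d + w) := by
      rw [hR, Finset.card_union_of_disjoint hdisj, Finset.card_union_of_disjoint hMX,
        units_card hud, hXcard, hMcard]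
    rw [e1]
    have e2 : q * d = (q - 1) * d + d := by
      have h9 : q = (q - 1) + 1 := by omega
      calc q * d = ((q - 1) + 1) * d := by rw [← h9]
      _ = (q - 1) * d + d := by ring
    omega
  · intro c
    have hcv : c.val < d := ZMod.val_lt c
    have hXf : (X.filter (fun e => c ∈ e)).card = 2 * (q - 1) := by
      rw [hX, Finset.filter_biUnion, Finset.card_biUnion]
      · have : ∀ s ∈ Finset.Icc 2 q, ((cls d s).filter (fun e => c ∈ e)).card = 2 := by
          intro s hs
          obtain ⟨h1', h2'⟩ := hcls s hs
          exact cls_filter h1' h2' c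
        rw [Finset.sum_congr rfl this, Finset.sum_const, Nat.card_Icc, smul_eq_mul]
        omega
      · intro s hs s' hs' hne
        exact Finset.disjoint_filter_filter (hpd s hs s' hs' hne)
    have hMf : (M.filter (fun e => c ∈ e)).card = if u ≤ c.val then 1 else 0 := by
      rw [hM, matching_filter (by omega : u + (d - u) ≤ d) c]
      congr 1
      simp only [eq_iff_iff]
      omega
    rw [hR, Finset.filter_union, Finset.card_union_of_disjoint
      (Finset.disjoint_filter_filter hdisj), units_filter hud c, Finset.filter_union,
      Finset.card_union_of_disjoint (Finset.disjoint_filter_filter hMX), hXf, hMf]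
    split_ifs with hc1 hc2
    · omega
    · omega
    · omega
    · omega

lemma pairs_filter (c : ZMod d) :
    (((Finset.univ : Finset (ZMod d)).powersetCard 2).filter (fun e => c ∈ e)).card = d - 1 := by
  have h : ((Finset.univ : Finset (ZMod d)).erase c).card
      = (((Finset.univ : Finset (ZMod d)).powersetCard 2).filter (fun e => c ∈ e)).card := by
    apply Finset.card_bij (fun x _ => ({c, x} : Finset (ZMod d)))
    · intro x hx
      have hxc : x ≠ c := Finset.ne_of_mem_erase hx
      rw [Finset.mem_filter, Finset.mem_powersetCard]
      refine ⟨⟨Finset.subset_univ _, ?_⟩, Finset.mem_insert_self _ _⟩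
      rw [Finset.card_insert_of_notMem (by simpa using hxc.symm), Finset.card_singleton]
    · intro x hx y hy he
      have hxc : x ≠ c := Finset.ne_of_mem_erase hx
      rcases pair_eq_cases (by exact fun h => hxc h.symm : c ≠ x) he with ⟨_, h2⟩ | ⟨h1, h2⟩
      · exact h2
      · exact absurd h2 hxc
    · intro e he
      rw [Finset.mem_filter, Finset.mem_powersetCard] at he
      have h1 : (e.erase c).card = 1 := by
        rw [Finset.card_erase_of_mem he.2, he.1.2]
      obtain ⟨x, hx⟩ := Finset.card_eq_one.1 h1
      have hxe : x ∈ e.erase c := hx ▸ Finset.mem_singleton_self x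
      rw [Finset.mem_erase] at hxe
      refine ⟨x, Finset.mem_erase.2 ⟨hxe.1, Finset.mem_univ x⟩, ?_⟩
      apply Finset.eq_of_subset_of_card_le
      · exact Finset.insert_subset he.2 (Finset.singleton_subset_iff.2 hxe.2)
      · rw [he.1.2, Finset.card_insert_of_notMem (by simpa using Ne.symm hxe.1),
          Finset.card_singleton]
  rw [← h, Finset.card_erase_of_mem (Finset.mem_univ c), Finset.card_univ, ZMod.card]

theorem exists_family_oddk_top {k N : ℕ} (hk : 2 ≤ k) (hke : Odd k) (hkd : k + 1 = d)
    (h1 : d * k + 3 ≤ 2 * N) (h2 : 2 * N ≤ d * (k + 1)) :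
    ∃ R : Finset (Finset (ZMod d)), R.card = N ∧
      ∀ c : ZMod d, (R.filter (fun e => c ∈ e)).card = k := by
  have hdk1 : d * (k + 1) = d * k + d := by ring
  have hddk : d ≤ d * k := by
    calc d = d * 1 := by ring
    _ ≤ d * k := Nat.mul_le_mul_left d (by omega)
  set u : ℕ := 2 * N - d * k with hu
  have hud : u ≤ d := by omega
  have hde : ∃ d', d = 2 * d' := by
    rcases Nat.even_or_odd d with h | h
    · obtain ⟨d', hd'⟩ := h
      exact ⟨d', by omega⟩
    · exfalso
      obtain ⟨q', hq'⟩ := hke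
      obtain ⟨p', hp'⟩ := h
      omega
  obtain ⟨d2, hd2⟩ := hde
  have hur : ∃ r, u = 2 * r := by
    -- u = 2N - dk, d even so dk even
    refine ⟨N - d2 * k, ?_⟩
    have : d * k = 2 * (d2 * k) := by rw [hd2]; ring
    omega
  obtain ⟨r, hr⟩ := hur
  have hd3 : 3 ≤ d := by omega
  set P := ((Finset.univ : Finset (ZMod d)).powersetCard 2) with hP
  have hPcard : P.card = d * k / 2 := by
    rw [hP, Finset.card_powersetCard, Finset.card_univ, ZMod.card, Nat.choose_two_right]
    have h9 : d - 1 = k := by omega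
    rw [h9]
  set M := matching d 0 u with hM
  have hMsub : M ⊆ P := by
    intro e he
    rw [hP, Finset.mem_powersetCard]
    exact ⟨Finset.subset_univ _, matching_mem_card (by omega : (0:ℕ) + u ≤ d) he⟩
  have hMcard : M.card = r := by
    rw [hM, matching_card (by omega : (0:ℕ) + u ≤ d)]
    omega
  set R := units d u ∪ (P \ M) with hR
  have hdisj : Disjoint (units d u) (P \ M) := by
    rw [Finset.disjoint_left]
    intro e he he'
    have h1' := units_mem_card he
    have he'' := (Finset.mem_sdiff.1 he').1
    rw [hP, Finset.mem_powersetCard] at he''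
    omega
  refine ⟨R, ?_, ?_⟩
  · have e1 : R.card = u + (d * k / 2 - r) := by
      rw [hR, Finset.card_union_of_disjoint hdisj, units_card hud,
        Finset.card_sdiff_of_subset hMsub, hPcard, hMcard]
    rw [e1]
    have e2 : d * k = 2 * (d2 * k) := by rw [hd2]; ring
    omega
  · intro c
    have hcv : c.val < d := ZMod.val_lt c
    have hPf : (P.filter (fun e => c ∈ e)).card = d - 1 := pairs_filter c
    have hMf : (M.filter (fun e => c ∈ e)).card = if c.val < u then 1 else 0 := by
      rw [hM, matching_filter (by omega : (0:ℕ) + u ≤ d) c]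
      congr 1
      simp only [eq_iff_iff]
      omega
    rw [hR, Finset.filter_union, Finset.card_union_of_disjoint
      (Finset.disjoint_filter_filter hdisj), units_filter hud c]
    rw [filter_sdiff'', Finset.card_sdiff_of_subset (Finset.filter_subset_filter _ hMsub), hPf, hMf]
    split_ifs with h
    · omega
    · omega

theorem exists_family (k N : ℕ) (hk : 2 ≤ k) (hkd : k + 1 ≤ d)
    (h1 : d * k + 3 ≤ 2 * N) (h2 : 2 * N ≤ d * (k + 1)) :
    ∃ R : Finset (Finset (ZMod d)), R.card = N ∧
      ∀ c : ZMod d, (R.filter (fun e => c ∈ e)).card = k := by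
  rcases Nat.even_or_odd k with he | ho
  · exact exists_family_evenk hk he hkd h1 h2
  · rcases (by omega : k + 2 ≤ d ∨ k + 1 = d) with h | h
    · exact exists_family_oddk hk ho h h1 h2
    · exact exists_family_oddk_top hk ho h h1 h2

end Construction

theorem stmt_13 (d k n : ℕ) (hk : 0 < k) (hk3 : 3 ≤ k + 1) (hkd : k + 1 ≤ d)
    (hn1 : (d - 1) * (k + 1) / 2 < n) (hn2 : n < d * (k + 1) / 2) :
    detNumber (kneserGraph (n + 1) k) = d := by
  classical
  set N := n + 1 with hNdef
  have hk2 : 2 ≤ k := by omega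
  have ha1 : (d - 1) * (k + 1) < 2 * n := by omega
  have ha2 : 2 * n + 2 ≤ d * (k + 1) := by omega
  have hpq : (d - 1) * (k + 1) + (k + 1) = d * (k + 1) := by
    have h9 : d - 1 + 1 = d := by omega
    calc (d - 1) * (k + 1) + (k + 1) = ((d - 1) + 1) * (k + 1) := by ring
    _ = d * (k + 1) := by rw [h9]
  have hdk1 : d * (k + 1) = d * k + d := by ring
  have hb : k * (k + 1) ≤ (d - 1) * (k + 1) := Nat.mul_le_mul_right _ (by omega)
  have hkk2 : k * (k + 1) = k * k + k := by ring
  obtain ⟨m, hm⟩ := Nat.even_mul_succ_self k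
  have hsq : 6 * k ≤ k * k + k + 6 := by
    rcases le_or_gt k 4 with h | h
    · interval_cases k <;> omega
    · have : 5 * k ≤ k * k := Nat.mul_le_mul_right k (by omega)
      omega
  have h3k : 3 * k ≤ N + 1 := by omega
  have hNk : 2 * k + 1 ≤ N := by omega
  have hN2 : k + 1 ≤ N := by omega
  have hcon1 : d * k + 3 ≤ 2 * N := by omega
  have hcon2 : 2 * N ≤ d * (k + 1) := by omega
  haveI : NeZero d := ⟨by omega⟩
  obtain ⟨R, hRcard, hRcol⟩ := exists_family (d := d) k N hk2 hkd hcon1 hcon2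
  set e := Finset.equivFinOfCardEq hRcard with he
  set v : Fin N → Finset (ZMod d) := fun i => (e.symm i).1 with hv
  have hvinj : Function.Injective v := by
    intro i j h
    apply e.symm.injective
    exact Subtype.ext h
  have hAcard : ∀ c : ZMod d, (Finset.univ.filter (fun x : Fin N => c ∈ v x)).card = k := by
    intro c
    rw [← hRcol c]
    apply Finset.card_bij (fun x _ => v x)
    · intro x hx
      rw [Finset.mem_filter] at hx ⊢
      exact ⟨(e.symm x).2, hx.2⟩
    · intro x _ y _ h
      exact hvinj h
    · intro s hs
      rw [Finset.mem_filter] at hs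
      refine ⟨e ⟨s, hs.1⟩, ?_, ?_⟩
      · rw [Finset.mem_filter]
        refine ⟨Finset.mem_univ _, ?_⟩
        rw [hv]
        simp only [Equiv.symm_apply_apply]
        exact hs.2
      · rw [hv]
        simp only [Equiv.symm_apply_apply]
  set SA : ZMod d → KV N k := fun c => ⟨Finset.univ.filter (fun x => c ∈ v x), hAcard c⟩
    with hSA
  set S : Finset (KV N k) := Finset.univ.image SA with hS
  have hScard : S.card ≤ d := by
    calc S.card ≤ (Finset.univ : Finset (ZMod d)).card := Finset.card_image_le
    _ = d := by rw [Finset.card_univ, ZMod.card]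
  have hmemv : ∀ (c : ZMod d) (y : Fin N), c ∈ v y ↔ y ∈ (SA c).1 := by
    intro c y
    rw [hSA]
    simp only [Finset.mem_filter, Finset.mem_univ, true_and]
  have hdet : IsDeterminingSet (kneserGraph N k) (S : Set (KV N k)) := by
    intro g h hagree
    set f : kneserGraph N k ≃g kneserGraph N k := g.trans h.symm with hf
    have hfv : ∀ A : KV N k, f A = h.symm (g A) := fun A => rfl
    have hfix : ∀ c : ZMod d, f (SA c) = SA c := by
      intro c
      have hmem : SA c ∈ (S : Set (KV N k)) := by
        rw [Finset.mem_coe, hS]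
        exact Finset.mem_image_of_mem _ (Finset.mem_univ c)
      have := hagree _ hmem
      rw [hfv, this]
      exact h.symm_apply_apply _
    obtain ⟨π, hπ⟩ := kneser_aut hk2 h3k f
    have hπfix : ∀ x : Fin N, π x = x := by
      intro x
      have himg : ∀ c : ZMod d, (SA c).1.image π = (SA c).1 := by
        intro c
        have h1 := hπ (SA c)
        rw [hfix c] at h1
        exact h1.symm
      have hvv : v (π x) = v x := by
        ext c
        rw [hmemv c (π x), hmemv c x]
        constructor
        · intro hc
          rw [← himg c] at hc
          obtain ⟨y, hy, hyx⟩ := Finset.mem_image.1 hc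
          rwa [← π.injective hyx]
        · intro hc
          rw [← himg c]
          exact Finset.mem_image_of_mem _ hc
      exact hvinj hvv
    have hfid : ∀ A : KV N k, f A = A := by
      intro A
      apply Subtype.ext
      rw [hπ A]
      have : A.1.image π = A.1.image id := Finset.image_congr (fun x _ => hπfix x)
      rw [this, Finset.image_id]
    apply DFunLike.ext
    intro A
    have h1 := hfid A
    rw [hfv] at h1
    have := congrArg h h1
    rwa [h.apply_symm_apply] at this
  have hlow : ∀ m', (∃ T : Finset (KV N k), T.card = m' ∧
      IsDeterminingSet (kneserGraph N k) (T : Set (KV N k))) → d ≤ m' := by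
    rintro m' ⟨T, hT1, hT2⟩
    exact kneser_lower hk2 hN2 (by omega : (d - 1) * (k + 1) < 2 * (N - 1)) m' T hT1 hT2
  have hmem : S.card ∈ {m | ∃ T : Finset (KV N k), T.card = m ∧
      IsDeterminingSet (kneserGraph N k) (T : Set (KV N k))} := ⟨S, rfl, hdet⟩
  have hSd : S.card = d := le_antisymm hScard (hlow _ hmem)
  rw [detNumber]
  apply le_antisymm
  · exact Nat.sInf_le (hSd ▸ hmem)
  · exact le_csInf ⟨S.card, hmem⟩ (fun b hb => hlow b hb)
end

section
/- The only Kneser graph K_{n:k} with n ≥ 2k+1 whose determining number equals 2 is K_{3:1}. -/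
def kneserPermIso (n k : ℕ) (σ : Equiv.Perm (Fin n)) : kneserGraph n k ≃g kneserGraph n k where
  toEquiv := σ.finsetCongr.subtypeEquiv (fun s => by simp [Equiv.finsetCongr_apply])
  map_rel_iff' := by
    intro a b
    simp only [kneserGraph, Equiv.subtypeEquiv_apply, Equiv.finsetCongr_apply, ne_eq,
      Subtype.mk.injEq, Finset.disjoint_map, Subtype.ext_iff,
      (Finset.map_injective σ.toEmbedding).eq_iff]

lemma kneserPermIso_apply (n k : ℕ) (σ : Equiv.Perm (Fin n))
    (v : {s : Finset (Fin n) // s.card = k}) :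
    ((kneserPermIso n k σ) v : Finset (Fin n)) = v.1.map σ.toEmbedding := rfl

lemma map_swap_eq {n : ℕ} (A : Finset (Fin n)) (x y : Fin n) (h : x ∈ A ↔ y ∈ A) :
    A.map (Equiv.swap x y).toEmbedding = A := by
  ext z
  simp only [Finset.mem_map, Equiv.coe_toEmbedding]
  constructor
  · rintro ⟨w, hw, rfl⟩
    rcases eq_or_ne w x with rfl | hx
    · simpa [Equiv.swap_apply_left] using h.mp hw
    rcases eq_or_ne w y with rfl | hy
    · simpa [Equiv.swap_apply_right] using h.mpr hw
    · rwa [Equiv.swap_apply_of_ne_of_ne hx hy]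
  · intro hz
    refine ⟨Equiv.swap x y z, ?_, by simp⟩
    rcases eq_or_ne z x with rfl | hx
    · simpa [Equiv.swap_apply_left] using h.mp hz
    rcases eq_or_ne z y with rfl | hy
    · simpa [Equiv.swap_apply_right] using h.mpr hz
    · rwa [Equiv.swap_apply_of_ne_of_ne hx hy]

lemma kneserPermIso_fix {n k : ℕ} (x y : Fin n) (A : {s : Finset (Fin n) // s.card = k})
    (h : x ∈ A.1 ↔ y ∈ A.1) : (kneserPermIso n k (Equiv.swap x y)) A = A := by
  apply Subtype.ext
  rw [kneserPermIso_apply]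
  exact map_swap_eq A.1 x y h

lemma exists_moved {n k : ℕ} (hk : 1 ≤ k) (hkn : k + 1 ≤ n) (x y : Fin n) (hxy : x ≠ y) :
    ∃ v : {s : Finset (Fin n) // s.card = k},
      (kneserPermIso n k (Equiv.swap x y)) v ≠ v := by
  have hcard : ({x, y} : Finset (Fin n)).card = 2 := by
    rw [Finset.card_insert_of_notMem (by simpa using hxy), Finset.card_singleton]
  have hsub : k - 1 ≤ (Finset.univ \ {x, y} : Finset (Fin n)).card := by
    rw [Finset.card_sdiff_of_subset (Finset.subset_univ _), hcard, Finset.card_univ, Fintype.card_fin]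
    omega
  obtain ⟨D, hDsub, hDcard⟩ := Finset.exists_subset_card_eq hsub
  have hxD : x ∉ D := fun h => by simpa using (hDsub h)
  have hyD : y ∉ D := fun h => by simpa using (hDsub h)
  have hC : (insert x D).card = k := by
    rw [Finset.card_insert_of_notMem hxD, hDcard]; omega
  refine ⟨⟨insert x D, hC⟩, ?_⟩
  intro hcon
  have hval := congrArg (Subtype.val) hcon
  rw [kneserPermIso_apply] at hval
  have hy : y ∈ (insert x D).map (Equiv.swap x y).toEmbedding :=
    Finset.mem_map.mpr ⟨x, Finset.mem_insert_self _ _, by simp⟩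
  rw [hval] at hy
  simp only [Finset.mem_insert] at hy
  rcases hy with h | h
  · exact hxy h.symm
  · exact hyD h

lemma exists_good_pair {n k : ℕ} (hk : 1 ≤ k) (hn : 2 * k + 1 ≤ n) (hne : ¬(n = 3 ∧ k = 1))
    (A B : {s : Finset (Fin n) // s.card = k}) :
    ∃ x y : Fin n, x ≠ y ∧ (x ∈ A.1 ↔ y ∈ A.1) ∧ (x ∈ B.1 ↔ y ∈ B.1) := by
  rcases Nat.lt_or_ge k 2 with hk2 | hk2
  · have hk1 : k = 1 := by omega
    have hn4 : 4 ≤ n := by omega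
    have hcard : 1 < (Finset.univ \ (A.1 ∪ B.1)).card := by
      have h1 : (A.1 ∪ B.1).card ≤ 2 := by
        calc (A.1 ∪ B.1).card ≤ A.1.card + B.1.card := Finset.card_union_le _ _
        _ = 2 := by rw [A.2, B.2, hk1]
      rw [Finset.card_sdiff_of_subset (Finset.subset_univ _), Finset.card_univ, Fintype.card_fin]
      omega
    obtain ⟨x, hx, y, hy, hxy⟩ := Finset.one_lt_card.mp hcard
    simp only [Finset.mem_sdiff, Finset.mem_union] at hx hy
    push_neg at hx hy
    exact ⟨x, y, hxy, by simp [hx.2.1, hy.2.1], by simp [hx.2.2, hy.2.2]⟩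
  · have hn5 : 5 ≤ n := by omega
    have hlt : Fintype.card (Bool × Bool) < Fintype.card (Fin n) := by
      simp; omega
    obtain ⟨x, y, hxy, hf⟩ := Fintype.exists_ne_map_eq_of_card_lt
      (fun z : Fin n => ((decide (z ∈ A.1), decide (z ∈ B.1)) : Bool × Bool)) hlt
    simp only [Prod.mk.injEq, decide_eq_decide] at hf
    exact ⟨x, y, hxy, hf.1, hf.2⟩

lemma not_det_of_good {n k : ℕ} (hk : 1 ≤ k) (hkn : k + 1 ≤ n)
    (S : Finset {s : Finset (Fin n) // s.card = k})
    (x y : Fin n) (hxy : x ≠ y) (hfix : ∀ v ∈ S, x ∈ v.1 ↔ y ∈ v.1) :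
    ¬ IsDeterminingSet (kneserGraph n k) (S : Set _) := by
  intro hdet
  obtain ⟨w, hw⟩ := exists_moved hk hkn x y hxy
  have heq := hdet (kneserPermIso n k (Equiv.swap x y)) (RelIso.refl _)
    (fun v hv => kneserPermIso_fix x y v (hfix v hv))
  exact hw (by rw [heq]; rfl)

lemma univ_det {V : Type*} [Fintype V] (G : SimpleGraph V) :
    IsDeterminingSet G ((Finset.univ : Finset V) : Set V) :=
  fun g h hg => RelIso.ext fun v => hg v (by simp)

lemma fix3 {α : Type*} [Fintype α] [DecidableEq α] (h3 : Fintype.card α = 3)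
    (e : α ≃ α) (a b : α) (hab : a ≠ b) (ha : e a = a) (hb : e b = b) (c : α) : e c = c := by
  rcases eq_or_ne c a with rfl | hca
  · exact ha
  rcases eq_or_ne c b with rfl | hcb
  · exact hb
  have hcard : ({a, b, c} : Finset α).card = 3 := by
    rw [Finset.card_insert_of_notMem (by simp [hab, hca.symm]),
      Finset.card_insert_of_notMem (by simp [hcb.symm]), Finset.card_singleton]
  have huniv : ({a, b, c} : Finset α) = Finset.univ :=
    Finset.eq_univ_of_card _ (by rw [hcard, h3])
  have hm : e c ∈ ({a, b, c} : Finset α) := by rw [huniv]; exact Finset.mem_univ _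
  simp only [Finset.mem_insert, Finset.mem_singleton] at hm
  rcases hm with h | h | h
  · exact absurd (e.injective (h.trans ha.symm)) hca
  · exact absurd (e.injective (h.trans hb.symm)) hcb
  · exact h

lemma card3 : Fintype.card {s : Finset (Fin 3) // s.card = 1} = 3 := by decide

lemma k3_det :
    IsDeterminingSet (kneserGraph 3 1)
      (↑({⟨{0}, rfl⟩, ⟨{1}, rfl⟩} : Finset {s : Finset (Fin 3) // s.card = 1})) := by
  intro g h hgh
  have hA : g ⟨{0}, rfl⟩ = h ⟨{0}, rfl⟩ := hgh _ (by simp)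
  have hB : g ⟨{1}, rfl⟩ = h ⟨{1}, rfl⟩ := hgh _ (by simp)
  apply RelIso.ext
  intro c
  set e : _ ≃ _ := g.toEquiv.trans h.toEquiv.symm with he
  have hAB : (⟨{0}, rfl⟩ : {s : Finset (Fin 3) // s.card = 1}) ≠ ⟨{1}, rfl⟩ := by decide
  have hea : e ⟨{0}, rfl⟩ = ⟨{0}, rfl⟩ := by
    simp only [he, Equiv.trans_apply]
    show h.toEquiv.symm (g ⟨{0}, rfl⟩) = _
    rw [hA]; exact h.toEquiv.symm_apply_apply _
  have heb : e ⟨{1}, rfl⟩ = ⟨{1}, rfl⟩ := by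
    simp only [he, Equiv.trans_apply]
    show h.toEquiv.symm (g ⟨{1}, rfl⟩) = _
    rw [hB]; exact h.toEquiv.symm_apply_apply _
  have hc := fix3 card3 e _ _ hAB hea heb c
  have : h.toEquiv.symm (g c) = c := hc
  exact (Equiv.symm_apply_eq h.toEquiv).mp this

theorem stmt_15 (n k : ℕ) (hn : 2 * k + 1 ≤ n) :
    detNumber (kneserGraph n k) = 2 ↔ n = 3 ∧ k = 1 := by
  constructor
  · intro hd
    by_contra hne
    unfold detNumber at hd
    rcases Nat.eq_zero_or_pos k with hk0 | hk
    · subst hk0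
      have h0 : 0 ∈ {m | ∃ S : Finset {s : Finset (Fin n) // s.card = 0},
          S.card = m ∧ IsDeterminingSet (kneserGraph n 0) (S : Set _)} := by
        refine ⟨∅, rfl, fun g h _ => RelIso.ext fun v => Subtype.ext ?_⟩
        rw [Finset.card_eq_zero.mp (g v).2, Finset.card_eq_zero.mp (h v).2]
      have := Nat.sInf_le h0
      omega
    · have hnonempty : {m | ∃ S : Finset {s : Finset (Fin n) // s.card = k},
          S.card = m ∧ IsDeterminingSet (kneserGraph n k) (S : Set _)}.Nonempty :=
        ⟨_, Finset.univ, rfl, univ_det _⟩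
      have hmem := Nat.sInf_mem hnonempty
      rw [hd] at hmem
      obtain ⟨S, hS2, hSdet⟩ := hmem
      obtain ⟨A, B, hABne, rfl⟩ := Finset.card_eq_two.mp hS2
      obtain ⟨x, y, hxy, hxA, hxB⟩ := exists_good_pair hk hn hne A B
      refine not_det_of_good hk (by omega) _ x y hxy ?_ hSdet
      intro v hv
      rcases Finset.mem_insert.mp hv with rfl | hv
      · exact hxA
      · rw [Finset.mem_singleton.mp hv]; exact hxB
  · rintro ⟨rfl, rfl⟩
    apply le_antisymm
    · exact Nat.sInf_le ⟨{⟨{0}, rfl⟩, ⟨{1}, rfl⟩}, by decide, k3_det⟩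
    · refine le_csInf ⟨2, {⟨{0}, rfl⟩, ⟨{1}, rfl⟩}, by decide, k3_det⟩ ?_
      rintro m ⟨S, rfl, hSdet⟩
      by_contra hlt
      push_neg at hlt
      have hne3 : Nonempty {s : Finset (Fin 3) // s.card = 1} := ⟨⟨{0}, rfl⟩⟩
      obtain ⟨A, hsub⟩ := Finset.card_le_one_iff_subset_singleton.mp
        (show S.card ≤ 1 by omega)
      obtain ⟨a, ha⟩ := Finset.card_eq_one.mp A.2
      have hc2 : 1 < (Finset.univ \ {a} : Finset (Fin 3)).card := by
        rw [Finset.card_sdiff_of_subset (Finset.subset_univ _), Finset.card_singleton,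
          Finset.card_univ, Fintype.card_fin]
        norm_num
      obtain ⟨x, hx, y, hy, hxy⟩ := Finset.one_lt_card.mp hc2
      simp only [Finset.mem_sdiff, Finset.mem_singleton] at hx hy
      refine not_det_of_good le_rfl (by norm_num) S x y hxy ?_ hSdet
      intro v hv
      have hvA : v = A := Finset.mem_singleton.mp (hsub hv)
      subst hvA
      rw [ha]
      simp [hx.2, hy.2]
end
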